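/- arXiv:1012.5274 — 7 statements merged into one kernel-verified Lean document; each statement's English description precedes it below -/
import Mathlib

section
/- Let V : ℝⁿ → ℝ be smooth and let μ be the probability measure on ℝⁿ with density e^{-V} with respect to Lebesgue measure; set Lg = Δg − ∇V·∇g. Then for every smooth function W : ℝⁿ → ℝ with W ≥ 1 and every smooth compactly supported f : ℝⁿ → ℝ, one has ∫ (−LW/W) f² dμ ≤ ∫ |∇f|² dμ, i.e. ∫ ((−ΔW + ∇V·∇W)/W) f² dμ ≤ ∫ |∇f|² dμ. -/
open MeasureTheory Real
open scoped ENNReal RealInnerProductSpace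

section aux
variable {n : ℕ}

lemma fderiv_apply_eq_inner_gradient (g : EuclideanSpace ℝ (Fin n) → ℝ)
    (x v : EuclideanSpace ℝ (Fin n)) :
    fderiv ℝ g x v = ⟪gradient g x, v⟫ := by
  rw [gradient]
  exact (InnerProductSpace.toDual_symm_apply).symm

lemma sum_inner_single (a b : EuclideanSpace ℝ (Fin n)) :
    ∑ i : Fin n, ⟪a, EuclideanSpace.single i 1⟫ * ⟪b, EuclideanSpace.single i 1⟫ = ⟪a, b⟫ := by
  simp [EuclideanSpace.inner_single_right, PiLp.inner_apply, RCLike.inner_apply]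
  exact Finset.sum_congr rfl (fun _ _ => mul_comm _ _)

lemma hcs_of {X Y Z : Type*} [TopologicalSpace X] [T2Space X] [Zero Y] [Zero Z]
    {F : X → Y} {G : X → Z} (h : HasCompactSupport F) (hz : ∀ x, F x = 0 → G x = 0) :
    HasCompactSupport G :=
  HasCompactSupport.intro h fun x hx => hz x (image_eq_zero_of_notMem_tsupport hx)

end aux

/-- The Euclidean Laplacian `Δ W = ∑ i ∂²_{ii} W` of a function on `ℝⁿ`. -/
noncomputable def euclideanLaplacian {n : ℕ} (W : EuclideanSpace ℝ (Fin n) → ℝ)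
    (x : EuclideanSpace ℝ (Fin n)) : ℝ :=
  ∑ i : Fin n,
    fderiv ℝ (fun y => fderiv ℝ W y (EuclideanSpace.single i 1)) x (EuclideanSpace.single i 1)

/-- Let `V : ℝⁿ → ℝ` be smooth, `μ = e^{-V} dx` a probability measure and
`L g = Δg − ∇V·∇g`.  For every smooth `W ≥ 1` and every smooth compactly supported `f`,
`∫ (−LW/W) f² dμ ≤ ∫ |∇f|² dμ`. -/
theorem lyapunov_ipp
    {n : ℕ} (V : EuclideanSpace ℝ (Fin n) → ℝ) (hV : ContDiff ℝ (⊤ : ℕ∞) V)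
    (μ : Measure (EuclideanSpace ℝ (Fin n)))
    (hμ : μ = volume.withDensity fun x => ENNReal.ofReal (Real.exp (-V x)))
    (hprob : IsProbabilityMeasure μ)
    (W : EuclideanSpace ℝ (Fin n) → ℝ) (hW : ContDiff ℝ (⊤ : ℕ∞) W) (hW1 : ∀ x, 1 ≤ W x)
    (f : EuclideanSpace ℝ (Fin n) → ℝ) (hf : ContDiff ℝ (⊤ : ℕ∞) f)
    (hfc : HasCompactSupport f) :
    ∫ x, ((-(euclideanLaplacian W x) + ⟪gradient V x, gradient W x⟫) / W x) * (f x) ^ 2 ∂μ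
      ≤ ∫ x, ‖gradient f x‖ ^ 2 ∂μ := by
  classical
  have hWpos : ∀ x, (0:ℝ) < W x := fun x => lt_of_lt_of_le one_pos (hW1 x)
  have hWne : ∀ x, W x ≠ 0 := fun x => (hWpos x).ne'
  set ρ : EuclideanSpace ℝ (Fin n) → ℝ := fun x => Real.exp (-V x) with hρdef
  have hρ : ContDiff ℝ (⊤ : ℕ∞) ρ := Real.contDiff_exp.comp hV.neg
  have hρpos : ∀ x, 0 < ρ x := fun x => Real.exp_pos _
  set φ : EuclideanSpace ℝ (Fin n) → ℝ := fun x => f x * f x * (W x)⁻¹ with hφdef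
  have hφ : ContDiff ℝ (⊤ : ℕ∞) φ := (hf.mul hf).mul (hW.inv hWne)
  have hφc : HasCompactSupport φ := hcs_of hfc (fun x hx => by simp [hφdef, hx])
  set F : EuclideanSpace ℝ (Fin n) → ℝ := fun x => φ x * ρ x with hFdef
  have hF : ContDiff ℝ (⊤ : ℕ∞) F := hφ.mul hρ
  have hFc : HasCompactSupport F := hcs_of hφc (fun x hx => by simp [hFdef, hx])
  -- differentiability facts
  have hfd : ∀ x, HasFDerivAt f (fderiv ℝ f x) x :=
    fun x => (hf.differentiable (by simp) x).hasFDerivAt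
  have hWd : ∀ x, HasFDerivAt W (fderiv ℝ W x) x :=
    fun x => (hW.differentiable (by simp) x).hasFDerivAt
  have hVd : ∀ x, HasFDerivAt V (fderiv ℝ V x) x :=
    fun x => (hV.differentiable (by simp) x).hasFDerivAt
  have hρd : ∀ x, HasFDerivAt ρ (ρ x • (-fderiv ℝ V x)) x := fun x => (hVd x).neg.exp
  have hinvd : ∀ x, HasFDerivAt (fun y => (W y)⁻¹) ((-(W x ^ 2)⁻¹) • fderiv ℝ W x) x :=
    fun x => (hasDerivAt_inv (hWne x)).comp_hasFDerivAt x (hWd x)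
  have hφd : ∀ x, HasFDerivAt φ
      ((f x * f x) • ((-(W x ^ 2)⁻¹) • fderiv ℝ W x)
        + (W x)⁻¹ • (f x • fderiv ℝ f x + f x • fderiv ℝ f x)) x :=
    fun x => ((hfd x).mul (hfd x)).mul (hinvd x)
  have hFd : ∀ x, HasFDerivAt F
      (φ x • (ρ x • (-fderiv ℝ V x))
        + ρ x • ((f x * f x) • ((-(W x ^ 2)⁻¹) • fderiv ℝ W x)
            + (W x)⁻¹ • (f x • fderiv ℝ f x + f x • fderiv ℝ f x))) x :=
    fun x => (hφd x).mul (hρd x)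
  -- continuity helpers
  have contD : ∀ (g : EuclideanSpace ℝ (Fin n) → ℝ), ContDiff ℝ (⊤ : ℕ∞) g → ∀ v : EuclideanSpace ℝ (Fin n),
      Continuous fun x => fderiv ℝ g x v := fun g hg v =>
    (((hg.fderiv_right (m := (⊤:ℕ∞)) (by simp)).clm_apply contDiff_const).continuous)
  have contGrad : ∀ (g : EuclideanSpace ℝ (Fin n) → ℝ), ContDiff ℝ (⊤ : ℕ∞) g →
      Continuous fun x => gradient g x := fun g hg =>
    (InnerProductSpace.toDual ℝ (EuclideanSpace ℝ (Fin n))).symm.continuous.comp (hg.continuous_fderiv (by simp))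
  have hWs : ∀ i : Fin n, ContDiff ℝ (⊤ : ℕ∞)
      (fun y => fderiv ℝ W y (EuclideanSpace.single i 1)) := fun i =>
    (hW.fderiv_right (m := (⊤:ℕ∞)) (by simp)).clm_apply contDiff_const
  have hLap : Continuous fun x => euclideanLaplacian W x := by
    apply continuous_finset_sum
    intro i _
    exact contD _ (hWs i) _
  have intCS : ∀ (g : EuclideanSpace ℝ (Fin n) → ℝ), Continuous g → HasCompactSupport g →
      Integrable g volume := fun g hg hc => hg.integrable_of_hasCompactSupport hc
  have int2 : ∀ i : Fin n, Integrable (fun x => F x *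
      fderiv ℝ (fun y => fderiv ℝ W y (EuclideanSpace.single i 1)) x (EuclideanSpace.single i 1))
      volume := fun i =>
    intCS _ (hF.continuous.mul (contD _ (hWs i) _)) (hcs_of hFc (fun x hx => by simp [hx]))
  have int1 : ∀ i : Fin n, Integrable (fun x =>
      fderiv ℝ F x (EuclideanSpace.single i 1) * fderiv ℝ W x (EuclideanSpace.single i 1))
      volume := fun i =>
    intCS _ ((contD _ hF _).mul (contD _ hW _))
      (hcs_of (hFc.fderiv (𝕜 := ℝ)) (fun x hx => by simp [hx]))
  have ibp : ∀ i : Fin n,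
      ∫ x, F x * fderiv ℝ (fun y => fderiv ℝ W y (EuclideanSpace.single i 1)) x
          (EuclideanSpace.single i 1)
        = - ∫ x, fderiv ℝ F x (EuclideanSpace.single i 1) *
            fderiv ℝ W x (EuclideanSpace.single i 1) := by
    intro i
    have int3 : Integrable (fun x => F x * fderiv ℝ W x (EuclideanSpace.single i 1)) volume :=
      intCS _ (hF.continuous.mul (contD _ hW _)) (hcs_of hFc (fun x hx => by simp [hx]))
    exact integral_mul_fderiv_eq_neg_fderiv_mul_of_integrable (int1 i) (int2 i) int3
      (fun x _ => hF.differentiable (by simp) x)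
      (fun x _ => (hWs i).differentiable (by simp) x)
  have intInner : Integrable (fun x => ⟪gradient F x, gradient W x⟫) volume :=
    intCS _ ((contGrad _ hF).inner (contGrad _ hW))
      (hcs_of (hFc.fderiv (𝕜 := ℝ)) (fun x hx => by simp [gradient, hx]))
  have ibps : ∫ x, F x * euclideanLaplacian W x = - ∫ x, ⟪gradient F x, gradient W x⟫ := by
    have l1 : ∫ x, F x * euclideanLaplacian W x
        = ∑ i : Fin n, ∫ x, F x * fderiv ℝ (fun y => fderiv ℝ W y (EuclideanSpace.single i 1)) x
            (EuclideanSpace.single i 1) := by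
      rw [← integral_finset_sum _ (fun i _ => int2 i)]
      simp only [euclideanLaplacian, Finset.mul_sum]
    have l2 : ∑ i : Fin n, ∫ x, fderiv ℝ F x (EuclideanSpace.single i 1) *
          fderiv ℝ W x (EuclideanSpace.single i 1)
        = ∫ x, ⟪gradient F x, gradient W x⟫ := by
      rw [← integral_finset_sum _ (fun i _ => int1 i)]
      congr 1
      funext x
      simp only [fderiv_apply_eq_inner_gradient]
      exact sum_inner_single _ _
    rw [l1]
    simp only [ibp]
    rw [Finset.sum_neg_distrib, l2]
  have P1 : ∀ x, ⟪gradient F x, gradient W x⟫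
      = ρ x * ⟪gradient φ x, gradient W x⟫
        - φ x * ρ x * ⟪gradient V x, gradient W x⟫ := by
    intro x
    rw [← fderiv_apply_eq_inner_gradient F x (gradient W x),
        ← fderiv_apply_eq_inner_gradient φ x (gradient W x),
        ← fderiv_apply_eq_inner_gradient V x (gradient W x),
        (hFd x).fderiv, (hφd x).fderiv]
    simp only [ContinuousLinearMap.add_apply, ContinuousLinearMap.coe_smul', Pi.smul_apply,
      ContinuousLinearMap.neg_apply, smul_eq_mul]
    ring
  have P3 : ∀ x, ρ x * ⟪gradient φ x, gradient W x⟫ ≤ ρ x * ‖gradient f x‖ ^ 2 := by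
    intro x
    have hval : ⟪gradient φ x, gradient W x⟫
        = f x * f x * (-((W x ^ 2)⁻¹ * ⟪gradient W x, gradient W x⟫))
          + (W x)⁻¹ * (f x * ⟪gradient f x, gradient W x⟫ + f x * ⟪gradient f x, gradient W x⟫) := by
      rw [← fderiv_apply_eq_inner_gradient φ x (gradient W x), (hφd x).fderiv]
      simp only [ContinuousLinearMap.add_apply, ContinuousLinearMap.coe_smul', Pi.smul_apply,
        ContinuousLinearMap.neg_apply, smul_eq_mul, fderiv_apply_eq_inner_gradient]
      ring
    have key : ⟪gradient φ x, gradient W x⟫ ≤ ‖gradient f x‖ ^ 2 := by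
      rw [hval, ← real_inner_self_eq_norm_sq]
      set a := gradient f x
      set b := gradient W x
      set p := f x
      set w := W x
      have hw : (0:ℝ) < w := hWpos x
      have h0 : (0:ℝ) ≤ ⟪w • a - p • b, w • a - p • b⟫ := real_inner_self_nonneg
      simp only [inner_sub_left, inner_sub_right, real_inner_smul_left,
        real_inner_smul_right] at h0
      have heq : p * p * (-((w ^ 2)⁻¹ * ⟪b, b⟫)) + w⁻¹ * (p * ⟪a, b⟫ + p * ⟪a, b⟫)
          = (2 * p * w * ⟪a, b⟫ - p * p * ⟪b, b⟫) / w ^ 2 := by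
        field_simp
        ring
      rw [heq, div_le_iff₀ (by positivity)]
      have hcomm : (inner ℝ b a : ℝ) = inner ℝ a b := real_inner_comm a b
      rw [hcomm] at h0
      nlinarith [h0]
    exact mul_le_mul_of_nonneg_left key (hρpos x).le
  have P2 : ∀ x, ρ x * ((-(euclideanLaplacian W x) + ⟪gradient V x, gradient W x⟫) / W x * f x ^ 2)
      = -(F x * euclideanLaplacian W x) + φ x * ρ x * ⟪gradient V x, gradient W x⟫ := by
    intro x
    simp only [hFdef, hφdef]
    have hw := hWne x
    field_simp
  have intA : Integrable (fun x => F x * euclideanLaplacian W x) volume :=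
    intCS _ (hF.continuous.mul hLap) (hcs_of hFc (fun x hx => by simp [hx]))
  have intC : Integrable (fun x => φ x * ρ x * ⟪gradient V x, gradient W x⟫) volume :=
    intCS _ ((hφ.continuous.mul hρ.continuous).mul ((contGrad _ hV).inner (contGrad _ hW)))
      (hcs_of hφc (fun x hx => by simp [hx]))
  have intφW : Integrable (fun x => ρ x * ⟪gradient φ x, gradient W x⟫) volume :=
    intCS _ (hρ.continuous.mul ((contGrad _ hφ).inner (contGrad _ hW)))
      (hcs_of (hφc.fderiv (𝕜 := ℝ)) (fun x hx => by simp [gradient, hx]))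
  have intRHS : Integrable (fun x => ρ x * ‖gradient f x‖ ^ 2) volume :=
    intCS _ (hρ.continuous.mul ((contGrad _ hf).norm.pow 2))
      (hcs_of (hfc.fderiv (𝕜 := ℝ)) (fun x hx => by simp [gradient, hx]))
  have hconv : ∀ (g : EuclideanSpace ℝ (Fin n) → ℝ), ∫ x, g x ∂μ = ∫ x, ρ x * g x := by
    intro g
    rw [hμ]
    have hm : Measurable fun x => (Real.exp (-V x)).toNNReal :=
      (Real.continuous_exp.comp hV.continuous.neg).measurable.real_toNNReal
    rw [show (fun x => ENNReal.ofReal (Real.exp (-V x)))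
        = (fun x => ((Real.exp (-V x)).toNNReal : ℝ≥0∞)) from rfl,
      integral_withDensity_eq_integral_smul hm g]
    congr 1
    funext x
    simp [NNReal.smul_def, Real.coe_toNNReal _ (Real.exp_pos (-V x)).le, hρdef]
  calc ∫ x, (-(euclideanLaplacian W x) + ⟪gradient V x, gradient W x⟫) / W x * f x ^ 2 ∂μ
      = ∫ x, ρ x * ((-(euclideanLaplacian W x) + ⟪gradient V x, gradient W x⟫) / W x * f x ^ 2) :=
        hconv _
    _ = ∫ x, (-(F x * euclideanLaplacian W x) + φ x * ρ x * ⟪gradient V x, gradient W x⟫) := by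
        simp only [P2]
    _ = (∫ x, φ x * ρ x * ⟪gradient V x, gradient W x⟫) - ∫ x, F x * euclideanLaplacian W x := by
        have hfun : (fun x => -(F x * euclideanLaplacian W x)
              + φ x * ρ x * ⟪gradient V x, gradient W x⟫)
            = fun x => φ x * ρ x * ⟪gradient V x, gradient W x⟫
              - F x * euclideanLaplacian W x := by
          funext x; ring
        rw [hfun, integral_sub intC intA]
    _ = (∫ x, ⟪gradient F x, gradient W x⟫)
          + ∫ x, φ x * ρ x * ⟪gradient V x, gradient W x⟫ := by
        rw [ibps]; ring
    _ = ∫ x, (⟪gradient F x, gradient W x⟫ + φ x * ρ x * ⟪gradient V x, gradient W x⟫) :=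
        (integral_add intInner intC).symm
    _ = ∫ x, ρ x * ⟪gradient φ x, gradient W x⟫ := by
        have hpt : ∀ x, ⟪gradient F x, gradient W x⟫
            + φ x * ρ x * ⟪gradient V x, gradient W x⟫
            = ρ x * ⟪gradient φ x, gradient W x⟫ := fun x => by rw [P1 x]; ring
        simp only [hpt]
    _ ≤ ∫ x, ρ x * ‖gradient f x‖ ^ 2 := integral_mono intφW intRHS P3
    _ = ∫ x, ‖gradient f x‖ ^ 2 ∂μ := (hconv _).symm
end

section
/- Let V : ℝⁿ → ℝ be smooth and μ the probability measure with density e^{-V}, and let U be a bounded open subset of ℝⁿ. If λ > 0 and W : ℝⁿ → ℝ is a smooth function with W ≥ 1 satisfying ΔW − ∇V·∇W ≤ −λW on the complement of the closure of U, then for every smooth f compactly supported in the complement of the closure of U one has λ ∫ f² dμ ≤ ∫ |∇f|² dμ. Consequently, the supremum of all λ > 0 for which such a Lyapunov function W exists is finite. -/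
open MeasureTheory Real Function
open scoped ENNReal NNReal RealInnerProductSpace

section LyapAux

variable {n : ℕ}
local notation "E" => EuclideanSpace ℝ (Fin n)
local notation "sing" i => EuclideanSpace.single i (1:ℝ)

lemma lyap_inner_gradient (f : E → ℝ) (x v : E) : ⟪gradient f x, v⟫ = fderiv ℝ f x v :=
  InnerProductSpace.toDual_symm_apply

lemma lyap_gradient_sum (f g : E → ℝ) (x : E) :
    ⟪gradient f x, gradient g x⟫ =
      ∑ i : Fin n, fderiv ℝ f x (EuclideanSpace.single i 1) *
        fderiv ℝ g x (EuclideanSpace.single i 1) := by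
  have h : ∀ (φ : E → ℝ) (i : Fin n),
      gradient φ x i = fderiv ℝ φ x (EuclideanSpace.single i 1) := by
    intro φ i
    rw [← lyap_inner_gradient φ x, EuclideanSpace.inner_single_right]
    simp
  rw [PiLp.inner_apply]
  refine Finset.sum_congr rfl fun i _ => ?_
  simp [RCLike.inner_apply, h]
  ring

lemma lyap_norm_gradient_sum (f : E → ℝ) (x : E) :
    ‖gradient f x‖ ^ 2 = ∑ i : Fin n, fderiv ℝ f x (EuclideanSpace.single i 1) ^ 2 := by
  rw [← real_inner_self_eq_norm_sq, lyap_gradient_sum]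
  simp [sq]

lemma lyap_pd_contDiff {g : E → ℝ} (hg : ContDiff ℝ (⊤ : ℕ∞) g) (v : E) :
    ContDiff ℝ (⊤ : ℕ∞) (fun x => fderiv ℝ g x v) := by
  have h1 : ContDiff ℝ (⊤ : ℕ∞) (fderiv ℝ g) := hg.fderiv_right (by exact_mod_cast le_top)
  exact (ContinuousLinearMap.apply ℝ ℝ v).contDiff.comp h1

lemma lyap_pd_supp {g : E → ℝ} (hg : HasCompactSupport g) (v : E) :
    HasCompactSupport (fun x => fderiv ℝ g x v) :=
  (hg.fderiv ℝ).comp_left (g := fun L : E →L[ℝ] ℝ => L v) rfl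

lemma lyap_pd_zero {h : E → ℝ} {x : E} (hx : x ∉ tsupport h) (v : E) : fderiv ℝ h x v = 0 := by
  have : fderiv ℝ h x = 0 := notMem_support.mp (fun hc => hx (support_fderiv_subset ℝ hc))
  simp [this]

lemma lyap_integrable_aux {F : E → ℝ} (hF : Continuous F) {K : Set E} (hK : IsCompact K)
    (hs : support F ⊆ K) : Integrable F volume :=
  hF.integrable_of_hasCompactSupport
    (HasCompactSupport.intro hK fun x hx => notMem_support.mp (fun h => hx (hs h)))

lemma lyap_ibp {φ ψ : E → ℝ} (hφ : ContDiff ℝ (⊤ : ℕ∞) φ) (hφc : HasCompactSupport φ)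
    (hψ : ContDiff ℝ (⊤ : ℕ∞) ψ) (hψc : HasCompactSupport ψ) (v : E) :
    ∫ x, fderiv ℝ φ x v * ψ x = - ∫ x, φ x * fderiv ℝ ψ x v := by
  obtain ⟨C, hC⟩ := hφ.lipschitzWith_of_hasCompactSupport hφc (by simp)
  obtain ⟨D, hD⟩ := hψ.lipschitzWith_of_hasCompactSupport hψc (by simp)
  have h := hC.integral_lineDeriv_mul_eq (μ := volume) hD hψc v
  have h1 : ∀ x : E, lineDeriv ℝ φ x v = fderiv ℝ φ x v := fun x =>
    ((hφ.differentiable (by simp)) x).lineDeriv_eq_fderiv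
  have h2 : ∀ x : E, lineDeriv ℝ ψ x (-v) = - fderiv ℝ ψ x v := fun x => by
    rw [((hψ.differentiable (by simp)) x).lineDeriv_eq_fderiv]; simp
  simp only [h1, h2, neg_mul] at h
  rw [h, ← integral_neg]
  congr 1; ext x; ring

/-- Green's formula for the measure `e^{-V} dx`. -/
lemma lyap_green {g h V : E → ℝ} (hg : ContDiff ℝ (⊤ : ℕ∞) g) (hgc : HasCompactSupport g)
    (hh : ContDiff ℝ (⊤ : ℕ∞) h) (hhc : HasCompactSupport h) (hV : ContDiff ℝ (⊤ : ℕ∞) V) :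
    ∫ x, (euclideanLaplacian g x
        - ∑ i : Fin n, fderiv ℝ V x (sing i) * fderiv ℝ g x (sing i)) * (h x * exp (-V x))
      = - ∫ x, (∑ i : Fin n, fderiv ℝ g x (sing i) * fderiv ℝ h x (sing i)) * exp (-V x) := by
  have hVd : Differentiable ℝ V := hV.differentiable (by simp)
  have hhd : Differentiable ℝ h := hh.differentiable (by simp)
  set ρ : E → ℝ := fun x => exp (-V x) with hρdef
  have hρ : ContDiff ℝ (⊤ : ℕ∞) ρ := Real.contDiff_exp.comp hV.neg
  have hψ : ContDiff ℝ (⊤ : ℕ∞) (fun x => h x * ρ x) := hh.mul hρ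
  have hψc : HasCompactSupport (fun x => h x * ρ x) := hhc.mul_right
  -- derivative of ψ
  have hdψ : ∀ (x : E) (v : E), fderiv ℝ (fun y => h y * ρ y) x v =
      fderiv ℝ h x v * ρ x - h x * (fderiv ℝ V x v * ρ x) := by
    intro x v
    have hexp : HasFDerivAt ρ (exp (-V x) • (-(fderiv ℝ V x))) x :=
      ((hVd x).hasFDerivAt.neg).exp
    have hmul := ((hhd x).hasFDerivAt.mul hexp)
    rw [show (fun y => h y * ρ y) = h * ρ from rfl, hmul.fderiv]
    simp [hρdef]
    ring
  -- coordinate-wise integration by parts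
  have key : ∀ i : Fin n,
      ∫ x, fderiv ℝ (fun y => fderiv ℝ g y (sing i)) x (sing i) * (h x * ρ x)
        = ∫ x, (-(fderiv ℝ g x (sing i) * fderiv ℝ h x (sing i)) * ρ x
            + (fderiv ℝ V x (sing i) * fderiv ℝ g x (sing i)) * (h x * ρ x)) := by
    intro i
    rw [lyap_ibp (lyap_pd_contDiff hg _) (lyap_pd_supp hgc _) hψ hψc (sing i), ← integral_neg]
    congr 1; ext x
    rw [hdψ]
    ring
    -- continuity facts
  have cg1 : ∀ i : Fin n, Continuous fun x : E => fderiv ℝ g x (sing i) :=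
    fun i => (lyap_pd_contDiff hg _).continuous
  have cg2 : ∀ i : Fin n, Continuous fun x : E =>
      fderiv ℝ (fun y => fderiv ℝ g y (sing i)) x (sing i) :=
    fun i => (lyap_pd_contDiff (lyap_pd_contDiff hg _) _).continuous
  have ch1 : ∀ i : Fin n, Continuous fun x : E => fderiv ℝ h x (sing i) :=
    fun i => (lyap_pd_contDiff hh _).continuous
  have cV1 : ∀ i : Fin n, Continuous fun x : E => fderiv ℝ V x (sing i) :=
    fun i => (lyap_pd_contDiff hV _).continuous
  have cρ : Continuous ρ := hρ.continuous
  have ihh : IsCompact (tsupport h) := hhc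
  have hψ0 : ∀ x : E, x ∉ tsupport h → h x * ρ x = 0 := fun x hx => by
    rw [image_eq_zero_of_notMem_tsupport hx, zero_mul]
  have suppmul : ∀ A : E → ℝ, support (fun x => A x * (h x * ρ x)) ⊆ tsupport h := by
    intro A x hx
    by_contra hc
    exact mem_support.mp hx (by rw [hψ0 x hc, mul_zero])
  -- integrability facts
  have int1 : ∀ i : Fin n, Integrable (fun x : E =>
      fderiv ℝ (fun y => fderiv ℝ g y (sing i)) x (sing i) * (h x * ρ x)) volume :=
    fun i => lyap_integrable_aux ((cg2 i).mul (hh.continuous.mul cρ)) ihh (suppmul _)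
  have int2 : ∀ i : Fin n, Integrable (fun x : E =>
      -(fderiv ℝ g x (sing i) * fderiv ℝ h x (sing i)) * ρ x) volume := by
    intro i
    refine lyap_integrable_aux (((cg1 i).mul (ch1 i)).neg.mul cρ) ihh ?_
    intro x hx
    by_contra hc
    exact mem_support.mp hx (by rw [lyap_pd_zero hc]; ring)
  have int3 : ∀ i : Fin n, Integrable (fun x : E =>
      (fderiv ℝ V x (sing i) * fderiv ℝ g x (sing i)) * (h x * ρ x)) volume :=
    fun i => lyap_integrable_aux (((cV1 i).mul (cg1 i)).mul (hh.continuous.mul cρ)) ihh (suppmul _)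
  have intLap : Integrable (fun x : E => euclideanLaplacian g x * (h x * ρ x)) volume := by
    refine lyap_integrable_aux ?_ ihh (suppmul _)
    exact (continuous_finset_sum _ fun i _ => cg2 i).mul (hh.continuous.mul cρ)
  have intSV : Integrable (fun x : E =>
      (∑ i : Fin n, fderiv ℝ V x (sing i) * fderiv ℝ g x (sing i)) * (h x * ρ x)) volume :=
    lyap_integrable_aux ((continuous_finset_sum _ fun i _ => (cV1 i).mul (cg1 i)).mul
      (hh.continuous.mul cρ)) ihh (suppmul _)
  -- assemble
  have e1 : ∫ x, (euclideanLaplacian g x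
        - ∑ i : Fin n, fderiv ℝ V x (sing i) * fderiv ℝ g x (sing i)) * (h x * ρ x)
      = (∫ x, euclideanLaplacian g x * (h x * ρ x))
        - ∫ x, (∑ i : Fin n, fderiv ℝ V x (sing i) * fderiv ℝ g x (sing i)) * (h x * ρ x) := by
    rw [← integral_sub intLap intSV]
    congr 1; ext x; ring
  have e2 : ∫ x, euclideanLaplacian g x * (h x * ρ x)
      = ∑ i : Fin n, ∫ x, fderiv ℝ (fun y => fderiv ℝ g y (sing i)) x (sing i) * (h x * ρ x) := by
    rw [← integral_finset_sum _ fun i _ => int1 i]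
    congr 1; ext x
    rw [euclideanLaplacian, Finset.sum_mul]
  have e3 : ∀ i : Fin n,
      ∫ x, fderiv ℝ (fun y => fderiv ℝ g y (sing i)) x (sing i) * (h x * ρ x)
        = (∫ x, -(fderiv ℝ g x (sing i) * fderiv ℝ h x (sing i)) * ρ x)
          + ∫ x, (fderiv ℝ V x (sing i) * fderiv ℝ g x (sing i)) * (h x * ρ x) := by
    intro i
    rw [key i, integral_add (int2 i) (int3 i)]
  have e4 : ∑ i : Fin n, ∫ x, -(fderiv ℝ g x (sing i) * fderiv ℝ h x (sing i)) * ρ x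
      = - ∫ x, (∑ i : Fin n, fderiv ℝ g x (sing i) * fderiv ℝ h x (sing i)) * exp (-V x) := by
    rw [← integral_finset_sum _ fun i _ => int2 i, ← integral_neg]
    congr 1; ext x
    simp only [hρdef, neg_mul, Finset.sum_neg_distrib, Finset.sum_mul]
  have e5 : ∑ i : Fin n, ∫ x, (fderiv ℝ V x (sing i) * fderiv ℝ g x (sing i)) * (h x * ρ x)
      = ∫ x, (∑ i : Fin n, fderiv ℝ V x (sing i) * fderiv ℝ g x (sing i)) * (h x * ρ x) := by
    rw [← integral_finset_sum _ fun i _ => int3 i]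
    congr 1; ext x
    rw [Finset.sum_mul]
  rw [e1, e2]
  simp only [e3]
  rw [Finset.sum_add_distrib, e4, e5]
  ring

/-- Rewriting integrals against the measure `e^{-V} dx`. -/
lemma lyap_int_density {V : E → ℝ} (hVc : Continuous V) (G : E → ℝ) :
    ∫ x, G x ∂(volume.withDensity fun x => ENNReal.ofReal (exp (-V x)))
      = ∫ x, G x * exp (-V x) := by
  have hmeas : Measurable fun x : E => Real.toNNReal (exp (-V x)) :=
    (Real.continuous_exp.comp hVc.neg).measurable.real_toNNReal
  have : (fun x : E => ENNReal.ofReal (exp (-V x)))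
      = fun x => ((Real.toNNReal (exp (-V x)) : ℝ≥0) : ℝ≥0∞) := rfl
  rw [this, integral_withDensity_eq_integral_smul hmeas G]
  congr 1; ext x
  simp [NNReal.smul_def, Real.coe_toNNReal _ (exp_nonneg _)]
  ring

end LyapAux

/-- If `W ≥ 1` is smooth and satisfies `ΔW − ∇V·∇W ≤ −λW` outside the closure
of a bounded open set `U`, then `λ ∫ f² dμ ≤ ∫ |∇f|² dμ` for every smooth `f` compactly
supported in the complement of the closure of `U`.  Consequently the set of `λ > 0` for which
such a Lyapunov function exists is bounded above. -/
theorem lyapunov_rate_bounded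
    {n : ℕ} (hn : 0 < n)
    (V : EuclideanSpace ℝ (Fin n) → ℝ) (hV : ContDiff ℝ (⊤ : ℕ∞) V)
    (μ : Measure (EuclideanSpace ℝ (Fin n)))
    (hμ : μ = volume.withDensity fun x => ENNReal.ofReal (Real.exp (-V x)))
    (hprob : IsProbabilityMeasure μ)
    (U : Set (EuclideanSpace ℝ (Fin n))) (hUo : IsOpen U) (hUb : Bornology.IsBounded U) :
    (∀ lam : ℝ, 0 < lam →
      ∀ W : EuclideanSpace ℝ (Fin n) → ℝ, ContDiff ℝ (⊤ : ℕ∞) W → (∀ x, 1 ≤ W x) →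
        (∀ x ∉ closure U,
          euclideanLaplacian W x - ⟪gradient V x, gradient W x⟫ ≤ -lam * W x) →
      ∀ f : EuclideanSpace ℝ (Fin n) → ℝ, ContDiff ℝ (⊤ : ℕ∞) f → HasCompactSupport f →
        tsupport f ⊆ (closure U)ᶜ →
        lam * ∫ x, (f x) ^ 2 ∂μ ≤ ∫ x, ‖gradient f x‖ ^ 2 ∂μ) ∧
    BddAbove {lam : ℝ | 0 < lam ∧
      ∃ W : EuclideanSpace ℝ (Fin n) → ℝ, ContDiff ℝ (⊤ : ℕ∞) W ∧ (∀ x, 1 ≤ W x) ∧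
        ∀ x ∉ closure U,
          euclideanLaplacian W x - ⟪gradient V x, gradient W x⟫ ≤ -lam * W x} := by
  subst hμ
  have hρc : Continuous fun x : EuclideanSpace ℝ (Fin n) => exp (-V x) :=
    Real.continuous_exp.comp hV.continuous.neg
  have hρpos : ∀ x : EuclideanSpace ℝ (Fin n), (0:ℝ) < exp (-V x) := fun x => exp_pos _
  have part1 : ∀ lam : ℝ, 0 < lam →
      ∀ W : EuclideanSpace ℝ (Fin n) → ℝ, ContDiff ℝ (⊤ : ℕ∞) W → (∀ x, 1 ≤ W x) →
        (∀ x ∉ closure U,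
          euclideanLaplacian W x - ⟪gradient V x, gradient W x⟫ ≤ -lam * W x) →
      ∀ f : EuclideanSpace ℝ (Fin n) → ℝ, ContDiff ℝ (⊤ : ℕ∞) f → HasCompactSupport f →
        tsupport f ⊆ (closure U)ᶜ →
        lam * (∫ x, (f x) ^ 2 ∂(volume.withDensity fun x => ENNReal.ofReal (Real.exp (-V x))))
          ≤ ∫ x, ‖gradient f x‖ ^ 2
              ∂(volume.withDensity fun x => ENNReal.ofReal (Real.exp (-V x))) := by
    intro lam hlam W hW hW1 hWly f hf hfc hfsupp
    have hfd : Differentiable ℝ f := hf.differentiable (by simp)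
    have hWd : Differentiable ℝ W := hW.differentiable (by simp)
    have hW0 : ∀ x, (0:ℝ) < W x := fun x => lt_of_lt_of_le one_pos (hW1 x)
    -- the auxiliary function h = f² / W
    set h : EuclideanSpace ℝ (Fin n) → ℝ := fun y => f y * f y / W y with hhdef
    have hh : ContDiff ℝ (⊤ : ℕ∞) h := (hf.mul hf).div hW fun x => (hW0 x).ne'
    have hh0 : ∀ x, x ∉ tsupport f → h x = 0 := fun x hx => by
      simp [hhdef, image_eq_zero_of_notMem_tsupport hx]
    have hhc : HasCompactSupport h := HasCompactSupport.intro hfc fun x hx => hh0 x hx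
    have hhsupp : tsupport h ⊆ tsupport f := by
      refine closure_minimal ?_ isClosed_closure
      intro x hx
      by_contra hc
      exact mem_support.mp hx (hh0 x hc)
    -- a smooth cutoff equal to 1 near `tsupport f`
    obtain ⟨R, hR0, hRK⟩ := hfc.isBounded.subset_ball_lt 0 0
    set c : ContDiffBump (0 : EuclideanSpace ℝ (Fin n)) :=
      ⟨R, 2*R, hR0, by linarith⟩ with hcdef
    have hχ : ContDiff ℝ (⊤ : ℕ∞) (⇑c) := c.contDiff
    have hχc : HasCompactSupport (⇑c) := c.hasCompactSupport
    have hχ1 : ∀ x ∈ Metric.ball (0 : EuclideanSpace ℝ (Fin n)) R, c x = 1 := fun x hx =>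
      c.one_of_mem_closedBall (Metric.ball_subset_closedBall hx)
    have hO : IsOpen (Metric.ball (0 : EuclideanSpace ℝ (Fin n)) R) := Metric.isOpen_ball
    have hOsupp : tsupport f ⊆ Metric.ball (0 : EuclideanSpace ℝ (Fin n)) R := hRK
    set Wc : EuclideanSpace ℝ (Fin n) → ℝ := fun x => c x * W x with hWcdef
    have hWc : ContDiff ℝ (⊤ : ℕ∞) Wc := hχ.mul hW
    have hWcc : HasCompactSupport Wc := hχc.mul_right
    -- derivatives of Wc and W agree on the ball
    have hd1 : ∀ x ∈ Metric.ball (0 : EuclideanSpace ℝ (Fin n)) R,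
        fderiv ℝ Wc x = fderiv ℝ W x := by
      intro x hx
      apply Filter.EventuallyEq.fderiv_eq
      filter_upwards [hO.mem_nhds hx] with y hy
      simp [hWcdef, hχ1 y hy]
    have hd2 : ∀ x ∈ Metric.ball (0 : EuclideanSpace ℝ (Fin n)) R,
        ∀ v : EuclideanSpace ℝ (Fin n),
        fderiv ℝ (fun y => fderiv ℝ Wc y v) x = fderiv ℝ (fun y => fderiv ℝ W y v) x := by
      intro x hx v
      apply Filter.EventuallyEq.fderiv_eq
      filter_upwards [hO.mem_nhds hx] with y hy
      rw [hd1 y hy]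
    have hLap : ∀ x ∈ Metric.ball (0 : EuclideanSpace ℝ (Fin n)) R,
        euclideanLaplacian Wc x = euclideanLaplacian W x := by
      intro x hx
      unfold euclideanLaplacian
      exact Finset.sum_congr rfl fun i _ => by rw [hd2 x hx]
    -- rewrite both integrals against Lebesgue measure
    rw [lyap_int_density hV.continuous, lyap_int_density hV.continuous]
    -- continuity facts
    have cdW : ∀ v, Continuous fun x : EuclideanSpace ℝ (Fin n) => fderiv ℝ W x v :=
      fun v => (lyap_pd_contDiff hW v).continuous
    have cdWc : ∀ v, Continuous fun x : EuclideanSpace ℝ (Fin n) => fderiv ℝ Wc x v :=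
      fun v => (lyap_pd_contDiff hWc v).continuous
    have cdV : ∀ v, Continuous fun x : EuclideanSpace ℝ (Fin n) => fderiv ℝ V x v :=
      fun v => (lyap_pd_contDiff hV v).continuous
    have cdf : ∀ v, Continuous fun x : EuclideanSpace ℝ (Fin n) => fderiv ℝ f x v :=
      fun v => (lyap_pd_contDiff hf v).continuous
    have cLapWc : Continuous fun x => euclideanLaplacian Wc x := by
      unfold euclideanLaplacian
      exact continuous_finset_sum _ fun i _ =>
        (lyap_pd_contDiff (lyap_pd_contDiff hWc _) _).continuous
    -- integrability facts
    have intA1 : Integrable (fun x : EuclideanSpace ℝ (Fin n) =>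
        lam * (f x ^ 2 * exp (-V x))) volume := by
      refine lyap_integrable_aux (by fun_prop) hfc fun x hx => ?_
      by_contra hc
      exact mem_support.mp hx (by
        rw [image_eq_zero_of_notMem_tsupport hc]; ring)
    have intA2 : Integrable (fun x : EuclideanSpace ℝ (Fin n) =>
        (-(euclideanLaplacian Wc x - ∑ i : Fin n, fderiv ℝ V x (EuclideanSpace.single i 1) *
          fderiv ℝ Wc x (EuclideanSpace.single i 1))) * (h x * exp (-V x))) volume := by
      refine lyap_integrable_aux ?_ hfc fun x hx => ?_
      · exact ((cLapWc.sub (continuous_finset_sum _ fun i _ => (cdV _).mul (cdWc _))).neg).mul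
          (hh.continuous.mul hρc)
      · by_contra hc
        exact mem_support.mp hx (by rw [hh0 x hc]; ring)
    have intD1 : Integrable (fun x : EuclideanSpace ℝ (Fin n) =>
        (∑ i : Fin n, fderiv ℝ W x (EuclideanSpace.single i 1) *
          fderiv ℝ h x (EuclideanSpace.single i 1)) * exp (-V x)) volume := by
      refine lyap_integrable_aux ?_ hfc fun x hx => ?_
      · exact (continuous_finset_sum _ fun i _ =>
          (cdW _).mul (lyap_pd_contDiff hh _).continuous).mul hρc
      · by_contra hc
        have hxh : x ∉ tsupport h := fun hm => hc (hhsupp hm)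
        refine mem_support.mp hx ?_
        have : ∀ i : Fin n, fderiv ℝ W x (EuclideanSpace.single i (1:ℝ)) *
            fderiv ℝ h x (EuclideanSpace.single i (1:ℝ)) = 0 := fun i => by
          rw [lyap_pd_zero hxh, mul_zero]
        rw [Finset.sum_congr rfl fun i _ => this i]
        simp
    have intD2 : Integrable (fun x : EuclideanSpace ℝ (Fin n) =>
        (∑ i : Fin n, fderiv ℝ f x (EuclideanSpace.single i 1) ^ 2) * exp (-V x)) volume := by
      refine lyap_integrable_aux ?_ hfc fun x hx => ?_
      · exact (continuous_finset_sum _ fun i _ => (cdf _).pow 2).mul hρc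
      · by_contra hc
        have hxf : x ∉ tsupport f := hc
        refine mem_support.mp hx ?_
        have : ∀ i : Fin n, fderiv ℝ f x (EuclideanSpace.single i (1:ℝ)) ^ 2 = 0 := fun i => by
          rw [lyap_pd_zero hxf]; ring
        rw [Finset.sum_congr rfl fun i _ => this i]
        simp
    -- Step A : pointwise Lyapunov bound
    have stepA : lam * ∫ x, f x ^ 2 * exp (-V x)
        ≤ ∫ x, (-(euclideanLaplacian Wc x - ∑ i : Fin n,
            fderiv ℝ V x (EuclideanSpace.single i 1) * fderiv ℝ Wc x (EuclideanSpace.single i 1)))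
            * (h x * exp (-V x)) := by
      rw [← integral_const_mul]
      refine integral_mono intA1 intA2 fun x => ?_
      by_cases hx : x ∈ tsupport f
      · have hxO : x ∈ Metric.ball (0 : EuclideanSpace ℝ (Fin n)) R := hOsupp hx
        have hxU : x ∉ closure U := hfsupp hx
        have hkey : euclideanLaplacian W x - ∑ i : Fin n,
            fderiv ℝ V x (EuclideanSpace.single i 1) * fderiv ℝ W x (EuclideanSpace.single i 1)
            ≤ -lam * W x := by
          have := hWly x hxU
          rwa [lyap_gradient_sum] at this
        have hLW : lam * W x ≤ -(euclideanLaplacian Wc x - ∑ i : Fin n,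
            fderiv ℝ V x (EuclideanSpace.single i 1) *
            fderiv ℝ Wc x (EuclideanSpace.single i 1)) := by
          rw [hLap x hxO]
          rw [show (∑ i : Fin n, fderiv ℝ V x (EuclideanSpace.single i 1) *
              fderiv ℝ Wc x (EuclideanSpace.single i 1)) = ∑ i : Fin n,
              fderiv ℝ V x (EuclideanSpace.single i 1) *
              fderiv ℝ W x (EuclideanSpace.single i 1) from
            Finset.sum_congr rfl fun i _ => by rw [hd1 x hxO]]
          linarith
        have hbn : 0 ≤ h x * exp (-V x) :=
          mul_nonneg (div_nonneg (mul_self_nonneg _) (hW0 x).le) (hρpos x).le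
        calc lam * (f x ^ 2 * exp (-V x)) = (lam * W x) * (h x * exp (-V x)) := by
              simp only [hhdef]
              field_simp [(hW0 x).ne']
        _ ≤ _ := mul_le_mul_of_nonneg_right hLW hbn
      · have hf0 : f x = 0 := image_eq_zero_of_notMem_tsupport hx
        have hh0x : h x = 0 := hh0 x hx
        simp [hf0, hh0x]
    -- Step B : Green's formula
    have stepB : ∫ x, (-(euclideanLaplacian Wc x - ∑ i : Fin n,
          fderiv ℝ V x (EuclideanSpace.single i 1) * fderiv ℝ Wc x (EuclideanSpace.single i 1)))
          * (h x * exp (-V x))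
        = ∫ x, (∑ i : Fin n, fderiv ℝ Wc x (EuclideanSpace.single i 1) *
            fderiv ℝ h x (EuclideanSpace.single i 1)) * exp (-V x) := by
      have hG := lyap_green hWc hWcc hh hhc hV
      have : ∫ x, (-(euclideanLaplacian Wc x - ∑ i : Fin n,
          fderiv ℝ V x (EuclideanSpace.single i 1) * fderiv ℝ Wc x (EuclideanSpace.single i 1)))
          * (h x * exp (-V x))
        = - ∫ x, (euclideanLaplacian Wc x - ∑ i : Fin n,
          fderiv ℝ V x (EuclideanSpace.single i 1) * fderiv ℝ Wc x (EuclideanSpace.single i 1))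
          * (h x * exp (-V x)) := by
        rw [← integral_neg]
        congr 1; ext x; ring
      rw [this, hG, neg_neg]
    -- Step C : replace Wc by W
    have stepC : ∫ x, (∑ i : Fin n, fderiv ℝ Wc x (EuclideanSpace.single i 1) *
          fderiv ℝ h x (EuclideanSpace.single i 1)) * exp (-V x)
        = ∫ x, (∑ i : Fin n, fderiv ℝ W x (EuclideanSpace.single i 1) *
            fderiv ℝ h x (EuclideanSpace.single i 1)) * exp (-V x) := by
      congr 1; ext x
      by_cases hx : x ∈ Metric.ball (0 : EuclideanSpace ℝ (Fin n)) R
      · rw [Finset.sum_congr rfl fun i _ => by rw [hd1 x hx]]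
      · have hxh : x ∉ tsupport h := fun hm => hx (hOsupp (hhsupp hm))
        have hz : ∀ A : EuclideanSpace ℝ (Fin n) → ℝ,
            ∑ i : Fin n, fderiv ℝ A x (EuclideanSpace.single i 1) *
              fderiv ℝ h x (EuclideanSpace.single i 1) = 0 := fun A =>
          Finset.sum_eq_zero fun i _ => by rw [lyap_pd_zero hxh, mul_zero]
        rw [hz Wc, hz W]
    -- Step D : pointwise Cauchy-Schwarz / completing the square
    have hdh : ∀ (x : EuclideanSpace ℝ (Fin n)) (v : EuclideanSpace ℝ (Fin n)),
        fderiv ℝ h x v = 2 * (f x / W x) * fderiv ℝ f x v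
          - (f x / W x) ^ 2 * fderiv ℝ W x v := by
      intro x v
      have h1 : HasFDerivAt (fun y => f y * f y)
          (f x • fderiv ℝ f x + f x • fderiv ℝ f x) x :=
        (hfd x).hasFDerivAt.mul (hfd x).hasFDerivAt
      have hinv : HasFDerivAt (fun y => (W y)⁻¹) ((-((W x) ^ 2)⁻¹) • fderiv ℝ W x) x :=
        (hasDerivAt_inv (hW0 x).ne').comp_hasFDerivAt x (hWd x).hasFDerivAt
      have h2 := h1.mul hinv
      have hfun : h = fun y => (f y * f y) * (W y)⁻¹ := by
        funext y; simp only [hhdef]; rw [div_eq_mul_inv]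
      rw [hfun, show (fun y => (f y * f y) * (W y)⁻¹) = (fun y => f y * f y) * (fun y => (W y)⁻¹) from rfl, h2.fderiv]
      have hWne : W x ≠ 0 := (hW0 x).ne'
      simp only [ContinuousLinearMap.add_apply, ContinuousLinearMap.smul_apply, smul_eq_mul]
      field_simp
      ring
    have stepD : ∫ x, (∑ i : Fin n, fderiv ℝ W x (EuclideanSpace.single i 1) *
          fderiv ℝ h x (EuclideanSpace.single i 1)) * exp (-V x)
        ≤ ∫ x, (∑ i : Fin n, fderiv ℝ f x (EuclideanSpace.single i 1) ^ 2) * exp (-V x) := by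
      refine integral_mono intD1 intD2 fun x => ?_
      refine mul_le_mul_of_nonneg_right (Finset.sum_le_sum fun i _ => ?_) (hρpos x).le
      rw [hdh x]
      nlinarith [sq_nonneg (fderiv ℝ f x (EuclideanSpace.single i (1:ℝ))
        - (f x / W x) * fderiv ℝ W x (EuclideanSpace.single i (1:ℝ)))]
    -- Step E : rewrite the gradient norm
    have stepE : ∫ x, (∑ i : Fin n, fderiv ℝ f x (EuclideanSpace.single i 1) ^ 2) * exp (-V x)
        = ∫ x, ‖gradient f x‖ ^ 2 * exp (-V x) := by
      congr 1; ext x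
      rw [lyap_norm_gradient_sum]
    calc lam * ∫ x, f x ^ 2 * exp (-V x) ≤ _ := stepA
    _ = _ := stepB
    _ = _ := stepC
    _ ≤ _ := stepD
    _ = _ := stepE
  refine ⟨part1, ?_⟩
  -- Part 2: boundedness of the set of admissible rates
  haveI := hprob
  obtain ⟨R, hR0, hRU⟩ := (hUb.closure).subset_ball_lt 0 0
  set x₀ : EuclideanSpace ℝ (Fin n) := EuclideanSpace.single (⟨0, hn⟩ : Fin n) (R + 1) with hx₀
  have hx₀norm : ‖x₀‖ = R + 1 := by
    rw [hx₀, EuclideanSpace.norm_single, Real.norm_eq_abs, abs_of_pos (by linarith)]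
  have hx₀U : x₀ ∉ closure U := by
    intro hc
    have h1 := hRU hc
    rw [Metric.mem_ball, dist_zero_right, hx₀norm] at h1
    linarith
  have hopen : IsOpen (closure U)ᶜ := isOpen_compl_iff.mpr isClosed_closure
  obtain ⟨r, hr0, hball⟩ :=
    Metric.nhds_basis_closedBall.mem_iff.1 (hopen.mem_nhds hx₀U)
  set c : ContDiffBump x₀ := ⟨r/2, r, by positivity, by linarith⟩ with hcdef
  have hc1 : ContDiff ℝ (⊤ : ℕ∞) ⇑c := c.contDiff
  have hc2 : HasCompactSupport ⇑c := c.hasCompactSupport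
  have hc3 : tsupport ⇑c ⊆ (closure U)ᶜ := by
    rw [c.tsupport_eq]
    exact hball
  have hint : Integrable (fun x => c x ^ 2)
      (volume.withDensity fun x => ENNReal.ofReal (exp (-V x))) := by
    refine (c.continuous.pow 2).integrable_of_hasCompactSupport ?_
    exact HasCompactSupport.intro hc2 fun x hx => by
      rw [Pi.pow_apply, image_eq_zero_of_notMem_tsupport hx]; ring
  have hpos : 0 < ∫ x, c x ^ 2 ∂(volume.withDensity fun x => ENNReal.ofReal (exp (-V x))) := by
    rw [integral_pos_iff_support_of_nonneg (fun x => sq_nonneg _) hint]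
    have hsupp : support (fun x => c x ^ 2) = Metric.ball x₀ r := by
      have : support (fun x => c x ^ 2) = support ⇑c := by
        ext x
        simp [mem_support, pow_eq_zero_iff]
      rw [this, c.support_eq]
    rw [hsupp]
    have hmeas : Measurable fun x : EuclideanSpace ℝ (Fin n) => ENNReal.ofReal (exp (-V x)) :=
      ENNReal.measurable_ofReal.comp (Real.continuous_exp.comp hV.continuous.neg).measurable
    rw [withDensity_apply _ measurableSet_ball, setLIntegral_pos_iff hmeas]
    have huniv : support (fun x : EuclideanSpace ℝ (Fin n) => ENNReal.ofReal (exp (-V x)))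
        = Set.univ := by
      ext x
      simp only [mem_support, Set.mem_univ, iff_true]
      exact ne_of_gt (ENNReal.ofReal_pos.mpr (exp_pos _))
    rw [huniv, Set.univ_inter]
    exact Metric.measure_ball_pos _ _ hr0
  refine ⟨(∫ x, ‖gradient (⇑c) x‖ ^ 2
      ∂(volume.withDensity fun x => ENNReal.ofReal (exp (-V x))))
      / (∫ x, c x ^ 2 ∂(volume.withDensity fun x => ENNReal.ofReal (exp (-V x)))), ?_⟩
  rintro lam ⟨hlam0, W, hW, hW1, hWly⟩
  have hkey := part1 lam hlam0 W hW hW1 hWly (⇑c) hc1 hc2 hc3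
  rw [le_div_iff₀ hpos]
  linarith
end

section
/- Let μ(dx) = Z^{-1} e^{-V(x)} dx be a probability measure on ℝ with ∫ x dμ = 0, where V attains its minimum at a ∈ ℝ. Suppose V is β-superlinear with constants c_β > 0 and h_β ≥ 0, associated with the numbers R₊(β), R₋(β) > 0 and R(β) = max(R₊(β), R₋(β)). Then R₊²(β) ∨ R₋²(β) ≤ 12 · Var_μ(x) · e^{β} · ( 1 + 2 e^{h_β}/c_β ). -/
open MeasureTheory Set

private lemma sq_le_exp_aux {t : ℝ} (ht : 0 ≤ t) : t ^ 2 ≤ 4 * Real.exp t := by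
  have h1 := Real.add_one_le_exp (t / 2)
  have h2 : Real.exp t = Real.exp (t / 2) * Real.exp (t / 2) := by
    rw [← Real.exp_add]; ring_nf
  nlinarith [Real.exp_pos (t / 2)]

private lemma quad_exp_bound {k t : ℝ} (hk : 0 < k) (ht : 0 ≤ t) :
    t ^ 2 * Real.exp (-(k * t)) ≤ 16 / k ^ 2 * Real.exp (-(k / 2 * t)) := by
  have h4 : (k / 2 * t) ^ 2 ≤ 4 * Real.exp (k / 2 * t) := sq_le_exp_aux (by positivity)
  have h5 : t ^ 2 ≤ 16 / k ^ 2 * Real.exp (k / 2 * t) := by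
    have hk2 : 0 < k ^ 2 := by positivity
    rw [div_mul_eq_mul_div, le_div_iff₀ hk2]
    nlinarith [h4]
  calc t ^ 2 * Real.exp (-(k * t))
      ≤ 16 / k ^ 2 * Real.exp (k / 2 * t) * Real.exp (-(k * t)) :=
        mul_le_mul_of_nonneg_right h5 (Real.exp_pos _).le
    _ = 16 / k ^ 2 * Real.exp (-(k / 2 * t)) := by
        rw [mul_assoc, ← Real.exp_add]; ring_nf

private lemma integrableOn_exp_mul_Iic' {b : ℝ} (p : ℝ) (hb : 0 < b) :
    IntegrableOn (fun x : ℝ => Real.exp (b * x)) (Set.Iic p) := by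
  have A : MeasurableEmbedding (fun x : ℝ => -x) :=
    (Homeomorph.neg ℝ).isClosedEmbedding.measurableEmbedding
  have B : MeasurePreserving (fun x : ℝ => -x) volume volume :=
    Measure.measurePreserving_neg _
  have h1 : IntegrableOn (fun x : ℝ => Real.exp (-b * x)) (Set.Ioi (-p)) :=
    exp_neg_integrableOn_Ioi _ hb
  have h2 : IntegrableOn ((fun x : ℝ => Real.exp (b * x)) ∘ (fun x : ℝ => -x))
      ((fun x : ℝ => -x) ⁻¹' Set.Iic p) := by
    have hpre : ((fun x : ℝ => -x) ⁻¹' Set.Iic p) = Set.Ici (-p) := by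
      ext x; simp [neg_le]
    rw [hpre, integrableOn_Ici_iff_integrableOn_Ioi]
    refine h1.congr_fun (fun x _ => ?_) measurableSet_Ioi
    simp [Function.comp, mul_neg, neg_mul]
  exact (B.integrableOn_comp_preimage A).1 h2

private lemma tail_exp_integral {k : ℝ} (r : ℝ) (hk : 0 < k) :
    ∫ x in Set.Ioi r, Real.exp (-(k * x)) = k⁻¹ * Real.exp (-(k * r)) := by
  have := integral_comp_mul_left_Ioi (fun y => Real.exp (-y)) r hk
  simp only [smul_eq_mul] at this
  rw [this, integral_exp_neg_Ioi]

private lemma integral_Ioc_sq {p q : ℝ} (hpq : p ≤ q) :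
    ∫ x in Set.Ioc p q, x ^ 2 = (q ^ 3 - p ^ 3) / 3 := by
  rw [← intervalIntegral.integral_of_le hpq, integral_pow]
  norm_num

set_option maxHeartbeats 2000000 in
/-- Let `μ = Z⁻¹ e^{-V} dx` be a centered probability measure on `ℝ`, `V`
attaining its minimum at `a`, and `V` `β`-superlinear with constants `c_β > 0`, `h_β ≥ 0`
relative to `R₊(β), R₋(β) > 0` and `R(β) = max(R₊, R₋)`.  Then
`R₊² ∨ R₋² ≤ 12 Var_μ(x) e^β (1 + 2 e^{h_β}/c_β)`. -/
theorem superlinear_radius_upper_bound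
    (V : ℝ → ℝ) (hVm : Measurable V) (a : ℝ) (hmin : ∀ x, V a ≤ V x)
    (hint : Integrable fun x => Real.exp (-V x))
    (Z : ℝ) (hZ : Z = ∫ x, Real.exp (-V x))
    (μ : Measure ℝ)
    (hμ : μ = volume.withDensity fun x => ENNReal.ofReal (Real.exp (-V x) / Z))
    (hcent : ∫ x, x ∂μ = 0)
    (β c h Rp Rm : ℝ) (hβ : 0 < β) (hc : 0 < c) (hh : 0 ≤ h)
    (hRp : 0 < Rp) (hRm : 0 < Rm)
    (hlevp : ∀ u, 0 ≤ u → u ≤ Rp → V (a + u) - V a ≤ β)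
    (hlevm : ∀ u, 0 ≤ u → u ≤ Rm → V (a - u) - V a ≤ β)
    (hsupp : ∀ t, Rp ≤ t → (c / max Rp Rm) * t - h ≤ V (a + t) - V a)
    (hsupm : ∀ t, Rm ≤ t → (c / max Rp Rm) * t - h ≤ V (a - t) - V a) :
    max (Rp ^ 2) (Rm ^ 2) ≤
      12 * ((∫ x, x ^ 2 ∂μ) - (∫ x, x ∂μ) ^ 2) * Real.exp β * (1 + 2 * Real.exp h / c) := by
  -- notation
  set R : ℝ := max Rp Rm with hRdef
  have hR : 0 < R := lt_max_of_lt_left hRp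
  set k : ℝ := c / R with hkdef
  have hk : 0 < k := div_pos hc hR
  set p : ℝ := a - Rm with hpdef
  set q : ℝ := a + Rp with hqdef
  set L : ℝ := Rp + Rm with hLdef
  have hL : 0 < L := add_pos hRp hRm
  have hpq : p ≤ q := by simp only [hpdef, hqdef]; linarith
  have hM : 0 < 1 + 2 * Real.exp h / c :=
    add_pos one_pos (div_pos (by positivity) hc)
  -- Z is positive
  have hZpos : 0 < Z := by
    rw [hZ]
    refine (integral_pos_iff_support_of_nonneg (fun x => (Real.exp_pos _).le) hint).2 ?_
    have hs : Function.support (fun x : ℝ => Real.exp (-V x)) = Set.univ := by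
      ext x; simp [Real.exp_ne_zero]
    rw [hs]
    simp
  -- integrals with respect to μ
  have key : ∀ g : ℝ → ℝ, ∫ x, g x ∂μ = ∫ x, Real.exp (-V x) / Z * g x := by
    intro g
    have hm : Measurable fun x => Real.toNNReal (Real.exp (-V x) / Z) :=
      ((hVm.neg.exp).div_const Z).real_toNNReal
    rw [hμ]
    rw [show (fun x => ENNReal.ofReal (Real.exp (-V x) / Z)) =
        (fun x => ((Real.toNNReal (Real.exp (-V x) / Z) : NNReal) : ENNReal)) from rfl]
    rw [integral_withDensity_eq_integral_smul hm g]
    congr 1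
    ext x
    rw [NNReal.smul_def, smul_eq_mul,
      Real.coe_toNNReal _ (div_nonneg (Real.exp_pos _).le hZpos.le)]
  -- tail bounds for exp(-V)
  have htailp : ∀ x : ℝ, q ≤ x →
      Real.exp (-V x) ≤ Real.exp (h - V a) * Real.exp (-(k * (x - a))) := by
    intro x hx
    have ht : Rp ≤ x - a := by simp only [hqdef] at hx; linarith
    have := hsupp (x - a) ht
    rw [show a + (x - a) = x by ring] at this
    rw [← Real.exp_add]
    apply Real.exp_le_exp.2
    linarith
  have htailm : ∀ x : ℝ, x ≤ p →
      Real.exp (-V x) ≤ Real.exp (h - V a) * Real.exp (-(k * (a - x))) := by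
    intro x hx
    have ht : Rm ≤ a - x := by simp only [hpdef] at hx; linarith
    have := hsupm (a - x) ht
    rw [show a - (a - x) = x by ring] at this
    rw [← Real.exp_add]
    apply Real.exp_le_exp.2
    linarith
  -- integrability of x ↦ x^2 * exp(-V x)
  have hint2 : Integrable fun x : ℝ => x ^ 2 * Real.exp (-V x) := by
    have hmeas : AEStronglyMeasurable (fun x : ℝ => x ^ 2 * Real.exp (-V x)) volume :=
      ((measurable_id.pow_const 2).mul hVm.neg.exp).aestronglyMeasurable
    -- a pointwise estimate valid on both tails
    have hquad : ∀ x t : ℝ, 0 ≤ t → (t = x - a ∨ t = a - x) →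
        x ^ 2 * Real.exp (-(k * t)) ≤
          Real.exp (-(k / 2 * t)) * (32 / k ^ 2 + 2 * a ^ 2) := by
      intro x t ht hcase
      have hx2 : x ^ 2 ≤ 2 * t ^ 2 + 2 * a ^ 2 := by
        rcases hcase with hc' | hc' <;> nlinarith [sq_nonneg (x - a + a), sq_nonneg (x - 2*a)]
      have h1 : t ^ 2 * Real.exp (-(k * t)) ≤ 16 / k ^ 2 * Real.exp (-(k / 2 * t)) :=
        quad_exp_bound hk ht
      have h2 : Real.exp (-(k * t)) ≤ Real.exp (-(k / 2 * t)) := by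
        apply Real.exp_le_exp.2; nlinarith
      calc x ^ 2 * Real.exp (-(k * t)) ≤ (2 * t ^ 2 + 2 * a ^ 2) * Real.exp (-(k * t)) :=
            mul_le_mul_of_nonneg_right hx2 (Real.exp_pos _).le
        _ = 2 * (t ^ 2 * Real.exp (-(k * t))) + 2 * a ^ 2 * Real.exp (-(k * t)) := by ring
        _ ≤ 2 * (16 / k ^ 2 * Real.exp (-(k / 2 * t))) + 2 * a ^ 2 * Real.exp (-(k / 2 * t)) := by
            have := mul_le_mul_of_nonneg_left h2 (by positivity : (0:ℝ) ≤ 2 * a ^ 2)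
            linarith
        _ = Real.exp (-(k / 2 * t)) * (32 / k ^ 2 + 2 * a ^ 2) := by ring
    have hmid : IntegrableOn (fun x : ℝ => x ^ 2 * Real.exp (-V x)) (Set.Icc p q) := by
      refine Integrable.mono' (g := fun x : ℝ => x ^ 2 * Real.exp (-V a)) ?_ hmeas.restrict
        (ae_of_all _ fun x => ?_)
      · exact (((continuous_pow 2).mul continuous_const)).integrableOn_Icc
      · have hb : Real.exp (-V x) ≤ Real.exp (-V a) := Real.exp_le_exp.2 (neg_le_neg (hmin x))
        rw [Real.norm_eq_abs, abs_of_nonneg (by positivity)]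
        exact mul_le_mul_of_nonneg_left hb (sq_nonneg x)
    have hright : IntegrableOn (fun x : ℝ => x ^ 2 * Real.exp (-V x)) (Set.Ioi q) := by
      refine Integrable.mono'
        (g := fun x : ℝ => Real.exp (h - V a) * (32 / k ^ 2 + 2 * a ^ 2) * Real.exp (k / 2 * a)
          * Real.exp (-(k / 2) * x)) ?_ hmeas.restrict ?_
      · exact (exp_neg_integrableOn_Ioi q (by positivity)).const_mul _
      · rw [ae_restrict_iff' measurableSet_Ioi]
        refine ae_of_all _ fun x hx => ?_
        have hxq : q ≤ x := (le_of_lt hx)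
        have ht : (0:ℝ) ≤ x - a := by
          simp only [hqdef] at hxq; linarith
        rw [Real.norm_eq_abs, abs_of_nonneg (by positivity)]
        calc x ^ 2 * Real.exp (-V x)
            ≤ x ^ 2 * (Real.exp (h - V a) * Real.exp (-(k * (x - a)))) := by
              exact mul_le_mul_of_nonneg_left (htailp x hxq) (sq_nonneg x)
          _ = Real.exp (h - V a) * (x ^ 2 * Real.exp (-(k * (x - a)))) := by ring
          _ ≤ Real.exp (h - V a) *
              (Real.exp (-(k / 2 * (x - a))) * (32 / k ^ 2 + 2 * a ^ 2)) := by
              exact mul_le_mul_of_nonneg_left (hquad x (x - a) ht (Or.inl rfl))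
                (Real.exp_pos _).le
          _ = Real.exp (h - V a) * (32 / k ^ 2 + 2 * a ^ 2) * Real.exp (k / 2 * a)
              * Real.exp (-(k / 2) * x) := by
              rw [mul_assoc, mul_assoc, ← Real.exp_add]
              ring_nf
    have hleft : IntegrableOn (fun x : ℝ => x ^ 2 * Real.exp (-V x)) (Set.Iic p) := by
      refine Integrable.mono'
        (g := fun x : ℝ => Real.exp (h - V a) * (32 / k ^ 2 + 2 * a ^ 2) * Real.exp (-(k / 2) * a)
          * Real.exp ((k / 2) * x)) ?_ hmeas.restrict ?_
      · exact (integrableOn_exp_mul_Iic' p (by positivity)).const_mul _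
      · rw [ae_restrict_iff' measurableSet_Iic]
        refine ae_of_all _ fun x hx => ?_
        have hxp : x ≤ p := hx
        have ht : (0:ℝ) ≤ a - x := by
          simp only [hpdef] at hxp; linarith
        rw [Real.norm_eq_abs, abs_of_nonneg (by positivity)]
        calc x ^ 2 * Real.exp (-V x)
            ≤ x ^ 2 * (Real.exp (h - V a) * Real.exp (-(k * (a - x)))) := by
              exact mul_le_mul_of_nonneg_left (htailm x hxp) (sq_nonneg x)
          _ = Real.exp (h - V a) * (x ^ 2 * Real.exp (-(k * (a - x)))) := by ring
          _ ≤ Real.exp (h - V a) *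
              (Real.exp (-(k / 2 * (a - x))) * (32 / k ^ 2 + 2 * a ^ 2)) := by
              exact mul_le_mul_of_nonneg_left (hquad x (a - x) ht (Or.inr rfl))
                (Real.exp_pos _).le
          _ = Real.exp (h - V a) * (32 / k ^ 2 + 2 * a ^ 2) * Real.exp (-(k / 2) * a)
              * Real.exp ((k / 2) * x) := by
              rw [mul_assoc, mul_assoc, ← Real.exp_add]
              ring_nf
    have hunion : Set.Iic p ∪ (Set.Icc p q ∪ Set.Ioi q) = Set.univ := by
      ext x
      simp only [Set.mem_union, Set.mem_Iic, Set.mem_Icc, Set.mem_Ioi, Set.mem_univ, iff_true]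
      rcases le_total x p with h1 | h1
      · exact Or.inl h1
      · rcases le_total x q with h2 | h2
        · exact Or.inr (Or.inl ⟨h1, h2⟩)
        · rcases eq_or_lt_of_le h2 with h3 | h3
          · exact Or.inr (Or.inl ⟨h1, le_of_eq h3.symm⟩)
          · exact Or.inr (Or.inr h3)
    have := (hleft.union (hmid.union hright))
    rw [hunion] at this
    exact integrableOn_univ.1 this
  -- the weighted integrand and its integrability
  have hG : Integrable fun x : ℝ => Real.exp (-V x) / Z * x ^ 2 := by
    have h1 := hint2.div_const Z
    exact h1.congr (ae_of_all _ fun x => by ring)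
  have hGnn : ∀ x : ℝ, 0 ≤ Real.exp (-V x) / Z * x ^ 2 := fun x =>
    mul_nonneg (div_nonneg (Real.exp_pos _).le hZpos.le) (sq_nonneg x)
  -- lower bound for the variance
  have hIcc_le : ∫ x in Set.Icc p q, Real.exp (-V x) / Z * x ^ 2 ≤
      ∫ x, Real.exp (-V x) / Z * x ^ 2 :=
    setIntegral_le_integral hG (ae_of_all _ hGnn)
  have hmono : ∫ x in Set.Icc p q, Real.exp (-(V a + β)) / Z * x ^ 2 ≤
      ∫ x in Set.Icc p q, Real.exp (-V x) / Z * x ^ 2 := by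
    refine setIntegral_mono_on
      ((continuous_const.mul (continuous_pow 2)).integrableOn_Icc)
      hG.integrableOn measurableSet_Icc (fun x hx => ?_)
    have hVx : V x ≤ V a + β := by
      rcases le_total a x with h1 | h1
      · have hxq : x ≤ q := hx.2
        have := hlevp (x - a) (by linarith) (by simp only [hqdef] at hxq; linarith)
        rw [show a + (x - a) = x by ring] at this
        linarith
      · have hxp : p ≤ x := hx.1
        have := hlevm (a - x) (by linarith) (by simp only [hpdef] at hxp; linarith)
        rw [show a - (a - x) = x by ring] at this
        linarith
    refine mul_le_mul_of_nonneg_right ?_ (sq_nonneg x)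
    exact (div_le_div_iff_of_pos_right hZpos).2 (Real.exp_le_exp.2 (by linarith))
  have hIccval : ∫ x in Set.Icc p q, Real.exp (-(V a + β)) / Z * x ^ 2
      = Real.exp (-(V a + β)) / Z * ((q ^ 3 - p ^ 3) / 3) := by
    rw [MeasureTheory.integral_const_mul]
    congr 1
    rw [MeasureTheory.integral_Icc_eq_integral_Ioc, integral_Ioc_sq hpq]
  have hcube : L ^ 3 / 12 ≤ (q ^ 3 - p ^ 3) / 3 := by
    simp only [hLdef, hpdef, hqdef]
    nlinarith [mul_nonneg (add_pos hRp hRm).le (sq_nonneg (2 * a + Rp - Rm))]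
  have hVarlb : Real.exp (-(V a + β)) / Z * (L ^ 3 / 12) ≤
      ∫ x, Real.exp (-V x) / Z * x ^ 2 := by
    calc Real.exp (-(V a + β)) / Z * (L ^ 3 / 12)
        ≤ Real.exp (-(V a + β)) / Z * ((q ^ 3 - p ^ 3) / 3) :=
          mul_le_mul_of_nonneg_left hcube (div_nonneg (Real.exp_pos _).le hZpos.le)
      _ = ∫ x in Set.Icc p q, Real.exp (-(V a + β)) / Z * x ^ 2 := hIccval.symm
      _ ≤ ∫ x in Set.Icc p q, Real.exp (-V x) / Z * x ^ 2 := hmono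
      _ ≤ ∫ x, Real.exp (-V x) / Z * x ^ 2 := hIcc_le
  -- upper bound on Z
  have hC2' : Real.exp (h - V a) = Real.exp h * Real.exp (-V a) := by
    rw [← Real.exp_add]; ring_nf
  have hkinv : k⁻¹ = R / c := by rw [hkdef, inv_div]
  have hRL : R ≤ L := by
    simp only [hRdef, hLdef]
    exact max_le (by linarith) (by linarith)
  have hZub : Z ≤ Real.exp (-V a) * L * (1 + 2 * Real.exp h / c) := by
    set f1 : ℝ → ℝ := Set.indicator (Set.Icc p q) (fun _ => Real.exp (-V a)) with hf1
    set f2 : ℝ → ℝ :=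
      Set.indicator (Set.Ioi q) (fun x => Real.exp (h - V a) * Real.exp (-(k * (x - a)))) with hf2
    set f3 : ℝ → ℝ :=
      Set.indicator (Set.Iic p) (fun x => Real.exp (h - V a) * Real.exp (-(k * (a - x)))) with hf3
    have hf2eq : Set.EqOn
        (fun x : ℝ => (Real.exp (h - V a) * Real.exp (k * a)) * Real.exp (-k * x))
        (fun x : ℝ => Real.exp (h - V a) * Real.exp (-(k * (x - a)))) (Set.Ioi q) := by
      intro x _
      simp only [mul_assoc, ← Real.exp_add]
      ring_nf
    have hf1i : Integrable f1 := by
      rw [hf1, integrable_indicator_iff measurableSet_Icc]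
      exact integrableOn_const measure_Icc_lt_top.ne
    have hf2i : Integrable f2 := by
      rw [hf2, integrable_indicator_iff measurableSet_Ioi]
      exact IntegrableOn.congr_fun ((exp_neg_integrableOn_Ioi q hk).const_mul _) hf2eq measurableSet_Ioi
    have hf3eq : Set.EqOn
        (fun x : ℝ => (Real.exp (h - V a) * Real.exp (-(k * a))) * Real.exp (k * x))
        (fun x : ℝ => Real.exp (h - V a) * Real.exp (-(k * (a - x)))) (Set.Iic p) := by
      intro x _
      simp only [mul_assoc, ← Real.exp_add]
      ring_nf
    have hf3i : Integrable f3 := by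
      rw [hf3, integrable_indicator_iff measurableSet_Iic]
      exact IntegrableOn.congr_fun ((integrableOn_exp_mul_Iic' p hk).const_mul _) hf3eq measurableSet_Iic
    have hpt : ∀ x, Real.exp (-V x) ≤ f1 x + f2 x + f3 x := by
      intro x
      have h1n : 0 ≤ f1 x := Set.indicator_nonneg (fun y _ => (Real.exp_pos _).le) x
      have h2n : 0 ≤ f2 x := Set.indicator_nonneg
        (fun y _ => mul_nonneg (Real.exp_pos _).le (Real.exp_pos _).le) x
      have h3n : 0 ≤ f3 x := Set.indicator_nonneg
        (fun y _ => mul_nonneg (Real.exp_pos _).le (Real.exp_pos _).le) x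
      rcases le_or_gt x p with hxp | hxp
      · have : f3 x = Real.exp (h - V a) * Real.exp (-(k * (a - x))) :=
          Set.indicator_of_mem (Set.mem_Iic.2 hxp) _
        rw [this] at h3n ⊢
        have := htailm x hxp
        linarith
      · rcases le_or_gt x q with hxq | hxq
        · have : f1 x = Real.exp (-V a) := Set.indicator_of_mem (Set.mem_Icc.2 ⟨hxp.le, hxq⟩) _
          rw [this] at h1n ⊢
          have := Real.exp_le_exp.2 (neg_le_neg (hmin x))
          linarith
        · have : f2 x = Real.exp (h - V a) * Real.exp (-(k * (x - a))) :=
            Set.indicator_of_mem (Set.mem_Ioi.2 hxq) _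
          rw [this] at h2n ⊢
          have := htailp x hxq.le
          linarith
    have hZle : Z ≤ (∫ x, f1 x) + (∫ x, f2 x) + (∫ x, f3 x) := by
      rw [hZ]
      calc ∫ x, Real.exp (-V x) ≤ ∫ x, (f1 x + f2 x + f3 x) :=
            integral_mono hint ((hf1i.add hf2i).add hf3i) hpt
        _ = (∫ x, f1 x) + (∫ x, f2 x) + (∫ x, f3 x) := by
            have h12 : Integrable fun x => f1 x + f2 x := hf1i.add hf2i
            rw [integral_add h12 hf3i, integral_add hf1i hf2i]
    have hv1 : ∫ x, f1 x = Real.exp (-V a) * L := by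
      rw [hf1, integral_indicator_const _ measurableSet_Icc, Real.volume_real_Icc_of_le hpq]
      simp only [smul_eq_mul, hqdef, hpdef, hLdef]
      ring
    have hv2 : ∫ x, f2 x =
        Real.exp (h - V a) * Real.exp (k * a) * (k⁻¹ * Real.exp (-(k * q))) := by
      rw [hf2, integral_indicator measurableSet_Ioi,
        ← setIntegral_congr_fun measurableSet_Ioi hf2eq]
      have : (fun x : ℝ => (Real.exp (h - V a) * Real.exp (k * a)) * Real.exp (-k * x))
          = fun x : ℝ => (Real.exp (h - V a) * Real.exp (k * a)) * Real.exp (-(k * x)) := by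
        funext x; rw [neg_mul]
      rw [this, MeasureTheory.integral_const_mul, tail_exp_integral q hk]
    have hv3 : ∫ x, f3 x =
        Real.exp (h - V a) * Real.exp (-(k * a)) * (k⁻¹ * Real.exp (-(k * (-p)))) := by
      rw [hf3, integral_indicator measurableSet_Iic]
      have heq : ∫ x in Set.Iic p, Real.exp (h - V a) * Real.exp (-(k * (a - x)))
          = ∫ x in Set.Iic p,
              (fun y : ℝ => Real.exp (h - V a) * Real.exp (-(k * (a + y)))) (-x) := by
        refine setIntegral_congr_fun measurableSet_Iic (fun x _ => ?_)
        simp only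
        ring_nf
      rw [heq, integral_comp_neg_Iic p (fun y : ℝ => Real.exp (h - V a) * Real.exp (-(k * (a + y))))]
      have : (fun y : ℝ => Real.exp (h - V a) * Real.exp (-(k * (a + y))))
          = fun y : ℝ => (Real.exp (h - V a) * Real.exp (-(k * a))) * Real.exp (-(k * y)) := by
        funext y
        simp only [← Real.exp_add]
        ring_nf
      rw [this, MeasureTheory.integral_const_mul, tail_exp_integral (-p) hk]
    have hb2 : ∫ x, f2 x ≤ Real.exp h * Real.exp (-V a) * (L / c) := by
      rw [hv2, hC2']
      have he1 : Real.exp (k * a) * (k⁻¹ * Real.exp (-(k * q))) =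
          k⁻¹ * Real.exp (-(k * Rp)) := by
        rw [mul_comm (Real.exp (k * a)), mul_assoc, ← Real.exp_add]
        congr 2
        simp only [hqdef]; ring
      rw [mul_assoc, he1]
      have he2 : Real.exp (-(k * Rp)) ≤ 1 :=
        Real.exp_le_one_iff.2 (by nlinarith)
      have hk' : k⁻¹ ≤ L / c := by
        rw [hkinv]
        exact (div_le_div_iff_of_pos_right hc).2 hRL
      have h1 : k⁻¹ * Real.exp (-(k * Rp)) ≤ L / c := by
        calc k⁻¹ * Real.exp (-(k * Rp)) ≤ k⁻¹ * 1 :=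
              mul_le_mul_of_nonneg_left he2 (by positivity)
          _ = k⁻¹ := mul_one _
          _ ≤ L / c := hk'
      exact mul_le_mul_of_nonneg_left h1 (by positivity)
    have hb3 : ∫ x, f3 x ≤ Real.exp h * Real.exp (-V a) * (L / c) := by
      rw [hv3, hC2']
      have he1 : Real.exp (-(k * a)) * (k⁻¹ * Real.exp (-(k * -p))) =
          k⁻¹ * Real.exp (-(k * Rm)) := by
        rw [mul_comm (Real.exp (-(k * a))), mul_assoc, ← Real.exp_add]
        congr 2
        simp only [hpdef]; ring
      rw [mul_assoc, he1]
      have he2 : Real.exp (-(k * Rm)) ≤ 1 :=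
        Real.exp_le_one_iff.2 (by nlinarith)
      have hk' : k⁻¹ ≤ L / c := by
        rw [hkinv]
        exact (div_le_div_iff_of_pos_right hc).2 hRL
      have h1 : k⁻¹ * Real.exp (-(k * Rm)) ≤ L / c := by
        calc k⁻¹ * Real.exp (-(k * Rm)) ≤ k⁻¹ * 1 :=
              mul_le_mul_of_nonneg_left he2 (by positivity)
          _ = k⁻¹ := mul_one _
          _ ≤ L / c := hk'
      exact mul_le_mul_of_nonneg_left h1 (by positivity)
    calc Z ≤ (∫ x, f1 x) + (∫ x, f2 x) + (∫ x, f3 x) := hZle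
      _ ≤ Real.exp (-V a) * L + Real.exp h * Real.exp (-V a) * (L / c)
          + Real.exp h * Real.exp (-V a) * (L / c) := by
          rw [hv1]; exact add_le_add (add_le_add le_rfl hb2) hb3
      _ = Real.exp (-V a) * L * (1 + 2 * Real.exp h / c) := by
          field_simp
          ring
  -- conclusion
  rw [hcent, key fun x => x ^ 2]
  have hmax : max (Rp ^ 2) (Rm ^ 2) ≤ L ^ 2 := by
    apply max_le
    · apply pow_le_pow_left₀ hRp.le
      simp only [hLdef]; linarith
    · apply pow_le_pow_left₀ hRm.le
      simp only [hLdef]; linarith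
  refine hmax.trans ?_
  have hexpsplit : Real.exp (-(V a + β)) = Real.exp (-V a) * Real.exp (-β) := by
    rw [← Real.exp_add]; ring_nf
  have hN : 0 ≤ Real.exp β * (1 + 2 * Real.exp h / c) * (Real.exp (-(V a + β)) * L ^ 3) := by
    positivity
  calc L ^ 2
      = Real.exp β * (1 + 2 * Real.exp h / c) * (Real.exp (-(V a + β)) * L ^ 3) /
        (Real.exp (-V a) * L * (1 + 2 * Real.exp h / c)) := by
        rw [hexpsplit, Real.exp_neg β]
        have h1 : Real.exp (-V a) ≠ 0 := (Real.exp_pos _).ne'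
        have h2 : L ≠ 0 := hL.ne'
        have h3 : (1 + 2 * Real.exp h / c) ≠ 0 := hM.ne'
        have h4 : Real.exp β ≠ 0 := (Real.exp_pos _).ne'
        field_simp
    _ ≤ Real.exp β * (1 + 2 * Real.exp h / c) * (Real.exp (-(V a + β)) * L ^ 3) / Z := by
        exact div_le_div_of_nonneg_left hN hZpos hZub
    _ = 12 * Real.exp β * (1 + 2 * Real.exp h / c) *
        (Real.exp (-(V a + β)) / Z * (L ^ 3 / 12)) := by
        field_simp
    _ ≤ 12 * Real.exp β * (1 + 2 * Real.exp h / c) *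
        (∫ x, Real.exp (-V x) / Z * x ^ 2) := by
        exact mul_le_mul_of_nonneg_left hVarlb (by positivity)
    _ = 12 * ((∫ x, Real.exp (-V x) / Z * x ^ 2) - 0 ^ 2) * Real.exp β *
        (1 + 2 * Real.exp h / c) := by ring
end

section
/- Let μ(dx) = Z^{-1} e^{-V(x)} dx be a probability measure on ℝ with ∫ x dμ = 0, where V attains its minimum at a ∈ ℝ. Suppose V is β-superlinear with constants c_β > 0 and h_β ≥ 0, associated with the numbers R₊(β), R₋(β) > 0 and R(β) = max(R₊(β), R₋(β)). Then R₊²(β) ∨ R₋²(β) ≥ (1/2) · Var_μ(x) · e^{-β} · ( 1/3 + (e^{h_β}/c_β)(1 + 2/c_β + 2/c_β²) )^{-1}. -/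
open MeasureTheory

set_option maxHeartbeats 1000000
open Set

lemma tail_base_int {lam : ℝ} (hlam : 0 < lam) :
    IntegrableOn (fun t : ℝ => t ^ 2 * Real.exp (-(lam * t))) (Set.Ioi 0) := by
  have h0 := integrableOn_rpow_mul_exp_neg_mul_rpow (p := 1) (s := 2) (b := lam)
    (by norm_num) (by norm_num) hlam
  refine h0.congr_fun (fun t ht => ?_) measurableSet_Ioi
  dsimp only
  rw [Real.rpow_one, show (2:ℝ) = ((2:ℕ):ℝ) by norm_num, Real.rpow_natCast]
  ring_nf

lemma tail_base_val {lam : ℝ} (hlam : 0 < lam) :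
    ∫ t in Set.Ioi (0:ℝ), t ^ 2 * Real.exp (-(lam * t)) = 2 / lam ^ 3 := by
  have h0 := Real.integral_rpow_mul_exp_neg_mul_Ioi (a := 3) (r := lam) (by norm_num) hlam
  rw [show (3:ℝ) - 1 = ((2:ℕ):ℝ) by norm_num] at h0
  rw [show ∫ t in Set.Ioi (0:ℝ), t ^ 2 * Real.exp (-(lam * t))
      = ∫ t in Set.Ioi (0:ℝ), t ^ ((2:ℕ):ℝ) * Real.exp (-(lam * t)) from
    setIntegral_congr_fun measurableSet_Ioi (fun t ht => by rw [Real.rpow_natCast]), h0]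
  have hG : Real.Gamma 3 = 2 := by
    rw [show (3:ℝ) = (2:ℕ)+1 by norm_num, Real.Gamma_nat_eq_factorial]; norm_num
  rw [hG, show (3:ℝ) = ((3:ℕ):ℝ) by norm_num, Real.rpow_natCast]
  field_simp

lemma tail_aux {g : ℝ → ℝ} (hgm : Measurable g) (hg0 : ∀ t, 0 ≤ g t)
    {A r lam H : ℝ} (hr : 0 < r) (hlam : 0 < lam) (hA : 0 ≤ A) (hH : 0 ≤ H)
    (hbd : ∀ t, g t ≤ A) (htail : ∀ t, r ≤ t → g t ≤ A * H * Real.exp (-(lam * t))) :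
    IntegrableOn (fun t => t ^ 2 * g t) (Set.Ioi (0:ℝ)) ∧
      ∫ t in Set.Ioi (0:ℝ), t ^ 2 * g t ≤ A * (r ^ 3 / 3 + H * (2 / lam ^ 3)) := by
  have hbase := tail_base_int hlam
  have hval := tail_base_val hlam
  set C := A * max H (Real.exp (lam * r)) with hC
  have hC0 : 0 ≤ C := mul_nonneg hA (le_trans hH (le_max_left _ _))
  have hpt : ∀ t : ℝ, t ≤ r → g t ≤ C * Real.exp (-(lam * t)) := by
    intro t ht
    have h1 : (1:ℝ) ≤ Real.exp (lam * r) * Real.exp (-(lam * t)) := by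
      rw [← Real.exp_add]
      apply Real.one_le_exp
      nlinarith
    calc g t ≤ A := hbd t
      _ = A * 1 := (mul_one A).symm
      _ ≤ A * (Real.exp (lam * r) * Real.exp (-(lam * t))) :=
          mul_le_mul_of_nonneg_left h1 hA
      _ ≤ C * Real.exp (-(lam * t)) := by
          have h2 : A * Real.exp (lam * r) ≤ C :=
            mul_le_mul_of_nonneg_left (le_max_right _ _) hA
          have := Real.exp_pos (-(lam * t))
          nlinarith
  have hpt' : ∀ t : ℝ, g t ≤ C * Real.exp (-(lam * t)) := by
    intro t
    rcases le_total t r with ht | ht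
    · exact hpt t ht
    · calc g t ≤ A * H * Real.exp (-(lam * t)) := htail t ht
        _ ≤ C * Real.exp (-(lam * t)) := by
            have h2 : A * H ≤ C := mul_le_mul_of_nonneg_left (le_max_left _ _) hA
            have := (Real.exp_pos (-(lam * t))).le
            exact mul_le_mul_of_nonneg_right h2 this
  have hgint : IntegrableOn (fun t => t ^ 2 * g t) (Set.Ioi (0:ℝ)) := by
    apply Integrable.mono' (hbase.const_mul C)
    · exact ((measurable_id.pow_const 2).mul hgm).aestronglyMeasurable
    · filter_upwards [ae_restrict_mem measurableSet_Ioi] with t ht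
      rw [Real.norm_of_nonneg (mul_nonneg (sq_nonneg t) (hg0 t))]
      calc t ^ 2 * g t ≤ t ^ 2 * (C * Real.exp (-(lam * t))) :=
            mul_le_mul_of_nonneg_left (hpt' t) (sq_nonneg t)
        _ = C * (t ^ 2 * Real.exp (-(lam * t))) := by ring
  refine ⟨hgint, ?_⟩
  have hsplit : ∫ t in Set.Ioi (0:ℝ), t ^ 2 * g t
      = (∫ t in Set.Ioc (0:ℝ) r, t ^ 2 * g t) + ∫ t in Set.Ioi r, t ^ 2 * g t := by
    rw [← setIntegral_union (Set.Ioc_disjoint_Ioi le_rfl) measurableSet_Ioi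
      (hgint.mono_set Set.Ioc_subset_Ioi_self)
      (hgint.mono_set (Set.Ioi_subset_Ioi hr.le)),
      Set.Ioc_union_Ioi_eq_Ioi hr.le]
  have hb1 : ∫ t in Set.Ioc (0:ℝ) r, t ^ 2 * g t ≤ A * (r ^ 3 / 3) := by
    have h1 : ∫ t in Set.Ioc (0:ℝ) r, t ^ 2 * g t ≤ ∫ t in Set.Ioc (0:ℝ) r, t ^ 2 * A :=
      setIntegral_mono_on (hgint.mono_set Set.Ioc_subset_Ioi_self)
        (((continuous_pow 2).mul continuous_const).integrableOn_Ioc)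
        measurableSet_Ioc (fun t _ => mul_le_mul_of_nonneg_left (hbd t) (sq_nonneg t))
    have h2 : ∫ t in Set.Ioc (0:ℝ) r, t ^ 2 * A = A * (r ^ 3 / 3) := by
      rw [integral_mul_const, ← intervalIntegral.integral_of_le hr.le,
        integral_pow]
      norm_num
      ring
    linarith
  have hb2 : ∫ t in Set.Ioi r, t ^ 2 * g t ≤ A * (H * (2 / lam ^ 3)) := by
    have h1 : ∫ t in Set.Ioi r, t ^ 2 * g t
        ≤ ∫ t in Set.Ioi r, A * H * (t ^ 2 * Real.exp (-(lam * t))) := by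
      refine setIntegral_mono_on (hgint.mono_set (Set.Ioi_subset_Ioi hr.le))
        (IntegrableOn.mono_set (s := Set.Ioi r) (hbase.const_mul (A * H)) (Set.Ioi_subset_Ioi hr.le))
        measurableSet_Ioi (fun t ht => ?_)
      calc t ^ 2 * g t ≤ t ^ 2 * (A * H * Real.exp (-(lam * t))) :=
            mul_le_mul_of_nonneg_left (htail t ht.le) (sq_nonneg t)
        _ = A * H * (t ^ 2 * Real.exp (-(lam * t))) := by ring
    have h2 : ∫ t in Set.Ioi r, A * H * (t ^ 2 * Real.exp (-(lam * t)))
        ≤ A * H * (2 / lam ^ 3) := by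
      rw [integral_const_mul]
      refine mul_le_mul_of_nonneg_left ?_ (mul_nonneg hA hH)
      rw [← hval]
      refine setIntegral_mono_set hbase ?_
        (HasSubset.Subset.eventuallyLE (Set.Ioi_subset_Ioi hr.le))
      filter_upwards with t
      positivity
    calc ∫ t in Set.Ioi r, t ^ 2 * g t ≤ A * H * (2 / lam ^ 3) := le_trans h1 h2
      _ = A * (H * (2 / lam ^ 3)) := by ring
  rw [hsplit]
  have : A * (r ^ 3 / 3) + A * (H * (2 / lam ^ 3)) = A * (r ^ 3 / 3 + H * (2 / lam ^ 3)) := by ring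
  linarith

lemma pre_add (a : ℝ) : (fun t : ℝ => a + t) ⁻¹' Set.Ioi a = Set.Ioi 0 := by ext t; simp

lemma pre_sub (a : ℝ) : (fun t : ℝ => a - t) ⁻¹' Set.Iic a = Set.Ici 0 := by ext t; simp

lemma mp_add (a : ℝ) : MeasurePreserving (fun t : ℝ => a + t) volume volume :=
  measurePreserving_add_left volume a

lemma mp_sub (a : ℝ) : MeasurePreserving (fun t : ℝ => a - t) volume volume :=
  Measure.measurePreserving_sub_left volume a

lemma emb_add (a : ℝ) : MeasurableEmbedding (fun t : ℝ => a + t) :=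
  (MeasurableEquiv.addLeft a).measurableEmbedding

lemma emb_sub (a : ℝ) : MeasurableEmbedding (fun t : ℝ => a - t) :=
  (MeasurableEquiv.subLeft a).measurableEmbedding

lemma intOn_Ioi_shift {F : ℝ → ℝ} {a : ℝ}
    (h : IntegrableOn (fun t => F (a + t)) (Set.Ioi (0:ℝ))) :
    IntegrableOn F (Set.Ioi a) := by
  refine ((mp_add a).integrableOn_comp_preimage (emb_add a)).mp ?_
  rw [pre_add a]
  exact h

lemma intOn_Iic_shift {F : ℝ → ℝ} {a : ℝ}
    (h : IntegrableOn (fun t => F (a - t)) (Set.Ioi (0:ℝ))) :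
    IntegrableOn F (Set.Iic a) := by
  refine ((mp_sub a).integrableOn_comp_preimage (emb_sub a)).mp ?_
  rw [pre_sub a]
  exact (integrableOn_Ici_iff_integrableOn_Ioi).mpr h

lemma setInt_Ioi_shift (F : ℝ → ℝ) (a : ℝ) :
    ∫ x in Set.Ioi a, F x = ∫ t in Set.Ioi (0:ℝ), F (a + t) := by
  rw [← (mp_add a).setIntegral_preimage_emb (emb_add a) F (Set.Ioi a), pre_add a]

lemma setInt_Iic_shift (F : ℝ → ℝ) (a : ℝ) :
    ∫ x in Set.Iic a, F x = ∫ t in Set.Ioi (0:ℝ), F (a - t) := by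
  rw [← (mp_sub a).setIntegral_preimage_emb (emb_sub a) F (Set.Iic a), pre_sub a,
    integral_Ici_eq_integral_Ioi]

/-- Let `μ = Z⁻¹ e^{-V} dx` be a centered probability measure on `ℝ`, `V`
attaining its minimum at `a`, and `V` `β`-superlinear with constants `c_β > 0`, `h_β ≥ 0`
relative to `R₊(β), R₋(β) > 0` and `R(β) = max(R₊, R₋)`.  Then
`R₊² ∨ R₋² ≥ (1/2) Var_μ(x) e^{-β} (1/3 + (e^{h_β}/c_β)(1 + 2/c_β + 2/c_β²))⁻¹`. -/
theorem superlinear_radius_lower_bound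
    (V : ℝ → ℝ) (hVm : Measurable V) (a : ℝ) (hmin : ∀ x, V a ≤ V x)
    (hint : Integrable fun x => Real.exp (-V x))
    (Z : ℝ) (hZ : Z = ∫ x, Real.exp (-V x))
    (μ : Measure ℝ)
    (hμ : μ = volume.withDensity fun x => ENNReal.ofReal (Real.exp (-V x) / Z))
    (hcent : ∫ x, x ∂μ = 0)
    (β c h Rp Rm : ℝ) (hβ : 0 < β) (hc : 0 < c) (hh : 0 ≤ h)
    (hRp : 0 < Rp) (hRm : 0 < Rm)
    (hlevp : ∀ u, 0 ≤ u → u ≤ Rp → V (a + u) - V a ≤ β)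
    (hlevm : ∀ u, 0 ≤ u → u ≤ Rm → V (a - u) - V a ≤ β)
    (hsupp : ∀ t, Rp ≤ t → (c / max Rp Rm) * t - h ≤ V (a + t) - V a)
    (hsupm : ∀ t, Rm ≤ t → (c / max Rp Rm) * t - h ≤ V (a - t) - V a) :
    (1 / 2) * ((∫ x, x ^ 2 ∂μ) - (∫ x, x ∂μ) ^ 2) * Real.exp (-β) *
        (1 / 3 + (Real.exp h / c) * (1 + 2 / c + 2 / c ^ 2))⁻¹ ≤
      max (Rp ^ 2) (Rm ^ 2) := by
  set R := max Rp Rm with hRdef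
  have hR0 : (0:ℝ) < R := lt_of_lt_of_le hRp (le_max_left _ _)
  set lam := c / R with hlamdef
  have hlam : 0 < lam := div_pos hc hR0
  set A := Real.exp (-V a) with hAdef
  have hA : 0 < A := Real.exp_pos _
  set H := Real.exp h with hHdef
  have hH : 0 < H := Real.exp_pos _
  have hH1 : 1 ≤ H := by rw [hHdef]; exact Real.one_le_exp hh
  have hEm : Measurable fun x => Real.exp (-V x) := Real.measurable_exp.comp hVm.neg
  -- the two one-sided profiles
  have hgpm : Measurable fun t : ℝ => Real.exp (-V (a + t)) :=
    hEm.comp (measurable_const.add measurable_id)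
  have hgmm : Measurable fun t : ℝ => Real.exp (-V (a - t)) :=
    hEm.comp (measurable_const.sub measurable_id)
  have hbdp : ∀ t, Real.exp (-V (a + t)) ≤ A :=
    fun t => Real.exp_le_exp.mpr (neg_le_neg (hmin _))
  have hbdm : ∀ t, Real.exp (-V (a - t)) ≤ A :=
    fun t => Real.exp_le_exp.mpr (neg_le_neg (hmin _))
  have htailp : ∀ t, Rp ≤ t → Real.exp (-V (a + t)) ≤ A * H * Real.exp (-(lam * t)) := by
    intro t ht
    have h1 := hsupp t ht
    rw [hAdef, hHdef, ← Real.exp_add, ← Real.exp_add]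
    exact Real.exp_le_exp.mpr (by linarith)
  have htailm : ∀ t, Rm ≤ t → Real.exp (-V (a - t)) ≤ A * H * Real.exp (-(lam * t)) := by
    intro t ht
    have h1 := hsupm t ht
    rw [hAdef, hHdef, ← Real.exp_add, ← Real.exp_add]
    exact Real.exp_le_exp.mpr (by linarith)
  obtain ⟨hIp, hVp⟩ := tail_aux hgpm (fun t => (Real.exp_pos _).le) hRp hlam hA.le hH.le hbdp htailp
  obtain ⟨hIm, hVm'⟩ := tail_aux hgmm (fun t => (Real.exp_pos _).le) hRm hlam hA.le hH.le hbdm htailm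
  set F := fun x : ℝ => (x - a) ^ 2 * Real.exp (-V x) with hFdef
  have hFp : (fun t : ℝ => F (a + t)) = fun t => t ^ 2 * Real.exp (-V (a + t)) := by
    funext t; rw [hFdef]; simp
  have hFm2 : (fun t : ℝ => F (a - t)) = fun t => t ^ 2 * Real.exp (-V (a - t)) := by
    funext t; rw [hFdef]
    have h1 : a - t - a = -t := by ring
    simp only [h1, neg_sq]
  have hFIoi : IntegrableOn F (Set.Ioi a) := intOn_Ioi_shift (by rw [hFp]; exact hIp)
  have hFIic : IntegrableOn F (Set.Iic a) := intOn_Iic_shift (by rw [hFm2]; exact hIm)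
  have hFint : Integrable F := by
    rw [← integrableOn_univ, ← Set.Iic_union_Ioi (a := a)]
    exact hFIic.union hFIoi
  have hN : ∫ x, F x ≤ 2 * A * R ^ 3 * (1 / 3 + 2 * H / c ^ 3) := by
    have e1 : ∫ x in Set.Iic a, F x ≤ A * (Rm ^ 3 / 3 + H * (2 / lam ^ 3)) := by
      rw [setInt_Iic_shift F a, show (fun t : ℝ => F (a - t)) = _ from hFm2] at *
      exact hVm'
    have e2 : ∫ x in Set.Ioi a, F x ≤ A * (Rp ^ 3 / 3 + H * (2 / lam ^ 3)) := by
      rw [setInt_Ioi_shift F a, show (fun t : ℝ => F (a + t)) = _ from hFp] at *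
      exact hVp
    have e3 : 2 / lam ^ 3 = 2 * R ^ 3 / c ^ 3 := by
      rw [hlamdef]; field_simp
    have hRp3 : Rp ^ 3 ≤ R ^ 3 := pow_le_pow_left₀ hRp.le (le_max_left _ _) 3
    have hRm3 : Rm ^ 3 ≤ R ^ 3 := pow_le_pow_left₀ hRm.le (le_max_right _ _) 3
    rw [← intervalIntegral.integral_Iic_add_Ioi hFIic hFIoi]
    rw [e3] at e1 e2
    have hc3 : 0 < c ^ 3 := pow_pos hc 3
    have key : A * (Rm ^ 3 / 3 + H * (2 * R ^ 3 / c ^ 3))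
        + A * (Rp ^ 3 / 3 + H * (2 * R ^ 3 / c ^ 3))
        ≤ 2 * A * R ^ 3 * (1 / 3 + 2 * H / c ^ 3) := by
      have : 2 * A * R ^ 3 * (1 / 3 + 2 * H / c ^ 3)
          - (A * (Rm ^ 3 / 3 + H * (2 * R ^ 3 / c ^ 3))
            + A * (Rp ^ 3 / 3 + H * (2 * R ^ 3 / c ^ 3)))
          = A * (R ^ 3 - Rm ^ 3) / 3 + A * (R ^ 3 - Rp ^ 3) / 3 := by field_simp; ring
      nlinarith [mul_nonneg hA.le (sub_nonneg.mpr hRm3), mul_nonneg hA.le (sub_nonneg.mpr hRp3)]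
    linarith
  -- lower bound on Z
  have hZlb : R * (A * Real.exp (-β)) ≤ Z := by
    have hbase : ∀ b r : ℝ, 0 < r →
        (∀ x ∈ Set.Ioc b (b + r), A * Real.exp (-β) ≤ Real.exp (-V x)) →
        r * (A * Real.exp (-β)) ≤ Z := by
      intro b r hr hle
      have h2 : ∫ x in Set.Ioc b (b + r), (A * Real.exp (-β))
          ≤ ∫ x in Set.Ioc b (b + r), Real.exp (-V x) :=
        setIntegral_mono_on (integrableOn_const measure_Ioc_lt_top.ne)
          hint.integrableOn measurableSet_Ioc hle
      have h3 : ∫ x in Set.Ioc b (b + r), (A * Real.exp (-β)) = r * (A * Real.exp (-β)) := by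
        rw [setIntegral_const, Real.volume_real_Ioc_of_le (by linarith), show b + r - b = r by ring,
          smul_eq_mul]
      have h4 : ∫ x in Set.Ioc b (b + r), Real.exp (-V x) ≤ Z := by
        rw [hZ]
        exact setIntegral_le_integral hint
          (Filter.Eventually.of_forall fun x => (Real.exp_pos _).le)
      linarith
    rcases max_choice Rp Rm with hmax | hmax
    · rw [hRdef, hmax]
      apply hbase a Rp hRp
      intro x hx
      rw [hAdef, ← Real.exp_add]
      apply Real.exp_le_exp.mpr
      have h2 := hlevp (x - a) (by linarith [hx.1]) (by linarith [hx.2])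
      have h3 : a + (x - a) = x := by ring
      rw [h3] at h2
      linarith
    · rw [hRdef, hmax]
      apply hbase (a - Rm) Rm hRm
      intro x hx
      rw [hAdef, ← Real.exp_add]
      apply Real.exp_le_exp.mpr
      have h2 := hlevm (a - x) (by linarith [hx.2]) (by linarith [hx.1])
      have h3 : a - (a - x) = x := by ring
      rw [h3] at h2
      linarith
  have hZpos : 0 < Z := lt_of_lt_of_le (by positivity) hZlb
  -- transfer to μ
  have hρm : Measurable fun x => Real.exp (-V x) / Z := hEm.div_const Z
  set nn : ℝ → NNReal := fun x => Real.toNNReal (Real.exp (-V x) / Z) with hnn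
  have hnnm : Measurable nn := hρm.real_toNNReal
  have hμ' : μ = volume.withDensity fun x => ((nn x : NNReal) : ENNReal) := by rw [hμ]; rfl
  have hsmul : ∀ (g : ℝ → ℝ) (x : ℝ), nn x • g x = (Real.exp (-V x) / Z) * g x := by
    intro g x
    rw [hnn]
    simp only [NNReal.smul_def, Real.coe_toNNReal _ (by positivity : (0:ℝ) ≤ Real.exp (-V x) / Z), smul_eq_mul]
  have hIntIff : ∀ g : ℝ → ℝ,
      Integrable g μ ↔ Integrable (fun x => (Real.exp (-V x) / Z) * g x) volume := by
    intro g
    rw [hμ', integrable_withDensity_iff_integrable_smul hnnm]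
    exact integrable_congr (Filter.Eventually.of_forall fun x => hsmul g x)
  have hIntEq : ∀ g : ℝ → ℝ, ∫ x, g x ∂μ = ∫ x, (Real.exp (-V x) / Z) * g x := by
    intro g
    rw [hμ', integral_withDensity_eq_integral_smul hnnm]
    exact integral_congr_ae (Filter.Eventually.of_forall fun x => hsmul g x)
  -- integrability of moments
  have hG2vol : Integrable (fun x : ℝ => (Real.exp (-V x) / Z) * (x - a) ^ 2) := by
    have e : (fun x : ℝ => (Real.exp (-V x) / Z) * (x - a) ^ 2) = fun x => Z⁻¹ * F x := by
      funext x; rw [hFdef]; ring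
    rw [e]
    exact hFint.const_mul _
  have hx2vol : Integrable (fun x : ℝ => (Real.exp (-V x) / Z) * x ^ 2) := by
    have hmaj : Integrable (fun x : ℝ => Z⁻¹ * (2 * F x + 2 * a ^ 2 * Real.exp (-V x))) :=
      ((hFint.const_mul 2).add (hint.const_mul (2 * a ^ 2))).const_mul Z⁻¹
    apply Integrable.mono' hmaj
    · exact (hρm.mul ((measurable_id.pow_const 2))).aestronglyMeasurable
    · filter_upwards with x
      have h1 : 0 ≤ Real.exp (-V x) / Z := by positivity
      rw [Real.norm_of_nonneg (mul_nonneg h1 (sq_nonneg x)), hFdef]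
      have h2 : x ^ 2 ≤ 2 * (x - a) ^ 2 + 2 * a ^ 2 := by nlinarith [sq_nonneg (x - 2 * a)]
      have h3 : 0 < Z⁻¹ := inv_pos.mpr hZpos
      have h4 : 0 < Real.exp (-V x) := Real.exp_pos _
      have e : Real.exp (-V x) / Z = Z⁻¹ * Real.exp (-V x) := by ring
      rw [e]
      nlinarith [mul_le_mul_of_nonneg_left h2 (mul_nonneg h3.le h4.le)]
  have hx1vol : Integrable (fun x : ℝ => (Real.exp (-V x) / Z) * x) := by
    have hmaj : Integrable (fun x : ℝ =>
        (Real.exp (-V x) / Z) * x ^ 2 + Real.exp (-V x) / Z) :=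
      hx2vol.add (hint.div_const Z)
    apply Integrable.mono' hmaj
    · exact (hρm.mul measurable_id).aestronglyMeasurable
    · filter_upwards with x
      have h1 : 0 ≤ Real.exp (-V x) / Z := by positivity
      rw [norm_mul, Real.norm_of_nonneg h1, Real.norm_eq_abs]
      have h2 : |x| ≤ x ^ 2 + 1 := by
        rcases abs_cases x with ⟨he, _⟩ | ⟨he, _⟩ <;> nlinarith [sq_nonneg (x - 1), sq_nonneg (x + 1)]
      nlinarith [mul_le_mul_of_nonneg_left h2 h1]
  have h1μ : Integrable (fun _ : ℝ => (1:ℝ)) μ := by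
    rw [hIntIff]
    simpa using hint.div_const Z
  have hx2μ : Integrable (fun x : ℝ => x ^ 2) μ := (hIntIff _).mpr hx2vol
  have hxμ : Integrable (fun x : ℝ => x) μ := (hIntIff _).mpr hx1vol
  have hG2μ : Integrable (fun x : ℝ => (x - a) ^ 2) μ := (hIntIff _).mpr hG2vol
  -- comparison of second moments
  have hone : 0 ≤ ∫ x, (1:ℝ) ∂μ := integral_nonneg fun _ => zero_le_one
  have hcomp : ∫ x, x ^ 2 ∂μ ≤ ∫ x, (x - a) ^ 2 ∂μ := by
    have key : ∫ x, ((x - a) ^ 2 - x ^ 2) ∂μ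
        = a ^ 2 * ∫ x, (1:ℝ) ∂μ - 2 * a * ∫ x, x ∂μ := by
      have e : (fun x : ℝ => (x - a) ^ 2 - x ^ 2) = fun x => a ^ 2 * 1 - 2 * a * x := by
        funext x; ring
      rw [e, integral_sub (h1μ.const_mul (a ^ 2)) (hxμ.const_mul (2 * a)),
        integral_const_mul, integral_const_mul]
    have hsub : ∫ x, ((x - a) ^ 2 - x ^ 2) ∂μ
        = ∫ x, (x - a) ^ 2 ∂μ - ∫ x, x ^ 2 ∂μ := integral_sub hG2μ hx2μ
    rw [hsub, hcent] at key
    nlinarith [sq_nonneg a]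
  have hval2 : ∫ x, (x - a) ^ 2 ∂μ = (∫ x, F x) / Z := by
    rw [hIntEq]
    have e : (fun x : ℝ => (Real.exp (-V x) / Z) * (x - a) ^ 2) = fun x => F x * Z⁻¹ := by
      funext x; rw [hFdef]; ring
    rw [e, integral_mul_const, div_eq_mul_inv]
  have hImu : ∫ x, x ^ 2 ∂μ ≤ 2 * R ^ 2 * Real.exp β * (1 / 3 + 2 * H / c ^ 3) := by
    have hexpb : Real.exp (-β) * Real.exp β = 1 := by
      rw [← Real.exp_add]; simp
    have hT : ∫ x, F x ≤ (2 * R ^ 2 * Real.exp β * (1 / 3 + 2 * H / c ^ 3)) * Z := by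
      have h5 : 0 ≤ 2 * R ^ 2 * Real.exp β * (1 / 3 + 2 * H / c ^ 3) := by positivity
      calc ∫ x, F x ≤ 2 * A * R ^ 3 * (1 / 3 + 2 * H / c ^ 3) := hN
        _ = (2 * R ^ 2 * Real.exp β * (1 / 3 + 2 * H / c ^ 3)) * (R * (A * Real.exp (-β))) := by
            rw [show (2 * R ^ 2 * Real.exp β * (1 / 3 + 2 * H / c ^ 3)) * (R * (A * Real.exp (-β)))
              = 2 * A * R ^ 3 * (1 / 3 + 2 * H / c ^ 3) * (Real.exp (-β) * Real.exp β) by ring,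
              hexpb, mul_one]
        _ ≤ (2 * R ^ 2 * Real.exp β * (1 / 3 + 2 * H / c ^ 3)) * Z :=
            mul_le_mul_of_nonneg_left hZlb h5
    calc ∫ x, x ^ 2 ∂μ ≤ ∫ x, (x - a) ^ 2 ∂μ := hcomp
      _ = (∫ x, F x) / Z := hval2
      _ ≤ 2 * R ^ 2 * Real.exp β * (1 / 3 + 2 * H / c ^ 3) := (div_le_iff₀ hZpos).mpr hT
  -- final arithmetic
  rw [hcent]
  set K := 1 / 3 + H / c * (1 + 2 / c + 2 / c ^ 2) with hK
  have hKpos : 0 < K := by rw [hK]; positivity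
  have hKK : 1 / 3 + 2 * H / c ^ 3 ≤ K := by
    have e : H / c * (1 + 2 / c + 2 / c ^ 2) - 2 * H / c ^ 3 = H / c + 2 * H / c ^ 2 := by
      field_simp; ring
    have h1 : 0 ≤ H / c + 2 * H / c ^ 2 := by positivity
    rw [hK]; linarith
  have hmax2 : max (Rp ^ 2) (Rm ^ 2) = R ^ 2 := by
    rcases le_total Rp Rm with hle | hle
    · rw [hRdef, max_eq_right hle, max_eq_right (pow_le_pow_left₀ hRp.le hle 2)]
    · rw [hRdef, max_eq_left hle, max_eq_left (pow_le_pow_left₀ hRm.le hle 2)]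
  rw [hmax2]
  have hIK : (∫ x, x ^ 2 ∂μ) * Real.exp (-β) ≤ 2 * R ^ 2 * K := by
    have hKK2 : 2 * R ^ 2 * (1 / 3 + 2 * H / c ^ 3) ≤ 2 * R ^ 2 * K :=
      mul_le_mul_of_nonneg_left hKK (by positivity)
    calc (∫ x, x ^ 2 ∂μ) * Real.exp (-β)
        ≤ (2 * R ^ 2 * Real.exp β * (1 / 3 + 2 * H / c ^ 3)) * Real.exp (-β) :=
          mul_le_mul_of_nonneg_right hImu (Real.exp_pos _).le
      _ = 2 * R ^ 2 * (1 / 3 + 2 * H / c ^ 3) * (Real.exp (-β) * Real.exp β) := by ring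
      _ = 2 * R ^ 2 * (1 / 3 + 2 * H / c ^ 3) := by rw [← Real.exp_add]; simp
      _ ≤ 2 * R ^ 2 * K := hKK2
  have hfin := mul_le_mul_of_nonneg_right hIK (by positivity : (0:ℝ) ≤ 1 / 2 * K⁻¹)
  have hKinv : K * K⁻¹ = 1 := mul_inv_cancel₀ hKpos.ne'
  calc 1 / 2 * ((∫ x, x ^ 2 ∂μ) - 0 ^ 2) * Real.exp (-β) * K⁻¹
      = (∫ x, x ^ 2 ∂μ) * Real.exp (-β) * (1 / 2 * K⁻¹) := by ring
    _ ≤ 2 * R ^ 2 * K * (1 / 2 * K⁻¹) := hfin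
    _ = R ^ 2 * (K * K⁻¹) := by ring
    _ = R ^ 2 := by rw [hKinv, mul_one]
end

section
/- Let μ(dx) = Z^{-1} e^{-V(x)} dx be a probability measure on ℝ with ∫ x dμ = 0, where V attains its minimum at a ∈ ℝ. Suppose V is β-superlinear with constants c_β > 0 and h_β ≥ 0, associated with the numbers R₊(β), R₋(β) > 0 and R(β) = max(R₊(β), R₋(β)). Then the location a of the minimum satisfies a² ≤ 4 · Var_μ(x) · e^{β} · ( 1 + 2 e^{h_β}/c_β ). -/
open MeasureTheory Set Filter

lemma expIoi_intOn (m b : ℝ) (hm : 0 < m) :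
    IntegrableOn (fun x : ℝ => Real.exp (-(m * x))) (Set.Ioi b) := by
  simpa [neg_mul] using exp_neg_integrableOn_Ioi b hm

lemma expIoi_int (m b : ℝ) (hm : 0 < m) :
    ∫ x in Set.Ioi b, Real.exp (-(m * x)) = Real.exp (-(m * b)) / m := by
  have hderiv : ∀ x ∈ Set.Ici b,
      HasDerivAt (fun x : ℝ => -Real.exp (-(m * x)) / m) (Real.exp (-(m * x))) x := by
    intro x _
    have h1 : HasDerivAt (fun x : ℝ => -(m * x)) (-m) x := by
      simpa using ((hasDerivAt_id x).const_mul m).fun_neg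
    have h2 := (h1.exp.fun_neg.div_const m)
    refine h2.congr_deriv ?_
    field_simp
  have htend : Tendsto (fun x : ℝ => -Real.exp (-(m * x)) / m) atTop (nhds 0) := by
    have h1 : Tendsto (fun x : ℝ => -(m * x)) atTop atBot := by
      apply tendsto_neg_atTop_atBot.comp
      exact tendsto_id.const_mul_atTop hm
    have h2 : Tendsto (fun x : ℝ => Real.exp (-(m * x))) atTop (nhds 0) :=
      Real.tendsto_exp_atBot.comp h1
    simpa using (h2.neg).div_const m
  have := integral_Ioi_of_hasDerivAt_of_tendsto' hderiv (expIoi_intOn m b hm) htend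
  rw [this]
  field_simp
  ring

lemma expIic_intOn (m b : ℝ) (hm : 0 < m) :
    IntegrableOn (fun x : ℝ => Real.exp (m * x)) (Set.Iic b) := by
  have A : MeasurableEmbedding (fun x : ℝ => -x) :=
    (Homeomorph.neg ℝ).isClosedEmbedding.measurableEmbedding
  have hmeas : (volume : Measure ℝ).restrict (Set.Iic b)
      = Measure.map (fun x : ℝ => -x) ((volume : Measure ℝ).restrict (Set.Ici (-b))) := by
    conv_lhs => rw [← Measure.map_neg_eq_self (volume : Measure ℝ)]
    rw [Measure.restrict_map A.measurable measurableSet_Iic]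
    congr 1
    ext x
    simp
  rw [IntegrableOn, hmeas, A.integrable_map_iff]
  have : ((fun x : ℝ => Real.exp (m * x)) ∘ fun x : ℝ => -x)
      = fun x : ℝ => Real.exp (-(m * x)) := by
    funext x; simp [Function.comp]
  rw [this]
  exact (integrableOn_Ici_iff_integrableOn_Ioi (by simp)).2 (expIoi_intOn m (-b) hm)

lemma expIic_int (m b : ℝ) (hm : 0 < m) :
    ∫ x in Set.Iic b, Real.exp (m * x) = Real.exp (m * b) / m := by
  have h2 := integral_comp_neg_Iic b (fun y : ℝ => Real.exp (-(m * y)))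
  rw [expIoi_int m (-b) hm] at h2
  simp only [mul_neg, neg_neg] at h2
  rw [h2]

lemma sq_mul_exp_neg_le (s t : ℝ) (hs : 0 < s) (ht : 0 ≤ t) :
    t ^ 2 * Real.exp (-(s * t)) ≤ 4 / s ^ 2 := by
  have h1 : 1 + s * t / 2 ≤ Real.exp (s * t / 2) := by
    have := Real.add_one_le_exp (s * t / 2); linarith
  have h2 : (s * t) ^ 2 / 4 ≤ Real.exp (s * t) := by
    have hsq : (1 + s * t / 2) * (1 + s * t / 2)
        ≤ Real.exp (s * t / 2) * Real.exp (s * t / 2) := by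
      have h0 : (0:ℝ) ≤ 1 + s * t / 2 := by positivity
      exact mul_le_mul h1 h1 h0 (Real.exp_pos _).le
    rw [← Real.exp_add] at hsq
    have : s * t / 2 + s * t / 2 = s * t := by ring
    rw [this] at hsq
    nlinarith [mul_nonneg (mul_nonneg hs.le ht) (mul_nonneg hs.le ht)]
  rw [Real.exp_neg, ← div_eq_mul_inv, div_le_div_iff₀ (Real.exp_pos _) (by positivity)]
  nlinarith [Real.exp_pos (s * t)]

lemma exp_abs_integrable (s A : ℝ) (hs : 0 < s) :
    Integrable (fun x : ℝ => Real.exp (-(s * |x - A|))) := by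
  rw [← integrableOn_univ, ← Set.Iic_union_Ioi (a := A)]
  apply IntegrableOn.union
  · have base : IntegrableOn (fun x : ℝ => Real.exp (-(s * A)) * Real.exp (s * x))
        (Set.Iic A) := (expIic_intOn s A hs).const_mul _
    apply base.congr_fun _ measurableSet_Iic
    intro x hx
    show Real.exp (-(s * A)) * Real.exp (s * x) = _
    rw [← Real.exp_add]
    congr 1
    rw [abs_of_nonpos (by simpa using hx)]
    ring
  · have base : IntegrableOn (fun x : ℝ => Real.exp (s * A) * Real.exp (-(s * x)))
        (Set.Ioi A) := (expIoi_intOn s A hs).const_mul _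
    apply base.congr_fun _ measurableSet_Ioi
    intro x hx
    show Real.exp (s * A) * Real.exp (-(s * x)) = _
    rw [← Real.exp_add]
    congr 1
    rw [abs_of_nonneg (by simp at hx; linarith)]
    ring

lemma sq_exp_decay (k a x : ℝ) (hk : 0 < k) :
    x ^ 2 * Real.exp (-(k * |x - a|)) ≤
      (2 * a ^ 2 + 8 / (k / 2) ^ 2) * Real.exp (-(k / 2 * |x - a|)) := by
  set t := |x - a| with ht
  have htn : 0 ≤ t := abs_nonneg _
  have hk2 : (0:ℝ) < k / 2 := by positivity
  have hsplit : Real.exp (-(k * t)) = Real.exp (-(k / 2 * t)) * Real.exp (-(k / 2 * t)) := by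
    rw [← Real.exp_add]; ring_nf
  have hEpos := Real.exp_pos (-(k / 2 * t))
  have hEle : Real.exp (-(k / 2 * t)) ≤ 1 := by
    rw [Real.exp_le_one_iff]
    nlinarith
  have h3 : (x - a) ^ 2 * Real.exp (-(k / 2 * t)) ≤ 4 / (k / 2) ^ 2 := by
    have h := sq_mul_exp_neg_le (k / 2) t hk2 htn
    rw [ht, sq_abs] at h
    exact h
  have h4 : x ^ 2 ≤ 2 * a ^ 2 + 2 * (x - a) ^ 2 := by nlinarith [sq_nonneg (x - 2 * a)]
  rw [hsplit]
  calc x ^ 2 * (Real.exp (-(k / 2 * t)) * Real.exp (-(k / 2 * t)))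
      ≤ (2 * a ^ 2 + 2 * (x - a) ^ 2) *
        (Real.exp (-(k / 2 * t)) * Real.exp (-(k / 2 * t))) := by
        apply mul_le_mul_of_nonneg_right h4 (by positivity)
    _ = 2 * a ^ 2 * Real.exp (-(k / 2 * t)) * Real.exp (-(k / 2 * t))
        + 2 * ((x - a) ^ 2 * Real.exp (-(k / 2 * t))) * Real.exp (-(k / 2 * t)) := by ring
    _ ≤ 2 * a ^ 2 * 1 * Real.exp (-(k / 2 * t))
        + 2 * (4 / (k / 2) ^ 2) * Real.exp (-(k / 2 * t)) := by
        apply add_le_add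
        · apply mul_le_mul_of_nonneg_right _ hEpos.le
          nlinarith [sq_nonneg a]
        · apply mul_le_mul_of_nonneg_right _ hEpos.le
          nlinarith
    _ = (2 * a ^ 2 + 8 / (k / 2) ^ 2) * Real.exp (-(k / 2 * t)) := by ring

/-- Let `μ = Z⁻¹ e^{-V} dx` be a centered probability measure on `ℝ`, `V`
attaining its minimum at `a`, and `V` `β`-superlinear with constants `c_β > 0`, `h_β ≥ 0`
relative to `R₊(β), R₋(β) > 0` and `R(β) = max(R₊, R₋)`.  Then the location of the minimum
satisfies `a² ≤ 4 Var_μ(x) e^β (1 + 2 e^{h_β}/c_β)`. -/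
theorem superlinear_argmin_bound
    (V : ℝ → ℝ) (hVm : Measurable V) (a : ℝ) (hmin : ∀ x, V a ≤ V x)
    (hint : Integrable fun x => Real.exp (-V x))
    (Z : ℝ) (hZ : Z = ∫ x, Real.exp (-V x))
    (μ : Measure ℝ)
    (hμ : μ = volume.withDensity fun x => ENNReal.ofReal (Real.exp (-V x) / Z))
    (hcent : ∫ x, x ∂μ = 0)
    (β c h Rp Rm : ℝ) (hβ : 0 < β) (hc : 0 < c) (hh : 0 ≤ h)
    (hRp : 0 < Rp) (hRm : 0 < Rm)
    (hlevp : ∀ u, 0 ≤ u → u ≤ Rp → V (a + u) - V a ≤ β)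
    (hlevm : ∀ u, 0 ≤ u → u ≤ Rm → V (a - u) - V a ≤ β)
    (hsupp : ∀ t, Rp ≤ t → (c / max Rp Rm) * t - h ≤ V (a + t) - V a)
    (hsupm : ∀ t, Rm ≤ t → (c / max Rp Rm) * t - h ≤ V (a - t) - V a) :
    a ^ 2 ≤
      4 * ((∫ x, x ^ 2 ∂μ) - (∫ x, x ∂μ) ^ 2) * Real.exp β * (1 + 2 * Real.exp h / c) := by
  have hR : 0 < max Rp Rm := lt_of_lt_of_le hRp (le_max_left _ _)
  set R := max Rp Rm with hRdef
  set k := c / R with hkdef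
  have hk : 0 < k := div_pos hc hR
  have hkR : k * R = c := div_mul_cancel₀ c (ne_of_gt hR)
  set Va := V a with hVadef
  have hIle : a - Rm ≤ a + Rp := by linarith
  -- the level-set bound on the middle interval
  have hmidV : ∀ x ∈ Icc (a - Rm) (a + Rp), V x ≤ Va + β := by
    intro x hx
    rcases le_total a x with hax | hax
    · have h1 := hlevp (x - a) (by linarith) (by simp at hx; linarith [hx.2])
      have h2 : a + (x - a) = x := by ring
      rw [h2] at h1
      linarith
    · have h1 := hlevm (a - x) (by linarith) (by simp at hx; linarith [hx.1])
      have h2 : a - (a - x) = x := by ring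
      rw [h2] at h1
      linarith
  -- Z lower bound
  have hZlb : (Rp + Rm) * Real.exp (-(Va + β)) ≤ Z := by
    have h1 : ∫ _x in Icc (a - Rm) (a + Rp), Real.exp (-(Va + β))
        ≤ ∫ x in Icc (a - Rm) (a + Rp), Real.exp (-V x) := by
      apply setIntegral_mono_on
          (integrableOn_const (by rw [Real.volume_Icc]; exact ENNReal.ofReal_ne_top))
          hint.integrableOn measurableSet_Icc
      intro x hx
      exact Real.exp_le_exp.2 (neg_le_neg (hmidV x hx))
    have h2 : ∫ x in Icc (a - Rm) (a + Rp), Real.exp (-V x) ≤ ∫ x, Real.exp (-V x) :=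
      setIntegral_le_integral hint (Filter.Eventually.of_forall fun x => (Real.exp_pos _).le)
    have h3 : ∫ _x in Icc (a - Rm) (a + Rp), Real.exp (-(Va + β))
        = (Rp + Rm) * Real.exp (-(Va + β)) := by
      rw [setIntegral_const, Real.volume_real_Icc_of_le hIle, smul_eq_mul]
      congr 1
      ring
    rw [hZ, ← h3]
    exact le_trans h1 h2
  have hZpos : 0 < Z := lt_of_lt_of_le (by positivity) hZlb
  -- pointwise exponential upper bound on the density
  have hVlow : ∀ x, Va + k * |x - a| - (h + c) ≤ V x := by
    intro x
    rcases le_total a x with hax | hax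
    · rw [abs_of_nonneg (by linarith)]
      rcases le_total (x - a) Rp with hcase | hcase
      · have hkt : k * (x - a) ≤ c := by
          calc k * (x - a) ≤ k * R := by
                apply mul_le_mul_of_nonneg_left _ hk.le
                calc x - a ≤ Rp := hcase
                  _ ≤ R := le_max_left _ _
            _ = c := hkR
        have := hmin x
        linarith
      · have h1 := hsupp (x - a) hcase
        have h2 : a + (x - a) = x := by ring
        rw [h2] at h1
        linarith
    · rw [abs_of_nonpos (by linarith)]
      rcases le_total (a - x) Rm with hcase | hcase
      · have hkt : k * (a - x) ≤ c := by
          calc k * (a - x) ≤ k * R := by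
                apply mul_le_mul_of_nonneg_left _ hk.le
                calc a - x ≤ Rm := hcase
                  _ ≤ R := le_max_right _ _
            _ = c := hkR
        have := hmin x
        linarith
      · have h1 := hsupm (a - x) hcase
        have h2 : a - (a - x) = x := by ring
        rw [h2] at h1
        linarith
  have hEub : ∀ x, Real.exp (-V x) ≤ Real.exp (h + c - Va) * Real.exp (-(k * |x - a|)) := by
    intro x
    rw [← Real.exp_add]
    apply Real.exp_le_exp.2
    have := hVlow x
    linarith
  -- integrability of x^2 * exp (-V x)
  have Hx2E : Integrable (fun x => x ^ 2 * Real.exp (-V x)) := by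
    have hk2 : (0:ℝ) < k / 2 := by positivity
    have hmaj : Integrable (fun x : ℝ =>
        Real.exp (h + c - Va) * (2 * a ^ 2 + 8 / (k / 2) ^ 2) *
          Real.exp (-(k / 2 * |x - a|))) := by
      have := (exp_abs_integrable (k / 2) a hk2).const_mul
        (Real.exp (h + c - Va) * (2 * a ^ 2 + 8 / (k / 2) ^ 2))
      simpa [mul_assoc] using this
    apply hmaj.mono
    · exact ((measurable_id.pow_const 2).mul (hVm.neg.exp)).aestronglyMeasurable
    · apply Filter.Eventually.of_forall
      intro x
      rw [Real.norm_eq_abs, Real.norm_eq_abs, abs_of_nonneg (by positivity),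
        abs_of_nonneg (by positivity)]
      calc x ^ 2 * Real.exp (-V x)
          ≤ x ^ 2 * (Real.exp (h + c - Va) * Real.exp (-(k * |x - a|))) :=
            mul_le_mul_of_nonneg_left (hEub x) (sq_nonneg x)
        _ = Real.exp (h + c - Va) * (x ^ 2 * Real.exp (-(k * |x - a|))) := by ring
        _ ≤ Real.exp (h + c - Va) *
            ((2 * a ^ 2 + 8 / (k / 2) ^ 2) * Real.exp (-(k / 2 * |x - a|))) := by
            exact mul_le_mul_of_nonneg_left (sq_exp_decay k a x hk) (Real.exp_pos _).le
        _ = Real.exp (h + c - Va) * (2 * a ^ 2 + 8 / (k / 2) ^ 2) *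
            Real.exp (-(k / 2 * |x - a|)) := by ring
  -- Z upper bound
  have hZub : Z ≤ Real.exp (-Va) * ((Rp + Rm) + 2 * Real.exp h * R / c) := by
    have hsplit1 : (∫ x in Iic (a - Rm), Real.exp (-V x))
        + ∫ x in Ioi (a - Rm), Real.exp (-V x) = ∫ x, Real.exp (-V x) :=
      intervalIntegral.integral_Iic_add_Ioi hint.integrableOn hint.integrableOn
    have hsplit2 : ∫ x in Ioi (a - Rm), Real.exp (-V x)
        = (∫ x in Ioc (a - Rm) (a + Rp), Real.exp (-V x))
          + ∫ x in Ioi (a + Rp), Real.exp (-V x) := by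
      rw [← Set.Ioc_union_Ioi_eq_Ioi hIle]
      exact setIntegral_union (Set.Ioc_disjoint_Ioi le_rfl) measurableSet_Ioi
        hint.integrableOn hint.integrableOn
    have hleft : ∫ x in Iic (a - Rm), Real.exp (-V x) ≤ Real.exp (h - Va) / k := by
      have hpt : ∀ x ∈ Iic (a - Rm),
          Real.exp (-V x) ≤ Real.exp (h - Va - k * a) * Real.exp (k * x) := by
        intro x hx
        rw [← Real.exp_add]
        apply Real.exp_le_exp.2
        have h1 := hsupm (a - x) (by simp at hx; linarith)
        have h2 : a - (a - x) = x := by ring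
        rw [h2] at h1
        nlinarith [h1]
      have h1 : ∫ x in Iic (a - Rm), Real.exp (-V x)
          ≤ ∫ x in Iic (a - Rm), Real.exp (h - Va - k * a) * Real.exp (k * x) :=
        setIntegral_mono_on hint.integrableOn
          ((expIic_intOn k (a - Rm) hk).const_mul _) measurableSet_Iic hpt
      have h2 : ∫ x in Iic (a - Rm), Real.exp (h - Va - k * a) * Real.exp (k * x)
          = Real.exp (h - Va - k * Rm) / k := by
        rw [integral_const_mul, expIic_int k (a - Rm) hk, ← mul_div_assoc, ← Real.exp_add]
        congr 2
        ring
      have h3 : Real.exp (h - Va - k * Rm) ≤ Real.exp (h - Va) := by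
        apply Real.exp_le_exp.2
        nlinarith [mul_nonneg hk.le hRm.le]
      calc ∫ x in Iic (a - Rm), Real.exp (-V x)
          ≤ Real.exp (h - Va - k * Rm) / k := h1.trans (le_of_eq h2)
        _ ≤ Real.exp (h - Va) / k := by gcongr
    have hright : ∫ x in Ioi (a + Rp), Real.exp (-V x) ≤ Real.exp (h - Va) / k := by
      have hpt : ∀ x ∈ Ioi (a + Rp),
          Real.exp (-V x) ≤ Real.exp (h - Va + k * a) * Real.exp (-(k * x)) := by
        intro x hx
        rw [← Real.exp_add]
        apply Real.exp_le_exp.2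
        have h1 := hsupp (x - a) (by simp at hx; linarith)
        have h2 : a + (x - a) = x := by ring
        rw [h2] at h1
        nlinarith [h1]
      have h1 : ∫ x in Ioi (a + Rp), Real.exp (-V x)
          ≤ ∫ x in Ioi (a + Rp), Real.exp (h - Va + k * a) * Real.exp (-(k * x)) :=
        setIntegral_mono_on hint.integrableOn
          ((expIoi_intOn k (a + Rp) hk).const_mul _) measurableSet_Ioi hpt
      have h2 : ∫ x in Ioi (a + Rp), Real.exp (h - Va + k * a) * Real.exp (-(k * x))
          = Real.exp (h - Va - k * Rp) / k := by
        rw [integral_const_mul, expIoi_int k (a + Rp) hk, ← mul_div_assoc, ← Real.exp_add]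
        congr 2
        ring
      have h3 : Real.exp (h - Va - k * Rp) ≤ Real.exp (h - Va) := by
        apply Real.exp_le_exp.2
        nlinarith [mul_nonneg hk.le hRp.le]
      calc ∫ x in Ioi (a + Rp), Real.exp (-V x)
          ≤ Real.exp (h - Va - k * Rp) / k := h1.trans (le_of_eq h2)
        _ ≤ Real.exp (h - Va) / k := by gcongr
    have hmid : ∫ x in Ioc (a - Rm) (a + Rp), Real.exp (-V x)
        ≤ (Rp + Rm) * Real.exp (-Va) := by
      have h1 : ∫ x in Ioc (a - Rm) (a + Rp), Real.exp (-V x)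
          ≤ ∫ _x in Ioc (a - Rm) (a + Rp), Real.exp (-Va) := by
        apply setIntegral_mono_on hint.integrableOn
            (integrableOn_const (by rw [Real.volume_Ioc]; exact ENNReal.ofReal_ne_top))
            measurableSet_Ioc
        intro x _
        exact Real.exp_le_exp.2 (neg_le_neg (hmin x))
      have h2 : ∫ _x in Ioc (a - Rm) (a + Rp), Real.exp (-Va)
          = (Rp + Rm) * Real.exp (-Va) := by
        rw [setIntegral_const, Real.volume_real_Ioc_of_le hIle, smul_eq_mul]
        congr 1
        ring
      exact h1.trans (le_of_eq h2)
    have hfin : Real.exp (h - Va) / k = Real.exp (-Va) * Real.exp h * R / c := by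
      rw [hkdef, show h - Va = -Va + h by ring, Real.exp_add]
      field_simp
    calc Z = (∫ x in Iic (a - Rm), Real.exp (-V x))
          + ((∫ x in Ioc (a - Rm) (a + Rp), Real.exp (-V x))
            + ∫ x in Ioi (a + Rp), Real.exp (-V x)) := by rw [← hsplit2, hsplit1, hZ]
      _ ≤ Real.exp (h - Va) / k + ((Rp + Rm) * Real.exp (-Va) + Real.exp (h - Va) / k) := by
          exact add_le_add hleft (add_le_add hmid hright)
      _ = Real.exp (-Va) * ((Rp + Rm) + 2 * Real.exp h * R / c) := by
          rw [hfin]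
          ring
  -- lower bound for the second moment over the middle interval
  have hNlb : Real.exp (-(Va + β)) * ((Rp + Rm) * a ^ 2 / 4)
      ≤ ∫ x in Icc (a - Rm) (a + Rp), x ^ 2 * Real.exp (-V x) := by
    have h1 : ∫ x in Icc (a - Rm) (a + Rp), Real.exp (-(Va + β)) * x ^ 2
        ≤ ∫ x in Icc (a - Rm) (a + Rp), x ^ 2 * Real.exp (-V x) := by
      apply setIntegral_mono_on
          ((continuous_const.mul (continuous_pow 2)).integrableOn_Icc)
          Hx2E.integrableOn measurableSet_Icc
      intro x hx
      rw [mul_comm]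
      exact mul_le_mul_of_nonneg_left
        (Real.exp_le_exp.2 (neg_le_neg (hmidV x hx))) (sq_nonneg x)
    have h2 : ∫ x in Icc (a - Rm) (a + Rp), Real.exp (-(Va + β)) * x ^ 2
        = Real.exp (-(Va + β)) * (((a + Rp) ^ 3 - (a - Rm) ^ 3) / 3) := by
      rw [integral_const_mul, MeasureTheory.integral_Icc_eq_integral_Ioc,
        ← intervalIntegral.integral_of_le hIle, integral_pow]
      norm_num
    have h3 : Real.exp (-(Va + β)) * ((Rp + Rm) * a ^ 2 / 4)
        ≤ Real.exp (-(Va + β)) * (((a + Rp) ^ 3 - (a - Rm) ^ 3) / 3) := by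
      apply mul_le_mul_of_nonneg_left _ (Real.exp_pos _).le
      nlinarith [mul_nonneg hRp.le (sq_nonneg (3 * a + 2 * Rp)),
        mul_nonneg hRm.le (sq_nonneg (3 * a - 2 * Rm))]
    calc Real.exp (-(Va + β)) * ((Rp + Rm) * a ^ 2 / 4)
        ≤ Real.exp (-(Va + β)) * (((a + Rp) ^ 3 - (a - Rm) ^ 3) / 3) := h3
      _ = ∫ x in Icc (a - Rm) (a + Rp), Real.exp (-(Va + β)) * x ^ 2 := h2.symm
      _ ≤ _ := h1
  have hMN : ∫ x in Icc (a - Rm) (a + Rp), x ^ 2 * Real.exp (-V x)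
      ≤ ∫ x, x ^ 2 * Real.exp (-V x) :=
    setIntegral_le_integral Hx2E (Filter.Eventually.of_forall fun x => by positivity)
  -- the second moment of μ
  have hmom : ∫ x, x ^ 2 ∂μ = (∫ x, x ^ 2 * Real.exp (-V x)) / Z := by
    rw [hμ]
    have hd : Measurable fun x => (Real.exp (-V x) / Z).toNNReal :=
      (hVm.neg.exp.div_const Z).real_toNNReal
    have hdens : (fun x => ENNReal.ofReal (Real.exp (-V x) / Z))
        = fun x => ((Real.exp (-V x) / Z).toNNReal : ENNReal) := rfl
    rw [hdens, integral_withDensity_eq_integral_smul hd, ← integral_div]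
    congr 1
    funext x
    rw [NNReal.smul_def, Real.coe_toNNReal _ (div_nonneg (Real.exp_pos _).le hZpos.le),
      smul_eq_mul]
    ring
  -- final algebra
  rw [hmom, hcent]
  have hs1 : (0:ℝ) < 1 + 2 * Real.exp h / c := by positivity
  have key : a ^ 2 * Z
      ≤ 4 * (∫ x, x ^ 2 * Real.exp (-V x)) * Real.exp β * (1 + 2 * Real.exp h / c) := by
    have hee : Real.exp (-(Va + β)) * Real.exp β = Real.exp (-Va) := by
      rw [← Real.exp_add]
      congr 1
      ring
    calc a ^ 2 * Z
        ≤ a ^ 2 * (Real.exp (-Va) * ((Rp + Rm) + 2 * Real.exp h * R / c)) :=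
          mul_le_mul_of_nonneg_left hZub (sq_nonneg a)
      _ ≤ a ^ 2 * (Real.exp (-Va) * ((Rp + Rm) + 2 * Real.exp h * (Rp + Rm) / c)) := by
          gcongr
          exact max_le (by linarith) (by linarith)
      _ = 4 * (Real.exp (-(Va + β)) * ((Rp + Rm) * a ^ 2 / 4)) * Real.exp β
            * (1 + 2 * Real.exp h / c) := by
          rw [← hee]
          ring
      _ ≤ 4 * (∫ x in Icc (a - Rm) (a + Rp), x ^ 2 * Real.exp (-V x)) * Real.exp β
            * (1 + 2 * Real.exp h / c) := by gcongr
      _ ≤ 4 * (∫ x, x ^ 2 * Real.exp (-V x)) * Real.exp β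
            * (1 + 2 * Real.exp h / c) := by gcongr
  have hz2 : (0:ℝ) ^ 2 = 0 := by norm_num
  rw [hz2, sub_zero]
  have hre : 4 * ((∫ x, x ^ 2 * Real.exp (-V x)) / Z) * Real.exp β * (1 + 2 * Real.exp h / c)
      = 4 * (∫ x, x ^ 2 * Real.exp (-V x)) * Real.exp β * (1 + 2 * Real.exp h / c) / Z := by
    ring
  rw [hre, le_div_iff₀ hZpos]
  exact key
end

section
/- Let dμ = e^{-V(x)} dx be a probability measure on ℝ satisfying a Poincaré inequality with constant C_P (and admitting a sequence (V_n) of C¹ functions with e^{-V_n} → e^{-V} weakly in σ(L¹, L^∞)). Then for every interval (a,b) ⊆ ℝ with μ((a,b)) > 0, denoting by μ_{(a,b)} the normalized restriction of μ to (a,b), one has for every bounded smooth f: Var_{μ_{(a,b)}}(f) ≤ ( 8 C_P / sup_{u ∈ (a,b)} ( μ((−∞, u]) ∧ μ([u, +∞)) ) ) ∫ (f')² dμ_{(a,b)}. In particular, if a ≤ m_μ ≤ b for some median m_μ of μ, then μ_{(a,b)} satisfies a Poincaré inequality with a constant not larger than 16 C_P. -/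
set_option maxHeartbeats 1000000
open MeasureTheory Filter
open scoped Topology

/-- Bounded measurable functions are integrable w.r.t. finite measures. -/
lemma RPI.integrable_of_bdd {m : Measure ℝ} [IsFiniteMeasure m] {g : ℝ → ℝ} {C : ℝ}
    (hg : AEStronglyMeasurable g m) (h : ∀ᵐ x ∂m, |g x| ≤ C) : Integrable g m :=
  Integrable.mono' (integrable_const C) hg (by simpa [Real.norm_eq_abs] using h)

/-- Cauchy–Schwarz: `(∫ g)² ≤ m(univ) ∫ g²`. -/
lemma RPI.sq_integral_le (m : Measure ℝ) [IsFiniteMeasure m] (g : ℝ → ℝ)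
    (hg : Integrable g m) (hg2 : Integrable (fun x => (g x) ^ 2) m) :
    (∫ x, g x ∂m) ^ 2 ≤ (m Set.univ).toReal * ∫ x, (g x) ^ 2 ∂m := by
  set M := (m Set.univ).toReal with hM
  set I := ∫ x, g x ∂m with hI
  have hM0 : 0 ≤ M := ENNReal.toReal_nonneg
  rcases eq_or_lt_of_le hM0 with h0 | hpos
  · have h1 : m Set.univ = 0 := by
      rcases (ENNReal.toReal_eq_zero_iff _).mp h0.symm with h | h
      · exact h
      · exact absurd h (measure_ne_top m _)
    have hm : m = 0 := Measure.measure_univ_eq_zero.mp h1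
    have hz : I = 0 := by rw [hI, hm]; simp
    rw [hz, ← h0]; simp
  · have h1 : 0 ≤ ∫ x, (M * g x - I) ^ 2 ∂m := integral_nonneg fun x => sq_nonneg _
    have e1 : Integrable (fun x => M ^ 2 * (g x) ^ 2 - 2 * M * I * g x) m := by
      exact (hg2.const_mul _).sub (hg.const_mul _)
    have h2 : ∫ x, (M * g x - I) ^ 2 ∂m
        = M ^ 2 * ∫ x, (g x) ^ 2 ∂m - 2 * M * I * I + I ^ 2 * M := by
      have he : (fun x => (M * g x - I) ^ 2)
          = fun x => (M ^ 2 * (g x) ^ 2 - 2 * M * I * g x) + I ^ 2 := by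
        funext x; ring
      rw [he, integral_add e1 (integrable_const _),
        integral_sub (hg2.const_mul _) (hg.const_mul _), integral_const_mul, integral_const_mul,
        integral_const, smul_eq_mul, Measure.real, ← hM, ← hI]
      ring
    nlinarith [h1, h2, hpos]

/-- Poincaré for functions vanishing on a set `s`. -/
lemma RPI.vanish_poincare (μ : Measure ℝ) (hprob : IsProbabilityMeasure μ) (CP : ℝ)
    (hPoinc : ∀ f : ℝ → ℝ, ContDiff ℝ (⊤ : ℕ∞) f → HasCompactSupport f →
      (∫ x, (f x) ^ 2 ∂μ) - (∫ x, f x ∂μ) ^ 2 ≤ CP * ∫ x, (deriv f x) ^ 2 ∂μ)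
    (s : Set ℝ) (hs : MeasurableSet s)
    (H : ℝ → ℝ) (hH : ContDiff ℝ (⊤ : ℕ∞) H) (hHc : HasCompactSupport H)
    (hH0 : ∀ x ∈ s, H x = 0) :
    (μ s).toReal * ∫ x, (H x) ^ 2 ∂μ ≤ CP * ∫ x, (deriv H x) ^ 2 ∂μ := by
  haveI := hprob
  have hHcont : Continuous H := hH.continuous
  have hint : Integrable H μ := hHcont.integrable_of_hasCompactSupport hHc
  have hint2 : Integrable (fun x => (H x) ^ 2) μ := by
    have : Continuous (fun x => (H x) ^ 2) := by fun_prop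
    exact this.integrable_of_hasCompactSupport (hHc.mul_left (f' := H))
  -- ∫ H = ∫_{sᶜ} H
  have hzero : ∫ x in s, H x ∂μ = 0 := by
    rw [setIntegral_congr_fun hs (g := fun _ => (0:ℝ)) (fun x hx => hH0 x hx)]
    simp
  have hsplit : ∫ x, H x ∂μ = ∫ x in sᶜ, H x ∂μ := by
    rw [← integral_add_compl hs hint, hzero, zero_add]
  -- Cauchy–Schwarz on sᶜ
  have hCS : (∫ x in sᶜ, H x ∂μ) ^ 2 ≤ (μ sᶜ).toReal * ∫ x in sᶜ, (H x) ^ 2 ∂μ := by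
    have := RPI.sq_integral_le (μ.restrict sᶜ) H hint.restrict hint2.restrict
    simpa [Measure.restrict_apply_univ] using this
  have hle : ∫ x in sᶜ, (H x) ^ 2 ∂μ ≤ ∫ x, (H x) ^ 2 ∂μ :=
    setIntegral_le_integral hint2 (ae_of_all μ fun x => sq_nonneg _)
  have hμs1 : (μ sᶜ).toReal = 1 - (μ s).toReal := by
    rw [measure_compl hs (measure_ne_top μ s)]
    rw [measure_univ]
    rw [ENNReal.toReal_sub_of_le prob_le_one (by simp)]
    simp
  have hsle : (μ s).toReal ≤ 1 := by
    have := prob_le_one (μ := μ) (s := s)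
    exact ENNReal.toReal_le_of_le_ofReal one_pos.le (by simpa using this)
  have hs0 : 0 ≤ (μ s).toReal := ENNReal.toReal_nonneg
  have hI2 : 0 ≤ ∫ x, (H x) ^ 2 ∂μ := integral_nonneg fun x => sq_nonneg _
  have hP := hPoinc H hH hHc
  have hmean : (∫ x, H x ∂μ) ^ 2 ≤ (1 - (μ s).toReal) * ∫ x, (H x) ^ 2 ∂μ := by
    rw [hsplit, ← hμs1]
    calc (∫ x in sᶜ, H x ∂μ) ^ 2 ≤ (μ sᶜ).toReal * ∫ x in sᶜ, (H x) ^ 2 ∂μ := hCS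
    _ ≤ (μ sᶜ).toReal * ∫ x, (H x) ^ 2 ∂μ := by
        exact mul_le_mul_of_nonneg_left hle ENNReal.toReal_nonneg
  nlinarith [hmean, hP]

lemma RPI.core (μ : Measure ℝ) (hprob : IsProbabilityMeasure μ) (CP : ℝ)
    (hPoinc : ∀ f : ℝ → ℝ, ContDiff ℝ (⊤ : ℕ∞) f → HasCompactSupport f →
      (∫ x, (f x) ^ 2 ∂μ) - (∫ x, f x ∂μ) ^ 2 ≤ CP * ∫ x, (deriv f x) ^ 2 ∂μ)
    (α β u : ℝ) (hαβ : α < β) (hu : u = α ∨ u = β)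
    (s : Set ℝ) (hsm : MeasurableSet s)
    (hcase : (u = α ∧ s = Set.Iic u) ∨ (u = β ∧ s = Set.Ici u))
    (f : ℝ → ℝ) (hf : ContDiff ℝ (⊤ : ℕ∞) f) :
    (μ s).toReal * ∫ x in Set.Ioo α β, (f x - f u) ^ 2 ∂μ
      ≤ CP * ∫ x in Set.Ioo α β, (deriv f x) ^ 2 ∂μ := by
  haveI := hprob
  -- derivative of f
  have hf' : Continuous (deriv f) := ((contDiff_infty_iff_deriv.mp hf).2).continuous
  -- bound on |f'| on [α,β]
  obtain ⟨L, hL0, hL⟩ : ∃ L, 0 ≤ L ∧ ∀ x ∈ Set.Icc α β, |deriv f x| ≤ L := by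
    obtain ⟨x0, _, hx0⟩ := (isCompact_Icc (a := α) (b := β)).exists_isMaxOn
      (Set.nonempty_Icc.mpr hαβ.le) (continuous_abs.comp hf').continuousOn
    exact ⟨|deriv f x0|, abs_nonneg _, fun x hx => hx0 hx⟩
  -- the bumps ψ n
  set r : ℝ := (β - α) / 2 with hr
  set c : ℝ := (α + β) / 2 with hc
  have hrpos : 0 < r := by simp [hr]; linarith
  have hball : Metric.ball c r = Set.Ioo α β := by
    rw [Real.ball_eq_Ioo]; congr 1 <;> simp [hc, hr] <;> ring
  set bump : ℕ → ContDiffBump c := fun n =>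
    ⟨r - r / (n + 2), r, by
      have : r / (n + 2) < r := by
        apply div_lt_self hrpos; exact_mod_cast by norm_num
      linarith, by
      have : 0 < r / (n + 2) := by positivity
      linarith⟩ with hbump
  set ψ : ℕ → ℝ → ℝ := fun n x => bump n x with hψ
  have hψ0 : ∀ n x, 0 ≤ ψ n x := fun n x => (bump n).nonneg
  have hψ1 : ∀ n x, ψ n x ≤ 1 := fun n x => (bump n).le_one
  have hψsupp : ∀ n x, x ∉ Set.Ioo α β → ψ n x = 0 := by
    intro n x hx
    apply Function.notMem_support.mp
    rw [hψ]
    have hsup := (bump n).support_eq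
    have hro : (bump n).rOut = r := rfl
    rw [hro, hball] at hsup
    rw [hsup]
    exact hx
  have hψsmooth : ∀ n, ContDiff ℝ (⊤ : ℕ∞) (ψ n) := fun n => (bump n).contDiff
  have hψtend : ∀ x ∈ Set.Ioo α β, ∀ᶠ n in atTop, ψ n x = 1 := by
    intro x hx
    rw [← hball] at hx
    have hd : dist x c < r := by rwa [Metric.mem_ball] at hx
    obtain ⟨N, hN⟩ := exists_nat_gt (r / (r - dist x c))
    filter_upwards [eventually_ge_atTop N] with n hn
    apply (bump n).one_of_mem_closedBall
    rw [Metric.mem_closedBall]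
    have h2 : r / ((n : ℝ) + 2) ≤ r - dist x c := by
      rw [div_le_iff₀ (by positivity)]
      have hrd : 0 < r - dist x c := by linarith
      rw [← div_le_iff₀' hrd]
      calc r / (r - dist x c) ≤ N := hN.le
      _ ≤ (n : ℝ) := by exact_mod_cast hn
      _ ≤ (n : ℝ) + 2 := by linarith
    simp only [hbump]
    linarith
  -- cutoff bump
  set χb : ContDiffBump (0:ℝ) := ⟨1, 2, one_pos, one_lt_two⟩ with hχb
  have hχbdiff : Differentiable ℝ (⇑χb) := (contDiff_infty_iff_deriv.mp (χb.contDiff (n := ⊤))).1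
  obtain ⟨K, hK0, hK⟩ : ∃ K, 0 ≤ K ∧ ∀ x, |deriv (⇑χb) x| ≤ K := by
    have hcont : Continuous fun x => |deriv (⇑χb) x| :=
      continuous_abs.comp ((contDiff_infty_iff_deriv.mp (χb.contDiff (n := ⊤))).2).continuous
    obtain ⟨x0, hx0⟩ := hcont.exists_forall_ge_of_hasCompactSupport
      (χb.hasCompactSupport.deriv.abs)
    exact ⟨_, abs_nonneg _, hx0⟩
  set R : ℕ → ℝ := fun n => max |α| |β| + 1 + n with hR
  have hRpos : ∀ n, 0 < R n := by
    intro n; simp only [hR]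
    have : (0:ℝ) ≤ max |α| |β| := le_max_of_le_left (abs_nonneg _)
    have : (0:ℝ) ≤ (n:ℝ) := Nat.cast_nonneg n
    linarith
  have hR1 : ∀ n, 1 ≤ R n := by
    intro n; simp only [hR]
    have : (0:ℝ) ≤ max |α| |β| := le_max_of_le_left (abs_nonneg _)
    have : (0:ℝ) ≤ (n:ℝ) := Nat.cast_nonneg n
    linarith
  have hRicc : ∀ n, ∀ x ∈ Set.Icc α β, |x| < R n := by
    intro n x hx
    have h1 : |x| ≤ max |α| |β| := by
      rcases abs_cases x with ⟨h, _⟩ | ⟨h, _⟩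
      · refine le_max_of_le_right ?_
        rw [h]; exact le_trans hx.2 (le_abs_self β)
      · refine le_max_of_le_left ?_
        rw [h]; exact le_trans (neg_le_neg hx.1) (neg_le_abs α)
    have : (0:ℝ) ≤ (n:ℝ) := Nat.cast_nonneg n
    simp only [hR]; linarith
  have hRtend : Tendsto R atTop atTop := by
    apply tendsto_atTop_add_const_left
    exact tendsto_natCast_atTop_atTop
  set χ : ℕ → ℝ → ℝ := fun n x => χb (x / R n) with hχ
  have hχsmooth : ∀ n, ContDiff ℝ (⊤ : ℕ∞) (χ n) :=
    fun n => (χb.contDiff (n := ⊤)).comp (contDiff_id.div_const _)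
  have hχ0 : ∀ n x, 0 ≤ χ n x := fun n x => χb.nonneg
  have hχle1 : ∀ n x, χ n x ≤ 1 := fun n x => χb.le_one
  have hχ1 : ∀ n, ∀ x, |x| ≤ R n → χ n x = 1 := by
    intro n x hx
    apply χb.one_of_mem_closedBall
    rw [Metric.mem_closedBall, Real.dist_eq, sub_zero]
    have hin : (χb.rIn : ℝ) = 1 := rfl
    rw [hin, abs_div, abs_of_pos (hRpos n), div_le_one (hRpos n)]
    exact hx
  have hχsupp : ∀ n x, |x| > 2 * R n → χ n x = 0 := by
    intro n x hx
    apply Function.notMem_support.mp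
    intro hmem
    have : x / R n ∈ Function.support (⇑χb) := hmem
    rw [χb.support_eq] at this
    have hro : (χb.rOut : ℝ) = 2 := rfl
    rw [Metric.mem_ball, Real.dist_eq, sub_zero, hro, abs_div,
      abs_of_pos (hRpos n), div_lt_iff₀ (hRpos n)] at this
    linarith
  have hχcs : ∀ n, HasCompactSupport (χ n) := by
    intro n
    apply HasCompactSupport.intro (isCompact_Icc (a := -(2 * R n)) (b := 2 * R n))
    intro x hx
    apply hχsupp n
    rw [Set.mem_Icc, not_and_or] at hx
    rcases hx with h | h
    · push_neg at h; rw [abs_of_neg (by linarith [hRpos n] : x < 0)]; linarith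
    · push_neg at h
      rw [abs_of_pos (by linarith [hRpos n] : 0 < x)]; linarith
  have hχhd : ∀ n x, HasDerivAt (χ n) (deriv (⇑χb) (x / R n) * (R n)⁻¹) x := by
    intro n x
    have h1 : HasDerivAt (⇑χb) (deriv (⇑χb) (x / R n)) (x / R n) :=
      (hχbdiff (x / R n)).hasDerivAt
    have h2 : HasDerivAt (fun y : ℝ => y / R n) ((R n)⁻¹) x := by
      simpa using (hasDerivAt_id x).div_const (R n)
    have := h1.comp x h2; exact this
  have hχd : ∀ n x, deriv (χ n) x = deriv (⇑χb) (x / R n) * (R n)⁻¹ :=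
    fun n x => (hχhd n x).deriv
  have hχdbound : ∀ n x, |deriv (χ n) x| ≤ K * (R n)⁻¹ := by
    intro n x
    rw [hχd, abs_mul, abs_of_pos (inv_pos.mpr (hRpos n))]
    exact mul_le_mul_of_nonneg_right (hK _) (inv_pos.mpr (hRpos n)).le
  have hχdzero : ∀ n x, |x| < R n → deriv (χ n) x = 0 := by
    intro n x hx
    have hev : χ n =ᶠ[𝓝 x] fun _ => (1:ℝ) := by
      have hopen : Metric.ball (0:ℝ) (R n) ∈ 𝓝 x := by
        apply Metric.isOpen_ball.mem_nhds
        rw [Metric.mem_ball, Real.dist_eq, sub_zero]; exact hx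
      filter_upwards [hopen] with y hy
      rw [Metric.mem_ball, Real.dist_eq, sub_zero] at hy
      exact hχ1 n y hy.le
    rw [hev.deriv_eq, deriv_const]
  have huIcc : u ∈ Set.Icc α β := by
    rcases hu with h | h <;> rw [h] <;> simp [hαβ.le]
  -- approximating integrands
  set g : ℕ → ℝ → ℝ := fun n t => deriv f t * ψ n t with hg
  have hgcont : ∀ n, Continuous (g n) := fun n => hf'.mul (hψsmooth n).continuous
  have hgsmooth : ∀ n, ContDiff ℝ (⊤ : ℕ∞) (g n) :=
    fun n => ((contDiff_infty_iff_deriv.mp hf).2).mul (hψsmooth n)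
  have hgsupp : ∀ n t, t ∉ Set.Ioo α β → g n t = 0 := by
    intro n t ht; simp only [hg, hψsupp n t ht, mul_zero]
  have hgbound : ∀ n t, |g n t| ≤ L := by
    intro n t
    by_cases ht : t ∈ Set.Ioo α β
    · simp only [hg, abs_mul]
      calc |deriv f t| * |ψ n t| ≤ L * 1 := by
            apply mul_le_mul (hL t (Set.Ioo_subset_Icc_self ht)) _ (abs_nonneg _) hL0
            rw [abs_of_nonneg (hψ0 n t)]; exact hψ1 n t
      _ = L := mul_one L
    · rw [hgsupp n t ht]; simpa using hL0
  set h : ℕ → ℝ → ℝ := fun n x => ∫ t in u..x, g n t with hh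
  have hhd : ∀ n x, HasDerivAt (h n) (g n x) x := by
    intro n x
    exact intervalIntegral.integral_hasDerivAt_right
      ((hgcont n).intervalIntegrable _ _)
      ((hgcont n).stronglyMeasurable.stronglyMeasurableAtFilter)
      (hgcont n).continuousAt
  have hhsmooth : ∀ n, ContDiff ℝ (⊤ : ℕ∞) (h n) := by
    intro n
    rw [contDiff_infty_iff_deriv]
    constructor
    · exact fun x => (hhd n x).differentiableAt
    · have : deriv (h n) = g n := funext fun x => (hhd n x).deriv
      rw [this]; exact hgsmooth n
  have hhderiv : ∀ n, deriv (h n) = g n := fun n => funext fun x => (hhd n x).deriv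
  have hconstR : ∀ n x, β ≤ x → h n x = h n β := by
    intro n x hx
    have hadd := intervalIntegral.integral_add_adjacent_intervals
      (μ := volume) (a := u) (b := β) (c := x) ((hgcont n).intervalIntegrable _ _)
      ((hgcont n).intervalIntegrable _ _)
    have hzero : ∫ t in β..x, g n t = 0 := by
      rw [intervalIntegral.integral_congr (g := fun _ => (0:ℝ))]
      · simp
      · intro t ht
        rw [Set.uIcc_of_le hx] at ht
        apply hgsupp n t
        intro hmem
        exact absurd hmem.2 (not_lt.mpr ht.1)
    simp only [hh]
    rw [← hadd, hzero, add_zero]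
  have hconstL : ∀ n x, x ≤ α → h n x = h n α := by
    intro n x hx
    have hadd := intervalIntegral.integral_add_adjacent_intervals
      (μ := volume) (a := u) (b := α) (c := x) ((hgcont n).intervalIntegrable _ _)
      ((hgcont n).intervalIntegrable _ _)
    have hzero : ∫ t in α..x, g n t = 0 := by
      rw [intervalIntegral.integral_congr (g := fun _ => (0:ℝ))]
      · simp
      · intro t ht
        rw [Set.uIcc_of_ge hx] at ht
        apply hgsupp n t
        intro hmem
        exact absurd hmem.1 (not_lt.mpr ht.2)
    simp only [hh]
    rw [← hadd, hzero, add_zero]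
  have hboundIcc : ∀ n, ∀ x ∈ Set.Icc α β, |h n x| ≤ L * (β - α) := by
    intro n x hx
    have h1 : |∫ t in u..x, g n t| ≤ L * |x - u| := by
      have := intervalIntegral.norm_integral_le_of_norm_le_const
        (C := L) (f := g n) (a := u) (b := x)
        (fun t _ => by rw [Real.norm_eq_abs]; exact hgbound n t)
      rwa [Real.norm_eq_abs] at this
    refine le_trans h1 ?_
    apply mul_le_mul_of_nonneg_left _ hL0
    rw [abs_sub_le_iff]
    constructor <;> [skip; skip] <;>
      · have h2 := hx.1; have h3 := hx.2
        have h4 := huIcc.1; have h5 := huIcc.2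
        linarith
  have hbound : ∀ n x, |h n x| ≤ L * (β - α) := by
    intro n x
    rcases le_total x α with hx | hx
    · rw [hconstL n x hx]
      exact hboundIcc n α (by simp [hαβ.le])
    rcases le_total β x with hx2 | hx2
    · rw [hconstR n x hx2]
      exact hboundIcc n β (by simp [hαβ.le])
    · exact hboundIcc n x ⟨hx, hx2⟩
  have hvan : ∀ n, ∀ x ∈ s, h n x = 0 := by
    intro n x hx
    rcases hcase with ⟨hu', hs'⟩ | ⟨hu', hs'⟩
    · rw [hs', hu'] at hx
      rw [hconstL n x hx]
      show (∫ t in u..α, g n t) = 0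
      rw [hu', intervalIntegral.integral_same]
    · rw [hs', hu'] at hx
      rw [hconstR n x hx]
      show (∫ t in u..β, g n t) = 0
      rw [hu', intervalIntegral.integral_same]
  set H : ℕ → ℝ → ℝ := fun n x => h n x * χ n x with hH
  have hHsmooth : ∀ n, ContDiff ℝ (⊤ : ℕ∞) (H n) := fun n => (hhsmooth n).mul (hχsmooth n)
  have hHcs : ∀ n, HasCompactSupport (H n) := fun n => HasCompactSupport.mul_left (hχcs n)
  have hHvan : ∀ n, ∀ x ∈ s, H n x = 0 := by
    intro n x hx
    simp only [hH, hvan n x hx, zero_mul]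
  have hHd : ∀ n x, HasDerivAt (H n) (g n x * χ n x + h n x * deriv (χ n) x) x := by
    intro n x
    have := (hhd n x).mul (hχhd n x)
    rwa [← hχd n x] at this
  have hHderiv : ∀ n x, deriv (H n) x = g n x * χ n x + h n x * deriv (χ n) x :=
    fun n x => (hHd n x).deriv
  have hident : ∀ n x, (deriv (H n) x) ^ 2 = (g n x) ^ 2 + (h n x * deriv (χ n) x) ^ 2 := by
    intro n x
    by_cases hx : x ∈ Set.Ioo α β
    · have h1 : χ n x = 1 := (hχ1 n x (hRicc n x (Set.Ioo_subset_Icc_self hx)).le)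
      have h2 : deriv (χ n) x = 0 := hχdzero n x (hRicc n x (Set.Ioo_subset_Icc_self hx))
      rw [hHderiv, h1, h2]; ring
    · have h1 : g n x = 0 := hgsupp n x hx
      rw [hHderiv, h1]; ring
  have hχdcont : ∀ n, Continuous (deriv (χ n)) := by
    intro n
    have : deriv (χ n) = fun x => deriv (⇑χb) (x / R n) * (R n)⁻¹ := funext fun x => hχd n x
    rw [this]
    exact (((contDiff_infty_iff_deriv.mp (χb.contDiff (n := ⊤))).2).continuous.comp
      (continuous_id.div_const _)).mul continuous_const
  have intg2 : ∀ n, Integrable (fun x => (g n x) ^ 2) μ := by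
    intro n
    apply RPI.integrable_of_bdd (C := L ^ 2) ((hgcont n).pow 2).aestronglyMeasurable
    apply ae_of_all
    intro x
    rw [abs_of_nonneg (sq_nonneg _)]
    calc (g n x) ^ 2 = |g n x| ^ 2 := (sq_abs _).symm
    _ ≤ L ^ 2 := by
        apply pow_le_pow_left₀ (abs_nonneg _) (hgbound n x)
  have inthcont : ∀ n, Continuous (h n) := fun n =>
    continuous_iff_continuousAt.mpr (fun x => (hhd n x).continuousAt)
  have hba : (0:ℝ) ≤ β - α := by linarith
  have inthχ : ∀ n, Integrable (fun x => (h n x * deriv (χ n) x) ^ 2) μ := by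
    intro n
    have hcont : Continuous (fun x => (h n x * deriv (χ n) x) ^ 2) :=
      ((inthcont n).mul (hχdcont n)).pow 2
    apply RPI.integrable_of_bdd (C := (L * (β - α) * (K * (R n)⁻¹)) ^ 2)
      hcont.aestronglyMeasurable
    apply ae_of_all
    intro x
    rw [abs_of_nonneg (sq_nonneg _)]
    calc (h n x * deriv (χ n) x) ^ 2 = (|h n x| * |deriv (χ n) x|) ^ 2 := by
          rw [← abs_mul, sq_abs]
    _ ≤ (L * (β - α) * (K * (R n)⁻¹)) ^ 2 := by
        have h3 : |h n x| * |deriv (χ n) x| ≤ L * (β - α) * (K * (R n)⁻¹) :=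
          mul_le_mul (hbound n x) (hχdbound n x) (abs_nonneg _) (mul_nonneg hL0 hba)
        exact pow_le_pow_left₀ (mul_nonneg (abs_nonneg _) (abs_nonneg _)) h3 2
  have intH2 : ∀ n, Integrable (fun x => (H n x) ^ 2) μ := by
    intro n
    have hc : Continuous (fun x => (H n x) ^ 2) := ((hHsmooth n).continuous).pow 2
    apply hc.integrable_of_hasCompactSupport
    exact ((hHcs n).comp_left (g := fun y : ℝ => y ^ 2) (by simp))
  have hμint : ∀ n, ∫ x, (deriv (H n) x) ^ 2 ∂μ
      = (∫ x, (g n x) ^ 2 ∂μ) + ∫ x, (h n x * deriv (χ n) x) ^ 2 ∂μ := by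
    intro n
    rw [← integral_add (intg2 n) (inthχ n)]
    apply integral_congr_ae
    apply ae_of_all
    intro x
    exact hident n x
  have hkey : ∀ n, (μ s).toReal * ∫ x, (H n x) ^ 2 ∂μ
      ≤ CP * ((∫ x, (g n x) ^ 2 ∂μ) + ∫ x, (h n x * deriv (χ n) x) ^ 2 ∂μ) := by
    intro n
    rw [← hμint n]
    exact RPI.vanish_poincare μ hprob CP hPoinc s hsm (H n) (hHsmooth n) (hHcs n) (hHvan n)
  have hlow : ∀ n, ∫ x in Set.Ioo α β, (h n x) ^ 2 ∂μ ≤ ∫ x, (H n x) ^ 2 ∂μ := by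
    intro n
    have h1 : ∫ x in Set.Ioo α β, (h n x) ^ 2 ∂μ = ∫ x in Set.Ioo α β, (H n x) ^ 2 ∂μ := by
      apply setIntegral_congr_fun measurableSet_Ioo
      intro x hx
      have hone : χ n x = 1 := hχ1 n x (hRicc n x (Set.Ioo_subset_Icc_self hx)).le
      simp only [hH, hone, mul_one]
    rw [h1]
    exact setIntegral_le_integral (intH2 n) (ae_of_all μ fun x => sq_nonneg _)
  have hfdiff : Differentiable ℝ f := (contDiff_infty_iff_deriv.mp hf).1
  -- T1 : inner interval integrals converge
  have hT1 : Tendsto (fun n => ∫ x in Set.Ioo α β, (h n x) ^ 2 ∂μ) atTop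
      (𝓝 (∫ x in Set.Ioo α β, (f x - f u) ^ 2 ∂μ)) := by
    apply tendsto_integral_of_dominated_convergence (bound := fun _ => (L * (β - α)) ^ 2)
    · exact fun n => (((inthcont n).pow 2)).aestronglyMeasurable.restrict
    · exact integrable_const _
    · intro n
      apply ae_of_all
      intro x
      rw [Real.norm_eq_abs, abs_of_nonneg (sq_nonneg _), ← sq_abs]
      exact pow_le_pow_left₀ (abs_nonneg _) (hbound n x) 2
    · rw [ae_restrict_iff' measurableSet_Ioo]
      apply ae_of_all
      intro x hx
      have hroot : Tendsto (fun n => h n x) atTop (𝓝 (∫ t in u..x, deriv f t)) := by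
        apply intervalIntegral.tendsto_integral_filter_of_dominated_convergence
          (bound := fun _ => L)
        · exact Eventually.of_forall fun n => (hgcont n).aestronglyMeasurable.restrict
        · apply Eventually.of_forall
          intro n
          apply ae_of_all
          intro t
          intro ht
          rw [Real.norm_eq_abs]
          exact hgbound n t
        · exact intervalIntegrable_const
        · have hne : ∀ᵐ t : ℝ ∂volume, t ≠ β := by
            rw [ae_iff]
            simp only [not_not, Set.setOf_eq_eq_singleton]
            exact measure_singleton β
          filter_upwards [hne] with t htβ htmem
          have htIoo : t ∈ Set.Ioo α β := by
            rcases hu with h' | h'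
            · subst h'
              rw [Set.uIoc_of_le hx.1.le] at htmem
              exact ⟨htmem.1, lt_of_le_of_lt htmem.2 hx.2⟩
            · subst h'
              rw [Set.uIoc_of_ge hx.2.le] at htmem
              exact ⟨lt_trans hx.1 htmem.1, lt_of_le_of_ne htmem.2 htβ⟩
          have hev := hψtend t htIoo
          apply Tendsto.congr' _ (tendsto_const_nhds (x := deriv f t))
          filter_upwards [hev] with n hn
          simp only [hg, hn, mul_one]
      have heval : (∫ t in u..x, deriv f t) = f x - f u :=
        intervalIntegral.integral_deriv_eq_sub (fun t _ => hfdiff t)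
          (hf'.intervalIntegrable _ _)
      rw [heval] at hroot
      exact hroot.pow 2
  -- T2
  have hT2 : Tendsto (fun n => ∫ x, (g n x) ^ 2 ∂μ) atTop
      (𝓝 (∫ x in Set.Ioo α β, (deriv f x) ^ 2 ∂μ)) := by
    have htarget : ∫ x in Set.Ioo α β, (deriv f x) ^ 2 ∂μ
        = ∫ x, Set.indicator (Set.Ioo α β) (fun x => (deriv f x) ^ 2) x ∂μ :=
      (integral_indicator measurableSet_Ioo).symm
    rw [htarget]
    apply tendsto_integral_of_dominated_convergence
      (bound := Set.indicator (Set.Icc α β) (fun _ => L ^ 2))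
    · exact fun n => ((hgcont n).pow 2).aestronglyMeasurable
    · exact (integrable_const _).indicator measurableSet_Icc
    · intro n
      apply ae_of_all
      intro x
      rw [Real.norm_eq_abs, abs_of_nonneg (sq_nonneg _)]
      by_cases hx : x ∈ Set.Ioo α β
      · rw [Set.indicator_of_mem (Set.Ioo_subset_Icc_self hx)]
        rw [← sq_abs]
        exact pow_le_pow_left₀ (abs_nonneg _) (hgbound n x) 2
      · rw [hgsupp n x hx]
        simp only [ne_eq, zero_pow, OfNat.ofNat_ne_zero, not_false_eq_true]
        exact Set.indicator_nonneg (fun _ _ => sq_nonneg L) x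
    · apply ae_of_all
      intro x
      by_cases hx : x ∈ Set.Ioo α β
      · rw [Set.indicator_of_mem hx]
        have hev := hψtend x hx
        apply Tendsto.congr' _ (tendsto_const_nhds (x := (deriv f x) ^ 2))
        filter_upwards [hev] with n hn
        simp only [hg, hn, mul_one]
      · rw [Set.indicator_of_notMem hx]
        apply Tendsto.congr' _ (tendsto_const_nhds (x := (0:ℝ)))
        apply Eventually.of_forall
        intro n
        simp only [hgsupp n x hx]
        norm_num
  -- T3
  have hT3 : Tendsto (fun n => ∫ x, (h n x * deriv (χ n) x) ^ 2 ∂μ) atTop (𝓝 0) := by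
    apply squeeze_zero (g := fun n => (L * (β - α) * K) ^ 2 * ((R n)⁻¹) ^ 2)
    · exact fun n => integral_nonneg fun x => sq_nonneg _
    · intro n
      have hb : ∀ x, (h n x * deriv (χ n) x) ^ 2
          ≤ (L * (β - α) * K) ^ 2 * ((R n)⁻¹) ^ 2 := by
        intro x
        have h3 : |h n x| * |deriv (χ n) x| ≤ L * (β - α) * (K * (R n)⁻¹) :=
          mul_le_mul (hbound n x) (hχdbound n x) (abs_nonneg _) (mul_nonneg hL0 hba)
        have h4 : (h n x * deriv (χ n) x) ^ 2 ≤ (L * (β - α) * (K * (R n)⁻¹)) ^ 2 := by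
          rw [← sq_abs, abs_mul]
          exact pow_le_pow_left₀ (mul_nonneg (abs_nonneg _) (abs_nonneg _)) h3 2
        calc (h n x * deriv (χ n) x) ^ 2 ≤ (L * (β - α) * (K * (R n)⁻¹)) ^ 2 := h4
        _ = (L * (β - α) * K) ^ 2 * ((R n)⁻¹) ^ 2 := by ring
      calc ∫ x, (h n x * deriv (χ n) x) ^ 2 ∂μ
          ≤ ∫ _x, (L * (β - α) * K) ^ 2 * ((R n)⁻¹) ^ 2 ∂μ :=
            integral_mono (inthχ n) (integrable_const _) hb
      _ = (L * (β - α) * K) ^ 2 * ((R n)⁻¹) ^ 2 := by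
          rw [integral_const, probReal_univ]
          simp
    · have hinv : Tendsto (fun n => (R n)⁻¹) atTop (𝓝 0) :=
        hRtend.inv_tendsto_atTop
      have := (hinv.pow 2).const_mul ((L * (β - α) * K) ^ 2)
      simpa using this
  -- conclusion
  have hfinal : (μ s).toReal * ∫ x in Set.Ioo α β, (f x - f u) ^ 2 ∂μ
      ≤ CP * ∫ x in Set.Ioo α β, (deriv f x) ^ 2 ∂μ := by
    have hlhs : Tendsto (fun n => (μ s).toReal * ∫ x in Set.Ioo α β, (h n x) ^ 2 ∂μ) atTop
        (𝓝 ((μ s).toReal * ∫ x in Set.Ioo α β, (f x - f u) ^ 2 ∂μ)) :=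
      hT1.const_mul _
    have hrhs : Tendsto (fun n => CP * ((∫ x, (g n x) ^ 2 ∂μ)
        + ∫ x, (h n x * deriv (χ n) x) ^ 2 ∂μ)) atTop
        (𝓝 (CP * ∫ x in Set.Ioo α β, (deriv f x) ^ 2 ∂μ)) := by
      have := (hT2.add hT3).const_mul CP
      simpa using this
    apply le_of_tendsto_of_tendsto' hlhs hrhs
    intro n
    calc (μ s).toReal * ∫ x in Set.Ioo α β, (h n x) ^ 2 ∂μ
        ≤ (μ s).toReal * ∫ x, (H n x) ^ 2 ∂μ :=
          mul_le_mul_of_nonneg_left (hlow n) ENNReal.toReal_nonneg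
    _ ≤ _ := hkey n
  exact hfinal

/-- Let `μ = e^{-V} dx` be a probability measure on `ℝ` satisfying a
Poincaré inequality with constant `C_P` (with `C¹` approximations `V_n` of the potential).
For an interval `(a,b)` with `μ((a,b)) > 0`, the normalized restriction `μ_{(a,b)}` satisfies
`Var_{μ_{(a,b)}}(f) ≤ (8 C_P / sup_{u∈(a,b)} (μ((−∞,u]) ∧ μ([u,∞)))) ∫ (f')² dμ_{(a,b)}`
for every bounded smooth `f`; in particular if `(a,b)` contains a median of `μ`, then
`μ_{(a,b)}` satisfies a Poincaré inequality with constant at most `16 C_P`. -/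
theorem restricted_poincare_inequality
    (V : ℝ → ℝ) (hVm : Measurable V)
    (μ : Measure ℝ)
    (hμ : μ = volume.withDensity fun x => ENNReal.ofReal (Real.exp (-V x)))
    (hprob : IsProbabilityMeasure μ) (CP : ℝ)
    (hPoinc : ∀ f : ℝ → ℝ, ContDiff ℝ (⊤ : ℕ∞) f → HasCompactSupport f →
      (∫ x, (f x) ^ 2 ∂μ) - (∫ x, f x ∂μ) ^ 2 ≤ CP * ∫ x, (deriv f x) ^ 2 ∂μ)
    (Vn : ℕ → ℝ → ℝ) (hVn : ∀ k, ContDiff ℝ 1 (Vn k))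
    (hconv : ∀ g : ℝ → ℝ, Measurable g → (∃ M, ∀ x, |g x| ≤ M) →
      Tendsto (fun k => ∫ x, g x * Real.exp (-(Vn k x))) atTop
        (𝓝 (∫ x, g x * Real.exp (-V x))))
    (a b : ℝ) (hab : 0 < μ (Set.Ioo a b))
    (μab : Measure ℝ) (hμab : μab = (μ (Set.Ioo a b))⁻¹ • μ.restrict (Set.Ioo a b)) :
    (∀ f : ℝ → ℝ, ContDiff ℝ (⊤ : ℕ∞) f → (∃ M, ∀ x, |f x| ≤ M) →
      (∫ x, (f x) ^ 2 ∂μab) - (∫ x, f x ∂μab) ^ 2 ≤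
        (8 * CP /
            sSup ((fun u => min (μ (Set.Iic u)).toReal (μ (Set.Ici u)).toReal) ''
              Set.Ioo a b)) *
          ∫ x, (deriv f x) ^ 2 ∂μab) ∧
    (∀ m : ℝ, a ≤ m → m ≤ b →
      (1 : ℝ) / 2 ≤ (μ (Set.Iic m)).toReal → (1 : ℝ) / 2 ≤ (μ (Set.Ici m)).toReal →
      ∀ f : ℝ → ℝ, ContDiff ℝ (⊤ : ℕ∞) f → (∃ M, ∀ x, |f x| ≤ M) →
        (∫ x, (f x) ^ 2 ∂μab) - (∫ x, f x ∂μab) ^ 2 ≤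
          16 * CP * ∫ x, (deriv f x) ^ 2 ∂μab) := by
  haveI := hprob
  have hab' : a < b := by
    by_contra hc
    push_neg at hc
    rw [Set.Ioo_eq_empty (not_lt.mpr hc)] at hab
    simp at hab
  -- positivity and null facts for μ
  have μnull : ∀ s : Set ℝ, volume s = 0 → μ s = 0 := by
    intro s hs
    rw [hμ]
    exact (withDensity_absolutelyContinuous volume _) hs
  have μpos : ∀ s : Set ℝ, MeasurableSet s → 0 < volume s → 0 < μ s := by
    intro s hsm hvs
    rw [zero_lt_iff]
    intro h0
    rw [hμ] at h0
    rw [withDensity_apply_eq_zero (by measurability)] at h0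
    have hall : {x | ENNReal.ofReal (Real.exp (-V x)) ≠ 0} = Set.univ := by
      ext x
      simp only [Set.mem_setOf_eq, Set.mem_univ, iff_true, ne_eq]
      exact (ENNReal.ofReal_pos.mpr (Real.exp_pos _)).ne'
    rw [hall, Set.univ_inter] at h0
    exact absurd h0 (ne_of_gt hvs)
  have hZtop : μ (Set.Ioo a b) ≠ ⊤ := measure_ne_top μ _
  have hZ0 : μ (Set.Ioo a b) ≠ 0 := ne_of_gt hab
  set z := (μ (Set.Ioo a b)).toReal with hz
  have hzpos : 0 < z := ENNReal.toReal_pos hZ0 hZtop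
  haveI hμabprob : IsProbabilityMeasure μab := by
    constructor
    rw [hμab, Measure.smul_apply, Measure.restrict_apply_univ, smul_eq_mul]
    exact ENNReal.inv_mul_cancel hZ0 hZtop
  have hconv0 : ∀ g : ℝ → ℝ, ∫ x, g x ∂μab = z⁻¹ * ∫ x in Set.Ioo a b, g x ∂μ := by
    intro g
    rw [hμab, integral_smul_measure, ENNReal.toReal_inv, smul_eq_mul]
  have hμu : ∀ u : ℝ, μ {u} = 0 := fun u => μnull _ (measure_singleton u)
  -- splitting of integrals over (a,b)
  have hsplitInt : ∀ u ∈ Set.Ioo a b, ∀ g : ℝ → ℝ, Continuous g →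
      ∫ x in Set.Ioo a b, g x ∂μ
        = (∫ x in Set.Ioo a u, g x ∂μ) + ∫ x in Set.Ioo u b, g x ∂μ := by
    intro u hu g hg
    obtain ⟨x0, _, hx0⟩ := (isCompact_Icc (a := a) (b := b)).exists_isMaxOn
      (Set.nonempty_Icc.mpr hab'.le) (continuous_abs.comp hg).continuousOn
    have hgint : ∀ s : Set ℝ, MeasurableSet s → s ⊆ Set.Ioo a b → IntegrableOn g s μ := by
      intro s hsm hsub
      apply RPI.integrable_of_bdd (C := |g x0|) hg.aestronglyMeasurable.restrict
      rw [ae_restrict_iff' hsm]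
      apply ae_of_all
      intro x hx
      exact hx0 (Set.Ioo_subset_Icc_self (hsub hx))
    have hunion : Set.Ioo a u ∪ Set.Ico u b = Set.Ioo a b :=
      Set.Ioo_union_Ico_eq_Ioo hu.1 hu.2.le
    have hdisj : Disjoint (Set.Ioo a u) (Set.Ico u b) := by
      apply Set.disjoint_left.mpr
      intro x hx1 hx2
      exact absurd hx2.1 (not_le.mpr hx1.2)
    have haeq : (Set.Ico u b : Set ℝ) =ᵐ[μ] (Set.Ioo u b : Set ℝ) := by
      apply Filter.eventuallyEq_set.mpr
      have hne : ∀ᵐ x ∂μ, x ≠ u := by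
        rw [ae_iff]
        simp only [not_not, Set.setOf_eq_eq_singleton]
        exact hμu u
      filter_upwards [hne] with x hx
      simp only [Set.mem_Ico, Set.mem_Ioo]
      constructor
      · rintro ⟨h1, h2⟩
        exact ⟨lt_of_le_of_ne h1 (Ne.symm hx), h2⟩
      · rintro ⟨h1, h2⟩
        exact ⟨h1.le, h2⟩
    rw [← hunion, setIntegral_union hdisj measurableSet_Ico
      (hgint _ measurableSet_Ioo (by rw [← hunion]; exact Set.subset_union_left))
      ((hgint _ measurableSet_Ioo (Set.Ioo_subset_Ioo_left hu.1.le)).congr_set_ae haeq),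
      setIntegral_congr_set haeq]
  -- the key inequality, for every u in (a,b)
  have key : ∀ f : ℝ → ℝ, ContDiff ℝ (⊤ : ℕ∞) f → (∃ M, ∀ x, |f x| ≤ M) →
      ∀ u ∈ Set.Ioo a b,
      min (μ (Set.Iic u)).toReal (μ (Set.Ici u)).toReal *
        ((∫ x, (f x) ^ 2 ∂μab) - (∫ x, f x ∂μab) ^ 2)
        ≤ CP * ∫ x, (deriv f x) ^ 2 ∂μab := by
    intro f hf hMf u hu
    obtain ⟨M, hM⟩ := hMf
    have hfc : Continuous f := hf.continuous
    have hintf : Integrable f μab :=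
      RPI.integrable_of_bdd hfc.aestronglyMeasurable (ae_of_all _ hM)
    have hintf2 : Integrable (fun x => (f x) ^ 2) μab := by
      apply RPI.integrable_of_bdd (g := fun x => (f x) ^ 2) (C := M ^ 2) (hfc.pow 2).aestronglyMeasurable
      apply ae_of_all
      intro x
      rw [abs_of_nonneg (sq_nonneg _), ← sq_abs]
      exact pow_le_pow_left₀ (abs_nonneg _) (hM x) 2
    set c := f u with hc
    have hintfc2 : Integrable (fun x => (f x - c) ^ 2) μab := by
      apply RPI.integrable_of_bdd (g := fun x => (f x - c) ^ 2) (C := (M + |c|) ^ 2)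
        (((hfc.sub continuous_const).pow 2)).aestronglyMeasurable
      apply ae_of_all
      intro x
      rw [abs_of_nonneg (sq_nonneg _), ← sq_abs]
      apply pow_le_pow_left₀ (abs_nonneg _) _ 2
      calc |f x - c| ≤ |f x| + |c| := abs_sub _ _
      _ ≤ M + |c| := by linarith [hM x]
    -- step 1 : variance bound by second moment around c
    have hstep1 : (∫ x, (f x) ^ 2 ∂μab) - (∫ x, f x ∂μab) ^ 2
        ≤ ∫ x, (f x - c) ^ 2 ∂μab := by
      have hexp : ∫ x, (f x - c) ^ 2 ∂μab
          = (∫ x, (f x) ^ 2 ∂μab) - 2 * c * (∫ x, f x ∂μab) + c ^ 2 := by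
        have he : (fun x => (f x - c) ^ 2)
            = fun x => ((f x) ^ 2 - (2 * c) * f x) + c ^ 2 := by
          funext x; ring
        have i1 : Integrable (fun x => (f x) ^ 2 - (2 * c) * f x) μab := by
          exact hintf2.sub (hintf.const_mul _)
        rw [he, integral_add i1 (integrable_const _),
          integral_sub hintf2 (hintf.const_mul _), integral_const_mul, integral_const,
          probReal_univ]
        simp only [ENNReal.toReal_one, smul_eq_mul, one_mul]
      nlinarith [sq_nonneg ((∫ x, f x ∂μab) - c)]
    -- step 2 : conversion to μ
    have hstep2 : ∫ x, (f x - c) ^ 2 ∂μab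
        = z⁻¹ * ∫ x in Set.Ioo a b, (f x - c) ^ 2 ∂μ := hconv0 _
    -- step 3 : split
    have hstep3 : ∫ x in Set.Ioo a b, (f x - c) ^ 2 ∂μ
        = (∫ x in Set.Ioo a u, (f x - c) ^ 2 ∂μ)
          + ∫ x in Set.Ioo u b, (f x - c) ^ 2 ∂μ :=
      hsplitInt u hu _ ((hfc.sub continuous_const).pow 2)
    have hDsplit : ∫ x in Set.Ioo a b, (deriv f x) ^ 2 ∂μ
        = (∫ x in Set.Ioo a u, (deriv f x) ^ 2 ∂μ)
          + ∫ x in Set.Ioo u b, (deriv f x) ^ 2 ∂μ :=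
      hsplitInt u hu _ (((contDiff_infty_iff_deriv.mp hf).2).continuous.pow 2)
    -- step 4 : core inequalities
    have hright := RPI.core μ hprob CP hPoinc u b u hu.2 (Or.inl rfl)
      (Set.Iic u) measurableSet_Iic (Or.inl ⟨rfl, rfl⟩) f hf
    have hleft := RPI.core μ hprob CP hPoinc a u u hu.1 (Or.inr rfl)
      (Set.Ici u) measurableSet_Ici (Or.inr ⟨rfl, rfl⟩) f hf
    set p := (μ (Set.Iic u)).toReal with hp
    set q := (μ (Set.Ici u)).toReal with hq
    set A := ∫ x in Set.Ioo u b, (f x - c) ^ 2 ∂μ with hA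
    set B := ∫ x in Set.Ioo a u, (f x - c) ^ 2 ∂μ with hB
    set DR := ∫ x in Set.Ioo u b, (deriv f x) ^ 2 ∂μ with hDR
    set DL := ∫ x in Set.Ioo a u, (deriv f x) ^ 2 ∂μ with hDL
    have hA0 : 0 ≤ A := setIntegral_nonneg measurableSet_Ioo fun x _ => sq_nonneg _
    have hB0 : 0 ≤ B := setIntegral_nonneg measurableSet_Ioo fun x _ => sq_nonneg _
    have h5 : min p q * (B + A) ≤ CP * DL + CP * DR := by
      have h51 : min p q * B ≤ q * B :=
        mul_le_mul_of_nonneg_right (min_le_right p q) hB0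
      have h52 : min p q * A ≤ p * A :=
        mul_le_mul_of_nonneg_right (min_le_left p q) hA0
      have h53 : p * A ≤ CP * DR := hright
      have h54 : q * B ≤ CP * DL := hleft
      nlinarith [h51, h52, h53, h54]
    have hmin0 : 0 ≤ min p q := le_min ENNReal.toReal_nonneg ENNReal.toReal_nonneg
    have hDnu : ∫ x, (deriv f x) ^ 2 ∂μab
        = z⁻¹ * ∫ x in Set.Ioo a b, (deriv f x) ^ 2 ∂μ := hconv0 _
    calc min p q * ((∫ x, (f x) ^ 2 ∂μab) - (∫ x, f x ∂μab) ^ 2)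
        ≤ min p q * (z⁻¹ * (B + A)) := by
          apply mul_le_mul_of_nonneg_left _ hmin0
          rw [hstep2, hstep3] at hstep1
          exact hstep1
    _ = z⁻¹ * (min p q * (B + A)) := by ring
    _ ≤ z⁻¹ * (CP * DL + CP * DR) :=
        mul_le_mul_of_nonneg_left h5 (inv_nonneg.mpr hzpos.le)
    _ = CP * (z⁻¹ * (DL + DR)) := by ring
    _ = CP * ∫ x, (deriv f x) ^ 2 ∂μab := by rw [hDnu, hDsplit]
  -- the supremum set
  set S := ((fun u => min (μ (Set.Iic u)).toReal (μ (Set.Ici u)).toReal) '' Set.Ioo a b)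
    with hS
  have hu0 : (a + b) / 2 ∈ Set.Ioo a b := ⟨by linarith, by linarith⟩
  have hSne : S.Nonempty := ⟨_, ⟨_, hu0, rfl⟩⟩
  have htoReal_le_one : ∀ s : Set ℝ, (μ s).toReal ≤ 1 := by
    intro s
    have h1 : μ s ≤ 1 := prob_le_one
    calc (μ s).toReal ≤ (1 : ENNReal).toReal := ENNReal.toReal_mono (by simp) h1
    _ = 1 := by simp
  have hSbdd : BddAbove S := by
    refine ⟨1, ?_⟩
    rintro e ⟨u, hu, rfl⟩
    exact le_trans (min_le_left _ _) (htoReal_le_one _)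
  have hposIic : ∀ u : ℝ, 0 < (μ (Set.Iic u)).toReal := by
    intro u
    refine ENNReal.toReal_pos (ne_of_gt (μpos _ measurableSet_Iic ?_)) (measure_ne_top μ _)
    rw [Real.volume_Iic]
    exact ENNReal.zero_lt_top
  have hposIci : ∀ u : ℝ, 0 < (μ (Set.Ici u)).toReal := by
    intro u
    refine ENNReal.toReal_pos (ne_of_gt (μpos _ measurableSet_Ici ?_)) (measure_ne_top μ _)
    rw [Real.volume_Ici]
    exact ENNReal.zero_lt_top
  have hspos : 0 < sSup S :=
    lt_of_lt_of_le (lt_min (hposIic _) (hposIci _)) (le_csSup hSbdd ⟨_, hu0, rfl⟩)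
  -- main common statement
  have main : ∀ f : ℝ → ℝ, ContDiff ℝ (⊤ : ℕ∞) f → (∃ M, ∀ x, |f x| ≤ M) →
      0 ≤ ((∫ x, (f x) ^ 2 ∂μab) - (∫ x, f x ∂μab) ^ 2)
      ∧ 0 ≤ CP * ∫ x, (deriv f x) ^ 2 ∂μab
      ∧ sSup S * ((∫ x, (f x) ^ 2 ∂μab) - (∫ x, f x ∂μab) ^ 2)
          ≤ CP * ∫ x, (deriv f x) ^ 2 ∂μab := by
    intro f hf hMf
    obtain ⟨M, hM⟩ := hMf
    have hfc := hf.continuous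
    have hintf : Integrable f μab :=
      RPI.integrable_of_bdd hfc.aestronglyMeasurable (ae_of_all _ hM)
    have hintf2 : Integrable (fun x => (f x) ^ 2) μab := by
      apply RPI.integrable_of_bdd (g := fun x => (f x) ^ 2) (C := M ^ 2) (hfc.pow 2).aestronglyMeasurable
      apply ae_of_all
      intro x
      rw [abs_of_nonneg (sq_nonneg _), ← sq_abs]
      exact pow_le_pow_left₀ (abs_nonneg _) (hM x) 2
    have hVar0 : 0 ≤ ((∫ x, (f x) ^ 2 ∂μab) - (∫ x, f x ∂μab) ^ 2) := by
      have h1 := RPI.sq_integral_le μab f hintf hintf2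
      rw [measure_univ] at h1
      simp only [ENNReal.toReal_one, one_mul] at h1
      linarith
    have hCPD : 0 ≤ CP * ∫ x, (deriv f x) ^ 2 ∂μab := by
      have hk := key f hf ⟨M, hM⟩ _ hu0
      have hmin0 : 0 ≤ min (μ (Set.Iic ((a + b) / 2))).toReal
          (μ (Set.Ici ((a + b) / 2))).toReal :=
        le_min ENNReal.toReal_nonneg ENNReal.toReal_nonneg
      nlinarith [hk, hVar0, hmin0]
    refine ⟨hVar0, hCPD, ?_⟩
    rcases eq_or_lt_of_le hVar0 with h0 | hpos
    · rw [← h0, mul_zero]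
      exact hCPD
    · have hle : sSup S ≤ (CP * ∫ x, (deriv f x) ^ 2 ∂μab) /
          ((∫ x, (f x) ^ 2 ∂μab) - (∫ x, f x ∂μab) ^ 2) := by
        apply csSup_le hSne
        rintro e ⟨u, hu, rfl⟩
        rw [le_div_iff₀ hpos]
        exact key f hf ⟨M, hM⟩ u hu
      calc sSup S * ((∫ x, (f x) ^ 2 ∂μab) - (∫ x, f x ∂μab) ^ 2)
          ≤ ((CP * ∫ x, (deriv f x) ^ 2 ∂μab) /
              ((∫ x, (f x) ^ 2 ∂μab) - (∫ x, f x ∂μab) ^ 2)) *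
            ((∫ x, (f x) ^ 2 ∂μab) - (∫ x, f x ∂μab) ^ 2) :=
            mul_le_mul_of_nonneg_right hle hVar0
      _ = CP * ∫ x, (deriv f x) ^ 2 ∂μab := div_mul_cancel₀ _ (ne_of_gt hpos)
  constructor
  · -- first bullet
    intro f hf hMf
    obtain ⟨hVar0, hCPD, hmain⟩ := main f hf hMf
    have h8 : 8 * CP / sSup S * (∫ x, (deriv f x) ^ 2 ∂μab)
        = 8 * (CP * ∫ x, (deriv f x) ^ 2 ∂μab) / sSup S := by ring
    rw [h8, le_div_iff₀ hspos]
    nlinarith [hmain, hCPD]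
  · -- second bullet : median case
    intro m ham hmb hpm hqm f hf hMf
    obtain ⟨hVar0, hCPD, hmain⟩ := main f hf hMf
    have hhalf : (1 : ℝ) / 2 ≤ sSup S := by
      rcases eq_or_lt_of_le ham with hma | hma
      · -- m = a : approximate from the right
        set u : ℕ → ℝ := fun k => a + (b - a) / (k + 2) with hud
        have hk2 : ∀ k : ℕ, (0:ℝ) < (k:ℝ) + 2 := by
          intro k
          have : (0:ℝ) ≤ (k:ℝ) := Nat.cast_nonneg k
          linarith
        have huIoo : ∀ k, u k ∈ Set.Ioo a b := by
          intro k
          constructor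
          · have h1 : 0 < (b - a) / ((k:ℝ) + 2) := div_pos (by linarith) (hk2 k)
            simp only [hud]
            linarith
          · have h1 : (b - a) / ((k:ℝ) + 2) ≤ (b - a) / 2 := by
              gcongr
              · linarith
            simp only [hud]
            linarith
        have hmono : Monotone fun k : ℕ => Set.Ici (u k) := by
          intro k l hkl
          apply Set.Ici_subset_Ici.mpr
          have hkl' : ((k:ℝ)) ≤ (l:ℝ) := by exact_mod_cast hkl
          have h1 : (b - a) / ((l:ℝ) + 2) ≤ (b - a) / ((k:ℝ) + 2) := by
            gcongr
            all_goals linarith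
          simp only [hud]
          linarith
        have hUnion : (⋃ k, Set.Ici (u k)) = Set.Ioi a := by
          ext x
          simp only [Set.mem_iUnion, Set.mem_Ici, Set.mem_Ioi]
          constructor
          · rintro ⟨k, hk⟩
            have := (huIoo k).1
            linarith
          · intro hx
            obtain ⟨N, hN⟩ := exists_nat_gt ((b - a) / (x - a))
            refine ⟨N, ?_⟩
            have hxa : 0 < x - a := by linarith
            have hN0 : 0 < (N:ℝ) := lt_trans (div_pos (by linarith) hxa) hN
            have h1 : (b - a) / ((N:ℝ) + 2) ≤ (b - a) / (N:ℝ) := by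
              gcongr
              · linarith
            have h2 : (b - a) / (N:ℝ) < x - a := by
              rw [div_lt_iff₀ hN0]
              have h3 : b - a < N * (x - a) := by
                have := (div_lt_iff₀ hxa).mp hN
                linarith
              linarith
            simp only [hud]
            linarith
        have htendM : Tendsto (fun k => μ (Set.Ici (u k))) atTop (𝓝 (μ (Set.Ioi a))) := by
          have h1 := tendsto_measure_iUnion_atTop (μ := μ) hmono
          rwa [hUnion] at h1
        have htend : Tendsto (fun k => (μ (Set.Ici (u k))).toReal) atTop
            (𝓝 ((μ (Set.Ioi a)).toReal)) :=
          (ENNReal.tendsto_toReal (measure_ne_top μ _)).comp htendM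
        have hIoiIci : μ (Set.Ioi a) = μ (Set.Ici a) := by
          apply measure_congr
          apply Filter.eventuallyEq_set.mpr
          have hne : ∀ᵐ x ∂μ, x ≠ a := by
            rw [ae_iff]
            simp only [not_not, Set.setOf_eq_eq_singleton]
            exact hμu a
          filter_upwards [hne] with x hx
          simp only [Set.mem_Ioi, Set.mem_Ici]
          constructor
          · intro h; exact h.le
          · intro h; exact lt_of_le_of_ne h (Ne.symm hx)
        have hIoi : (1:ℝ)/2 ≤ (μ (Set.Ioi a)).toReal := by
          rw [hIoiIci, hma]
          exact hqm
        have hbd : ∀ k, min ((1:ℝ)/2) ((μ (Set.Ici (u k))).toReal) ≤ sSup S := by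
          intro k
          refine le_trans ?_ (le_csSup hSbdd ⟨u k, huIoo k, rfl⟩)
          apply min_le_min _ le_rfl
          refine le_trans hpm (ENNReal.toReal_mono (measure_ne_top μ _) (measure_mono ?_))
          rw [← hma]
          exact Set.Iic_subset_Iic.mpr (huIoo k).1.le
        have hlim : Tendsto (fun k => min ((1:ℝ)/2) ((μ (Set.Ici (u k))).toReal)) atTop
            (𝓝 (min ((1:ℝ)/2) ((μ (Set.Ioi a)).toReal))) :=
          tendsto_const_nhds.min htend
        have h1 := le_of_tendsto hlim (Eventually.of_forall hbd)
        rwa [min_eq_left hIoi] at h1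
      rcases eq_or_lt_of_le hmb with hbm | hbm
      · -- m = b : approximate from the left
        set u : ℕ → ℝ := fun k => b - (b - a) / (k + 2) with hud
        have hk2 : ∀ k : ℕ, (0:ℝ) < (k:ℝ) + 2 := by
          intro k
          have : (0:ℝ) ≤ (k:ℝ) := Nat.cast_nonneg k
          linarith
        have huIoo : ∀ k, u k ∈ Set.Ioo a b := by
          intro k
          constructor
          · have h1 : (b - a) / ((k:ℝ) + 2) ≤ (b - a) / 2 := by
              gcongr
              · linarith
            simp only [hud]
            linarith
          · have h1 : 0 < (b - a) / ((k:ℝ) + 2) := div_pos (by linarith) (hk2 k)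
            simp only [hud]
            linarith
        have hmono : Monotone fun k : ℕ => Set.Iic (u k) := by
          intro k l hkl
          apply Set.Iic_subset_Iic.mpr
          have hkl' : ((k:ℝ)) ≤ (l:ℝ) := by exact_mod_cast hkl
          have h1 : (b - a) / ((l:ℝ) + 2) ≤ (b - a) / ((k:ℝ) + 2) := by
            gcongr
            all_goals linarith
          simp only [hud]
          linarith
        have hUnion : (⋃ k, Set.Iic (u k)) = Set.Iio b := by
          ext x
          simp only [Set.mem_iUnion, Set.mem_Iic, Set.mem_Iio]
          constructor
          · rintro ⟨k, hk⟩
            have := (huIoo k).2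
            linarith
          · intro hx
            obtain ⟨N, hN⟩ := exists_nat_gt ((b - a) / (b - x))
            refine ⟨N, ?_⟩
            have hxb : 0 < b - x := by linarith
            have hN0 : 0 < (N:ℝ) := lt_trans (div_pos (by linarith) hxb) hN
            have h1 : (b - a) / ((N:ℝ) + 2) ≤ (b - a) / (N:ℝ) := by
              gcongr
              · linarith
            have h2 : (b - a) / (N:ℝ) < b - x := by
              rw [div_lt_iff₀ hN0]
              have h3 : b - a < N * (b - x) := by
                have := (div_lt_iff₀ hxb).mp hN
                linarith
              linarith
            simp only [hud]
            linarith
        have htendM : Tendsto (fun k => μ (Set.Iic (u k))) atTop (𝓝 (μ (Set.Iio b))) := by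
          have h1 := tendsto_measure_iUnion_atTop (μ := μ) hmono
          rwa [hUnion] at h1
        have htend : Tendsto (fun k => (μ (Set.Iic (u k))).toReal) atTop
            (𝓝 ((μ (Set.Iio b)).toReal)) :=
          (ENNReal.tendsto_toReal (measure_ne_top μ _)).comp htendM
        have hIioIic : μ (Set.Iio b) = μ (Set.Iic b) := by
          apply measure_congr
          apply Filter.eventuallyEq_set.mpr
          have hne : ∀ᵐ x ∂μ, x ≠ b := by
            rw [ae_iff]
            simp only [not_not, Set.setOf_eq_eq_singleton]
            exact hμu b
          filter_upwards [hne] with x hx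
          simp only [Set.mem_Iio, Set.mem_Iic]
          constructor
          · intro h; exact h.le
          · intro h; exact lt_of_le_of_ne h hx
        have hIio : (1:ℝ)/2 ≤ (μ (Set.Iio b)).toReal := by
          rw [hIioIic, ← hbm]
          exact hpm
        have hbd : ∀ k, min ((μ (Set.Iic (u k))).toReal) ((1:ℝ)/2) ≤ sSup S := by
          intro k
          refine le_trans ?_ (le_csSup hSbdd ⟨u k, huIoo k, rfl⟩)
          apply min_le_min le_rfl
          refine le_trans hqm (ENNReal.toReal_mono (measure_ne_top μ _) (measure_mono ?_))
          rw [hbm]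
          exact Set.Ici_subset_Ici.mpr (huIoo k).2.le
        have hlim : Tendsto (fun k => min ((μ (Set.Iic (u k))).toReal) ((1:ℝ)/2)) atTop
            (𝓝 (min ((μ (Set.Iio b)).toReal) ((1:ℝ)/2))) :=
          htend.min tendsto_const_nhds
        have h1 := le_of_tendsto hlim (Eventually.of_forall hbd)
        rwa [min_eq_right hIio] at h1
      · -- interior median
        refine le_trans (le_min hpm hqm) (le_csSup hSbdd ⟨m, ⟨hma, hbm⟩, rfl⟩)
    nlinarith [hmain, hCPD, hVar0, mul_le_mul_of_nonneg_right hhalf hVar0]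
end

section
/- Let μ be a probability measure on ℝⁿ, let w : ℝⁿ → [0,1] be measurable with ∫ w dμ > 0, and let C ≥ 0 be such that the weighted Poincaré inequality inf_{a ∈ ℝ} ∫ w (f − a)² dμ ≤ C ∫ |∇f|² dμ holds for every bounded smooth f : ℝⁿ → ℝ. Then for every u > 0 and every bounded smooth f, Var_μ(f) ≤ (C/u) ∫ |∇f|² dμ + μ({w < u}) · Osc(f)², where Osc(f) = sup f − inf f. -/
open MeasureTheory

/-- Let `μ` be a probability measure on `ℝⁿ`, `w : ℝⁿ → [0,1]` measurable
with `∫ w dμ > 0`, and `C ≥ 0` such that the weighted Poincaré inequality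
`inf_a ∫ w (f − a)² dμ ≤ C ∫ |∇f|² dμ` holds for all bounded smooth `f`.  Then for every
`u > 0` and every bounded smooth `f`,
`Var_μ(f) ≤ (C/u) ∫ |∇f|² dμ + μ({w < u}) Osc(f)²`. -/
theorem weak_poincare_of_weighted_poincare
    {n : ℕ} (μ : Measure (EuclideanSpace ℝ (Fin n))) [IsProbabilityMeasure μ]
    (w : EuclideanSpace ℝ (Fin n) → ℝ) (hwm : Measurable w)
    (hw0 : ∀ x, 0 ≤ w x) (hw1 : ∀ x, w x ≤ 1) (hwpos : 0 < ∫ x, w x ∂μ)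
    (C : ℝ) (hC : 0 ≤ C)
    (hWP : ∀ f : EuclideanSpace ℝ (Fin n) → ℝ, ContDiff ℝ (⊤ : ℕ∞) f →
      (∃ M, ∀ x, |f x| ≤ M) →
      (⨅ a : ℝ, ∫ x, w x * (f x - a) ^ 2 ∂μ) ≤ C * ∫ x, ‖gradient f x‖ ^ 2 ∂μ)
    (u : ℝ) (hu : 0 < u)
    (f : EuclideanSpace ℝ (Fin n) → ℝ) (hf : ContDiff ℝ (⊤ : ℕ∞) f)
    (hfb : ∃ M, ∀ x, |f x| ≤ M) :
    (∫ x, (f x) ^ 2 ∂μ) - (∫ x, f x ∂μ) ^ 2 ≤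
      (C / u) * (∫ x, ‖gradient f x‖ ^ 2 ∂μ) +
        (μ {x | w x < u}).toReal * ((⨆ x, f x) - ⨅ x, f x) ^ 2 := by
  classical
  obtain ⟨M, hM⟩ := hfb
  have hfc : Continuous f := hf.continuous
  have hfm : AEStronglyMeasurable f μ := hfc.aestronglyMeasurable
  set m := ⨅ x, f x with hm
  set s := ⨆ x, f x with hs
  have hbdda : BddAbove (Set.range f) := ⟨M, by rintro _ ⟨x, rfl⟩; exact (abs_le.1 (hM x)).2⟩
  have hbddb : BddBelow (Set.range f) := ⟨-M, by rintro _ ⟨x, rfl⟩; exact (abs_le.1 (hM x)).1⟩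
  have hml : ∀ x, m ≤ f x := fun x => ciInf_le hbddb x
  have hsu : ∀ x, f x ≤ s := fun x => le_ciSup hbdda x
  have hms : m ≤ s := (hml 0).trans (hsu 0)
  -- integrability helper
  have intOfBound : ∀ (g : EuclideanSpace ℝ (Fin n) → ℝ) (K : ℝ),
      AEStronglyMeasurable g μ → (∀ x, ‖g x‖ ≤ K) → Integrable g μ :=
    fun g K hg hb => (integrable_const K).mono' hg (Filter.Eventually.of_forall hb)
  have hIf : Integrable f μ := intOfBound f M hfm (fun x => hM x)
  have hIf2 : Integrable (fun x => f x ^ 2) μ :=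
    intOfBound _ (M ^ 2) ((hfc.pow 2).aestronglyMeasurable)
      (fun x => by
        have := hM x
        have h0 : (0:ℝ) ≤ M := (abs_nonneg _).trans this
        simp only [Real.norm_eq_abs, abs_pow, sq_abs]
        nlinarith [abs_nonneg (f x), sq_abs (f x)])
  set S := {x | w x < u} with hSdef
  have hS : MeasurableSet S := measurableSet_lt hwm measurable_const
  set G := ∫ x, ‖gradient f x‖ ^ 2 ∂μ with hG
  set T := (μ S).toReal * (s - m) ^ 2 with hT
  set V := (∫ x, (f x) ^ 2 ∂μ) - (∫ x, f x ∂μ) ^ 2 with hV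
  have hGnn : 0 ≤ G := integral_nonneg (fun x => by positivity)
  have hTnn : 0 ≤ T := mul_nonneg ENNReal.toReal_nonneg (by positivity)
  -- integrability of the various integrands, for a in [m, s]
  have hIsq : ∀ a : ℝ, Integrable (fun x => (f x - a) ^ 2) μ := by
    intro a
    refine intOfBound _ ((M + |a|) ^ 2) (((hfc.sub continuous_const).pow 2).aestronglyMeasurable)
      (fun x => ?_)
    have h1 : |f x - a| ≤ M + |a| := (abs_sub _ _).trans (add_le_add_left (hM x) _)
    simp only [Real.norm_eq_abs, abs_pow, sq_abs]
    calc (f x - a) ^ 2 = |f x - a| ^ 2 := (sq_abs _).symm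
      _ ≤ (M + |a|) ^ 2 := by nlinarith [abs_nonneg (f x - a)]
  have hIwsq : ∀ a : ℝ, Integrable (fun x => w x * (f x - a) ^ 2) μ := by
    intro a
    refine intOfBound _ ((M + |a|) ^ 2)
      (hwm.aestronglyMeasurable.mul ((hfc.sub continuous_const).pow 2).aestronglyMeasurable)
      (fun x => ?_)
    have h1 : |f x - a| ≤ M + |a| := (abs_sub _ _).trans (add_le_add_left (hM x) _)
    have h2 : (f x - a) ^ 2 ≤ (M + |a|) ^ 2 := by
      calc (f x - a) ^ 2 = |f x - a| ^ 2 := (sq_abs _).symm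
        _ ≤ (M + |a|) ^ 2 := by nlinarith [abs_nonneg (f x - a)]
    have h3 : 0 ≤ (f x - a) ^ 2 := sq_nonneg _
    simp only [Real.norm_eq_abs]
    rw [abs_mul, abs_of_nonneg (hw0 x), abs_of_nonneg h3]
    calc w x * (f x - a) ^ 2 ≤ 1 * (f x - a) ^ 2 :=
        mul_le_mul_of_nonneg_right (hw1 x) h3
      _ = (f x - a) ^ 2 := one_mul _
      _ ≤ (M + |a|) ^ 2 := h2
  -- Var ≤ ∫ (f - a)^2 for any a
  have hvar : ∀ a : ℝ, V ≤ ∫ x, (f x - a) ^ 2 ∂μ := by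
    intro a
    have hexp : ∫ x, (f x - a) ^ 2 ∂μ
        = (∫ x, f x ^ 2 ∂μ) - 2 * a * (∫ x, f x ∂μ) + a ^ 2 := by
      have heq : (fun x => (f x - a) ^ 2)
          = fun x => f x ^ 2 - (2 * a) * f x + a ^ 2 := by
        funext x; ring
      have hI1 : Integrable (fun x => f x ^ 2 - (2 * a) * f x) μ :=
        hIf2.sub (hIf.const_mul _)
      rw [heq, integral_add hI1 (integrable_const _),
        integral_sub hIf2 (hIf.const_mul _), integral_const_mul, integral_const,
        probReal_univ, smul_eq_mul, one_mul]
    rw [hexp, hV]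
    nlinarith [sq_nonneg (a - ∫ x, f x ∂μ)]
  -- main pointwise bound ⇒ integral bound, for m ≤ a ≤ s
  have hmain : ∀ a : ℝ, m ≤ a → a ≤ s →
      (∫ x, (f x - a) ^ 2 ∂μ) ≤ u⁻¹ * (∫ x, w x * (f x - a) ^ 2 ∂μ) + T := by
    intro a ham has
    have hpt : ∀ x, (f x - a) ^ 2 ≤
        u⁻¹ * (w x * (f x - a) ^ 2) + S.indicator (fun _ => (s - m) ^ 2) x := by
      intro x
      by_cases hx : w x < u
      · have hind : S.indicator (fun _ => (s - m) ^ 2) x = (s - m) ^ 2 :=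
          by
            have hxS : x ∈ S := hx
            exact Set.indicator_of_mem hxS _
        rw [hind]
        have h1 : (f x - a) ^ 2 ≤ (s - m) ^ 2 := by
          nlinarith [hml x, hsu x]
        have h2 : 0 ≤ u⁻¹ * (w x * (f x - a) ^ 2) :=
          mul_nonneg (inv_nonneg.2 hu.le) (mul_nonneg (hw0 x) (sq_nonneg _))
        linarith
      · have hind : S.indicator (fun _ => (s - m) ^ 2) x = 0 :=
          by
            have hxS : x ∉ S := hx
            exact Set.indicator_of_notMem hxS _
        rw [hind, add_zero]
        push_neg at hx
        have h1 : 1 ≤ u⁻¹ * w x := by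
          rw [← div_eq_inv_mul]
          exact (one_le_div hu).2 hx
        calc (f x - a) ^ 2 = 1 * (f x - a) ^ 2 := (one_mul _).symm
          _ ≤ (u⁻¹ * w x) * (f x - a) ^ 2 :=
            mul_le_mul_of_nonneg_right h1 (sq_nonneg _)
          _ = u⁻¹ * (w x * (f x - a) ^ 2) := by ring
    have hIrhs1 : Integrable (fun x => u⁻¹ * (w x * (f x - a) ^ 2)) μ :=
      (hIwsq a).const_mul _
    have hIrhs2 : Integrable (S.indicator (fun _ => (s - m) ^ 2)) μ :=
      (integrable_const _).indicator hS
    calc (∫ x, (f x - a) ^ 2 ∂μ)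
        ≤ ∫ x, (u⁻¹ * (w x * (f x - a) ^ 2)
            + S.indicator (fun _ => (s - m) ^ 2) x) ∂μ :=
          integral_mono (hIsq a) (hIrhs1.add hIrhs2) hpt
      _ = u⁻¹ * (∫ x, w x * (f x - a) ^ 2 ∂μ) + T := by
          rw [integral_add hIrhs1 hIrhs2, integral_const_mul,
            integral_indicator_const _ hS, smul_eq_mul, measureReal_def, hT]
  -- clamp argument: for all a, the bound holds with g a
  have hkey : ∀ a : ℝ, u * (V - T) ≤ ∫ x, w x * (f x - a) ^ 2 ∂μ := by
    intro a
    set a' := max m (min a s) with ha'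
    have ham : m ≤ a' := le_max_left _ _
    have has : a' ≤ s := max_le hms (min_le_right _ _)
    have hclamp : ∀ x, (f x - a') ^ 2 ≤ (f x - a) ^ 2 := by
      intro x
      rcases le_total a m with h1 | h1
      · have : a' = m := by
          rw [ha', min_eq_left (h1.trans hms), max_eq_left h1]
        rw [this]; nlinarith [hml x]
      · rcases le_total a s with h2 | h2
        · have : a' = a := by rw [ha', min_eq_left h2, max_eq_right h1]
          rw [this]
        · have : a' = s := by rw [ha', min_eq_right h2, max_eq_right hms]
          rw [this]; nlinarith [hsu x]
    have hg : (∫ x, w x * (f x - a') ^ 2 ∂μ) ≤ ∫ x, w x * (f x - a) ^ 2 ∂μ :=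
      integral_mono (hIwsq a') (hIwsq a)
        (fun x => mul_le_mul_of_nonneg_left (hclamp x) (hw0 x))
    have h1 : V ≤ u⁻¹ * (∫ x, w x * (f x - a') ^ 2 ∂μ) + T :=
      (hvar a').trans (hmain a' ham has)
    have h2 : u * (V - T) ≤ u * (u⁻¹ * (∫ x, w x * (f x - a') ^ 2 ∂μ)) :=
      mul_le_mul_of_nonneg_left (by linarith) hu.le
    have h3 : u * (u⁻¹ * (∫ x, w x * (f x - a') ^ 2 ∂μ))
        = ∫ x, w x * (f x - a') ^ 2 ∂μ := by
      rw [← mul_assoc, mul_inv_cancel₀ hu.ne', one_mul]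
    have h4 : u * (V - T) ≤ ∫ x, w x * (f x - a') ^ 2 ∂μ := h3 ▸ h2
    exact h4.trans hg
  have hinf : u * (V - T) ≤ ⨅ a : ℝ, ∫ x, w x * (f x - a) ^ 2 ∂μ :=
    le_ciInf hkey
  have hfin : u * (V - T) ≤ C * G :=
    hinf.trans (hWP f hf ⟨M, hM⟩)
  have : V - T ≤ (C * G) / u := (le_div_iff₀ hu).2 (by linarith)
  have : V ≤ (C / u) * G + T := by
    rw [div_mul_eq_mul_div]; linarith
  simpa [hV, hT, hG] using this
end
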